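/- arXiv:2508.13849 — 7 statements merged into one kernel-verified Lean document; each statement's English description precedes it below -/
import Mathlib

section
/- There exists an absolute constant C > 0 such that for every integer n ≥ 1, every r ∈ (0,1], and all reals θ, θ' with e^{iθ} ≠ e^{iθ'}, one has | 2·Σ_{ℓ=1}^{n} (r^{2ℓ}/ℓ)·cos(ℓ(θ−θ')) + 2·log|e^{iθ} − e^{iθ'}| | ≤ C·( n^{-1} + (1−r²) )·‖θ−θ'‖^{-1}, where ‖x‖ denotes the distance from x to 2πℤ. -/
open Real Complex

set_option maxHeartbeats 1000000

/-- `‖x‖`: the distance from `x` to `2πℤ`. -/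
noncomputable def distToTwoPiZ (x : ℝ) : ℝ :=
  Metric.infDist x (Set.range fun m : ℤ => 2 * Real.pi * m)

lemma distToTwoPiZ_rep (x : ℝ) :
    ∃ y : ℝ, |y| ≤ π ∧ Real.cos x = Real.cos y ∧ distToTwoPiZ x = |y| := by
  set m : ℤ := round (x / (2 * π)) with hm
  set y : ℝ := x - 2 * π * m with hy
  have hπ2 : (0:ℝ) < 2 * π := by positivity
  have hyπ : |y| ≤ π := by
    have h1 : |x / (2 * π) - m| ≤ 1 / 2 := abs_sub_round _
    have h0 : y = (x / (2 * π) - m) * (2 * π) := by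
      field_simp [hy]
      exact hy
    have h2 : |y| = |x / (2 * π) - m| * (2 * π) := by
      rw [h0, abs_mul, abs_of_pos hπ2]
    rw [h2]; nlinarith [Real.pi_pos]
  refine ⟨y, hyπ, ?_, ?_⟩
  · rw [hy, show x - 2 * π * m = x - m * (2 * π) by ring, Real.cos_sub_int_mul_two_pi]
  · apply le_antisymm
    · have hmem : 2 * Real.pi * (m:ℝ) ∈ Set.range fun m : ℤ => 2 * Real.pi * (m:ℝ) :=
        ⟨m, rfl⟩
      simpa [distToTwoPiZ, Real.dist_eq, hy] using
        Metric.infDist_le_dist_of_mem (x := x) hmem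
    · refine le_of_not_gt fun h => ?_
      obtain ⟨p, ⟨k, rfl⟩, hp⟩ :=
        (Metric.infDist_lt_iff (Set.range_nonempty (fun m : ℤ => 2 * Real.pi * (m:ℝ)))).mp h
      rw [Real.dist_eq] at hp
      rcases eq_or_ne k m with rfl | hkm
      · rw [← hy] at hp; exact absurd hp (lt_irrefl _)
      · have h1 : (1:ℝ) ≤ |((m:ℝ) - k)| := by
          have := Int.one_le_abs (sub_ne_zero.mpr (Ne.symm hkm))
          exact_mod_cast this
        have h2 : 2 * π ≤ |2 * π * ((m:ℝ) - k)| := by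
          rw [abs_mul, abs_of_pos hπ2]; nlinarith
        have h3 : x - 2 * π * k = y + 2 * π * ((m:ℝ) - k) := by rw [hy]; ring
        have h5 : |2 * π * ((m:ℝ) - k)| ≤ |y + 2 * π * ((m:ℝ) - k)| + |y| := by
          calc |2 * π * ((m:ℝ) - k)| = |(y + 2 * π * ((m:ℝ) - k)) + (-y)| := by ring_nf
            _ ≤ |y + 2 * π * ((m:ℝ) - k)| + |(-y)| := abs_add_le _ _
            _ = |y + 2 * π * ((m:ℝ) - k)| + |y| := by rw [abs_neg]
        rw [h3] at hp
        nlinarith [abs_nonneg y]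

lemma deriv_re_bound (x : ℝ) (n : ℕ) (hn : 1 ≤ n) (t : ℝ) (ht0 : 0 ≤ t)
    (hq : 0 < t ^ 2 - 2 * Real.cos x * t + 1) :
    |(∑ ℓ ∈ Finset.Icc 1 n, t ^ (ℓ - 1) * Real.cos (ℓ * x)) +
        (t - Real.cos x) / (t ^ 2 - 2 * Real.cos x * t + 1)|
      ≤ t ^ n / Real.sqrt (t ^ 2 - 2 * Real.cos x * t + 1) := by
  set c := Real.cos x with hc
  set q : ℝ := t ^ 2 - 2 * c * t + 1 with hqdef
  set z : ℂ := Complex.exp (x * I) with hz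
  have hzre : z.re = c := Complex.exp_ofReal_mul_I_re x
  have hzim : z.im = Real.sin x := Complex.exp_ofReal_mul_I_im x
  have habs : ‖z‖ = 1 := Complex.norm_exp_ofReal_mul_I x
  have hpyth := Real.sin_sq_add_cos_sq x
  have hnormSq : Complex.normSq ((t:ℂ) * z - 1) = q := by
    simp only [Complex.normSq_apply, Complex.sub_re, Complex.sub_im, Complex.mul_re,
      Complex.mul_im, Complex.ofReal_re, Complex.ofReal_im, Complex.one_re, Complex.one_im,
      hzre, hzim, hqdef]
    ring_nf
    linear_combination (t ^ 2) * hpyth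
  have hne : (t:ℂ) * z - 1 ≠ 0 := by
    intro h
    rw [h, map_zero] at hnormSq
    exact hq.ne hnormSq
  have htz : (t:ℂ) * z ≠ 1 := by
    intro h
    exact hne (by rw [h, sub_self])
  have hterm : ∀ ℓ : ℕ, ((t:ℂ) ^ (ℓ - 1) * z ^ ℓ).re = t ^ (ℓ - 1) * Real.cos (ℓ * x) := by
    intro ℓ
    have hzl : z ^ ℓ = Complex.exp (((ℓ * x : ℝ) : ℂ) * I) := by
      rw [hz, ← Complex.exp_nat_mul]
      push_cast
      ring_nf
    have hcast : (t:ℂ) ^ (ℓ - 1) = ((t ^ (ℓ - 1) : ℝ) : ℂ) := by norm_cast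
    rw [hcast, Complex.re_ofReal_mul, hzl, Complex.exp_ofReal_mul_I_re]
  have hsum : (∑ ℓ ∈ Finset.Icc 1 n, (t:ℝ) ^ (ℓ - 1) * Real.cos (ℓ * x))
      = (z * (((t:ℂ) * z) ^ n - 1) / ((t:ℂ) * z - 1)).re := by
    have hsum2 : (∑ ℓ ∈ Finset.Icc 1 n, (t:ℂ) ^ (ℓ - 1) * z ^ ℓ)
        = z * (((t:ℂ) * z) ^ n - 1) / ((t:ℂ) * z - 1) := by
      rw [← Finset.Ico_add_one_right_eq_Icc, Finset.sum_Ico_eq_sum_range]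
      have h1 : ∀ j : ℕ, (t:ℂ) ^ ((1 + j) - 1) * z ^ (1 + j) = z * ((t:ℂ) * z) ^ j := by
        intro j
        have : (1 + j) - 1 = j := by omega
        rw [this, mul_pow, pow_add]
        ring
      rw [Finset.sum_congr rfl fun j _ => h1 j, ← Finset.mul_sum, geom_sum_eq htz]
      simp only [Nat.succ_sub_one, Nat.add_sub_cancel]
      ring
    rw [← hsum2, Complex.re_sum]
    exact Finset.sum_congr rfl fun ℓ _ => (hterm ℓ).symm
  have hre_div : (z / ((t:ℂ) * z - 1)).re = (t - c) / q := by
    rw [Complex.div_re, hnormSq]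
    simp only [Complex.sub_re, Complex.sub_im, Complex.mul_re, Complex.mul_im,
      Complex.ofReal_re, Complex.ofReal_im, Complex.one_re, Complex.one_im, hzre, hzim]
    rw [← add_div]
    congr 1
    ring_nf
    linear_combination t * hpyth
  have hidentity : (∑ ℓ ∈ Finset.Icc 1 n, (t:ℝ) ^ (ℓ - 1) * Real.cos (ℓ * x)) + (t - c) / q
      = (z * ((t:ℂ) * z) ^ n / ((t:ℂ) * z - 1)).re := by
    rw [hsum, ← hre_div, ← Complex.add_re]
    congr 1
    field_simp
    ring
  rw [hidentity]
  calc |(z * ((t:ℂ) * z) ^ n / ((t:ℂ) * z - 1)).re|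
      ≤ ‖z * ((t:ℂ) * z) ^ n / ((t:ℂ) * z - 1)‖ := Complex.abs_re_le_norm _
    _ = t ^ n / Real.sqrt q := by
        rw [norm_div, norm_mul, norm_pow, norm_mul, habs, Complex.norm_of_nonneg ht0,
          Complex.norm_def, hnormSq]
        ring

lemma mvt_abs_bound (f f' B B' : ℝ → ℝ) (a b : ℝ) (hab : a ≤ b)
    (hf : ∀ t ∈ Set.Icc a b, HasDerivAt f (f' t) t)
    (hB : ∀ t ∈ Set.Icc a b, HasDerivAt B (B' t) t)
    (ha : |f a| ≤ B a) (hbd : ∀ t ∈ Set.Ico a b, |f' t| ≤ B' t) : |f b| ≤ B b := by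
  have h := image_norm_le_of_norm_deriv_right_le_deriv_boundary'
    (f := f) (f' := f') (B := B) (B' := B') (a := a) (b := b)
    (fun t ht => (hf t ht).continuousAt.continuousWithinAt)
    (fun t ht => (hf t (Set.mem_Icc_of_Ico ht)).hasDerivWithinAt)
    (by simpa using ha)
    (fun t ht => (hB t ht).continuousAt.continuousWithinAt)
    (fun t ht => (hB t (Set.mem_Icc_of_Ico ht)).hasDerivWithinAt)
    (fun t ht => by simpa using hbd t ht)
    (Set.right_mem_Icc.mpr hab)
  simpa using h

/-- Second covariance estimate: `C_n(r,θ,θ') = -2·log|e^{iθ} - e^{iθ'}|` up to an error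
`O((n⁻¹ + (1-r²))·‖θ-θ'‖⁻¹)`, uniformly. -/
theorem covariance_truncated_field_log_estimate :
    ∃ C : ℝ, 0 < C ∧ ∀ n : ℕ, 1 ≤ n → ∀ r : ℝ, 0 < r → r ≤ 1 → ∀ θ θ' : ℝ,
      Complex.exp (θ * Complex.I) ≠ Complex.exp (θ' * Complex.I) →
      |2 * ∑ ℓ ∈ Finset.Icc 1 n, r ^ (2 * ℓ) / ℓ * Real.cos (ℓ * (θ - θ')) +
          2 * Real.log ‖Complex.exp (θ * Complex.I) -
            Complex.exp (θ' * Complex.I)‖|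
        ≤ C * ((n : ℝ)⁻¹ + (1 - r ^ 2)) * (distToTwoPiZ (θ - θ'))⁻¹ := by
  refine ⟨2 * π, by positivity, ?_⟩
  intro n hn r hr0 hr1 θ θ' hne
  have hn0 : (0:ℝ) < n := by exact_mod_cast Nat.lt_of_lt_of_le Nat.zero_lt_one hn
  set x : ℝ := θ - θ' with hx
  set c : ℝ := Real.cos x with hc
  set s : ℝ := r ^ 2 with hs
  have hs0 : 0 < s := by positivity
  have hs1 : s ≤ 1 := by nlinarith
  set A : ℝ := ‖Complex.exp (θ * Complex.I) - Complex.exp (θ' * Complex.I)‖ with hA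
  have hA0 : 0 < A := by
    rw [hA]
    exact norm_pos_iff.mpr (sub_ne_zero.mpr hne)
  have hA2 : A ^ 2 = 2 - 2 * c := by
    rw [hA, Complex.sq_norm]
    simp only [Complex.normSq_apply, Complex.sub_re, Complex.sub_im,
      Complex.exp_ofReal_mul_I_re, Complex.exp_ofReal_mul_I_im]
    have h1 := Real.cos_sub θ θ'
    have p1 := Real.sin_sq_add_cos_sq θ
    have p2 := Real.sin_sq_add_cos_sq θ'
    rw [hc, hx, h1]
    nlinarith
  obtain ⟨y, hyπ, hcy, hdy⟩ := distToTwoPiZ_rep x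
  set d : ℝ := distToTwoPiZ x with hd
  have hy0 : y ≠ 0 := by
    intro h
    rw [h, Real.cos_zero] at hcy
    rw [hc] at hA2
    nlinarith
  have hcy' : c = Real.cos y := by rw [hc]; exact hcy
  clear_value x c s A d
  have hd0 : 0 < d := by rw [hdy]; exact abs_pos.mpr hy0
  have hdπ : d ≤ π := by rw [hdy]; exact hyπ
  have hjordan : 2 / π ^ 2 * d ^ 2 ≤ 1 - c := by
    have h := Real.cos_le_one_sub_mul_cos_sq hyπ
    rw [hdy, _root_.sq_abs, hcy']
    linarith
  have hπ0' := Real.pi_pos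
  have hjordan2 : 2 * d ^ 2 ≤ (1 - c) * π ^ 2 := by
    rw [div_mul_eq_mul_div, div_le_iff₀ (by positivity)] at hjordan
    linarith
  have hc1 : c < 1 := by nlinarith [Real.pi_pos]
  have hcm1 : -1 ≤ c := by rw [hc]; exact Real.neg_one_le_cos x
  have hπ0 := Real.pi_pos
  -- positivity of q on [0,1]
  have hqpos : ∀ t : ℝ, 0 ≤ t → t ≤ 1 → 0 < t ^ 2 - 2 * c * t + 1 := by
    intro t ht0 ht1
    rcases ht0.eq_or_lt with h | h
    · rw [← h]; norm_num
    · nlinarith [sq_nonneg (1 - t), mul_pos h (sub_pos.mpr hc1)]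
  -- sqrt lower bound
  have hsqrtq : ∀ t : ℝ, 0 ≤ t →
      2 * d / π * Real.sqrt t ≤ Real.sqrt (t ^ 2 - 2 * c * t + 1) := by
    intro t ht0
    apply Real.le_sqrt_of_sq_le
    have hst : Real.sqrt t ^ 2 = t := Real.sq_sqrt ht0
    have h2 : 2 / π ^ 2 * d ^ 2 * t ≤ (1 - c) * t := mul_le_mul_of_nonneg_right hjordan ht0
    have hexp : (2 * d / π * Real.sqrt t) ^ 2 = 4 * d ^ 2 / π ^ 2 * t := by
      rw [mul_pow, hst]; ring
    rw [hexp, div_mul_eq_mul_div, div_le_iff₀ (by positivity)]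
    nlinarith [mul_le_mul_of_nonneg_right hjordan2 ht0, sq_nonneg ((1 - t) * π)]
  -- derivative of q
  have hqderiv : ∀ t : ℝ, HasDerivAt (fun u : ℝ => u ^ 2 - 2 * c * u + 1) (2 * t - 2 * c) t := by
    intro t
    have h1 : HasDerivAt (fun u : ℝ => u ^ 2) (2 * t) t := by
      simpa using hasDerivAt_pow 2 t
    have h2 : HasDerivAt (fun u : ℝ => 2 * c * u) (2 * c) t := by
      simpa using (hasDerivAt_id t).const_mul (2 * c)
    simpa using (h1.sub h2).add_const 1
  -- derivative of the main function
  have hGderiv : ∀ t : ℝ, 0 ≤ t → t ≤ 1 →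
      HasDerivAt (fun u : ℝ => (∑ ℓ ∈ Finset.Icc 1 n, u ^ ℓ * Real.cos (ℓ * x) / ℓ)
        + 1 / 2 * Real.log (u ^ 2 - 2 * c * u + 1))
      ((∑ ℓ ∈ Finset.Icc 1 n, t ^ (ℓ - 1) * Real.cos (ℓ * x))
        + (t - c) / (t ^ 2 - 2 * c * t + 1)) t := by
    intro t ht0 ht1
    have hq := hqpos t ht0 ht1
    have h1 : HasDerivAt (fun u : ℝ => ∑ ℓ ∈ Finset.Icc 1 n, u ^ ℓ * Real.cos (ℓ * x) / ℓ)
        (∑ ℓ ∈ Finset.Icc 1 n, t ^ (ℓ - 1) * Real.cos (ℓ * x)) t := by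
      apply HasDerivAt.fun_sum
      intro ℓ hℓ
      have hℓ1 : 1 ≤ ℓ := (Finset.mem_Icc.mp hℓ).1
      have hℓ0 : (ℓ:ℝ) ≠ 0 := Nat.cast_ne_zero.mpr (by omega)
      have h := ((hasDerivAt_pow ℓ t).mul_const (Real.cos (ℓ * x))).div_const (ℓ:ℝ)
      refine h.congr_deriv ?_
      field_simp
    have h2 : HasDerivAt (fun u : ℝ => 1 / 2 * Real.log (u ^ 2 - 2 * c * u + 1))
        ((t - c) / (t ^ 2 - 2 * c * t + 1)) t := by
      have h := ((hqderiv t).log hq.ne').const_mul (1 / 2 : ℝ)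
      refine h.congr_deriv ?_
      field_simp
    exact h1.add h2
  -- bound on the derivative of G on [0, s]
  have hbound1 : ∀ t ∈ Set.Ico (0:ℝ) s,
      |(∑ ℓ ∈ Finset.Icc 1 n, t ^ (ℓ - 1) * Real.cos (ℓ * x))
        + (t - c) / (t ^ 2 - 2 * c * t + 1)| ≤ π / (2 * d) * t ^ (n - 1) := by
    intro t ht
    have ht0 := ht.1
    have ht1 : t ≤ 1 := le_trans ht.2.le hs1
    have hq := hqpos t ht0 ht1
    have hb := deriv_re_bound x n hn t ht0 (by rw [← hc]; exact hq)
    rw [← hc] at hb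
    refine le_trans hb ?_
    rcases ht0.eq_or_lt with h | h
    · rw [← h]
      rw [zero_pow (by omega : n ≠ 0), zero_div]
      positivity
    · have hst : 0 < Real.sqrt t := Real.sqrt_pos.mpr h
      have hlow := hsqrtq t ht0
      have hlow0 : 0 < 2 * d / π * Real.sqrt t := by positivity
      have hmm : (π / (2 * d) * (t ^ (n - 1) * Real.sqrt t)) * (2 * d / π * Real.sqrt t)
          = t ^ n := by
        have h1 : Real.sqrt t * Real.sqrt t = t := Real.mul_self_sqrt ht0
        have h2 : (π / (2 * d) * (t ^ (n - 1) * Real.sqrt t)) * (2 * d / π * Real.sqrt t)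
            = t ^ (n - 1) * (Real.sqrt t * Real.sqrt t) := by
          field_simp
        rw [h2, h1, ← pow_succ]
        congr 1
        omega
      have e1 : t ^ n / (2 * d / π * Real.sqrt t)
          = π / (2 * d) * (t ^ (n - 1) * Real.sqrt t) :=
        ((eq_div_iff hlow0.ne').mpr hmm).symm
      calc t ^ n / Real.sqrt (t ^ 2 - 2 * c * t + 1)
          ≤ t ^ n / (2 * d / π * Real.sqrt t) :=
            div_le_div_of_nonneg_left (pow_nonneg ht0 n) hlow0 hlow
        _ = π / (2 * d) * (t ^ (n - 1) * Real.sqrt t) := e1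
        _ ≤ π / (2 * d) * t ^ (n - 1) := by
            have h3 : Real.sqrt t ≤ 1 := Real.sqrt_le_one.mpr ht1
            have h4 : t ^ (n - 1) * Real.sqrt t ≤ t ^ (n - 1) :=
              mul_le_of_le_one_right (pow_nonneg ht0 _) h3
            exact mul_le_mul_of_nonneg_left h4 (by positivity)
  -- first MVT bound
  have hGs : |(∑ ℓ ∈ Finset.Icc 1 n, s ^ ℓ * Real.cos (ℓ * x) / ℓ)
      + 1 / 2 * Real.log (s ^ 2 - 2 * c * s + 1)| ≤ π / (2 * d) / n * s ^ n := by
    apply mvt_abs_bound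
      (fun u : ℝ => (∑ ℓ ∈ Finset.Icc 1 n, u ^ ℓ * Real.cos (ℓ * x) / ℓ)
        + 1 / 2 * Real.log (u ^ 2 - 2 * c * u + 1))
      (fun u : ℝ => (∑ ℓ ∈ Finset.Icc 1 n, u ^ (ℓ - 1) * Real.cos (ℓ * x))
        + (u - c) / (u ^ 2 - 2 * c * u + 1))
      (fun u : ℝ => π / (2 * d) / n * u ^ n)
      (fun u : ℝ => π / (2 * d) * u ^ (n - 1))
      0 s hs0.le
    · exact fun t ht => hGderiv t ht.1 (le_trans ht.2 hs1)
    · intro t ht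
      have h := (hasDerivAt_pow n t).const_mul (π / (2 * d) / (n:ℝ))
      refine h.congr_deriv ?_
      have hnn : (n:ℝ) ≠ 0 := ne_of_gt hn0
      field_simp
    · have hz : (∑ ℓ ∈ Finset.Icc 1 n, (0:ℝ) ^ ℓ * Real.cos (ℓ * x) / ℓ) = 0 :=
        Finset.sum_eq_zero fun ℓ hℓ => by
          have hℓ0 : ℓ ≠ 0 := by have := (Finset.mem_Icc.mp hℓ).1; omega
          simp [zero_pow hℓ0]
      rw [hz]
      norm_num [zero_pow (show n ≠ 0 by omega)]
    · exact hbound1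
  -- second MVT bound
  have hHs : |1 / 2 * Real.log (1 ^ 2 - 2 * c * 1 + 1)
      - 1 / 2 * Real.log (s ^ 2 - 2 * c * s + 1)| ≤ π / d * (Real.sqrt 1 - Real.sqrt s) := by
    apply mvt_abs_bound
      (fun u : ℝ => 1 / 2 * Real.log (u ^ 2 - 2 * c * u + 1)
        - 1 / 2 * Real.log (s ^ 2 - 2 * c * s + 1))
      (fun u : ℝ => (u - c) / (u ^ 2 - 2 * c * u + 1))
      (fun u : ℝ => π / d * (Real.sqrt u - Real.sqrt s))
      (fun u : ℝ => π / d * (1 / (2 * Real.sqrt u)))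
      s 1 hs1
    · intro t ht
      have hq := hqpos t (le_trans hs0.le ht.1) ht.2
      have h := (((hqderiv t).log hq.ne').const_mul (1 / 2 : ℝ)).sub_const
        (1 / 2 * Real.log (s ^ 2 - 2 * c * s + 1))
      refine h.congr_deriv ?_
      field_simp
    · intro t ht
      have ht0 : t ≠ 0 := ne_of_gt (lt_of_lt_of_le hs0 ht.1)
      exact ((Real.hasDerivAt_sqrt ht0).sub_const (Real.sqrt s)).const_mul (π / d)
    · simp
    · intro t ht
      have ht0 : 0 < t := lt_of_lt_of_le hs0 ht.1
      have ht1 : t ≤ 1 := ht.2.le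
      have hq := hqpos t ht0.le ht1
      have hst : 0 < Real.sqrt t := Real.sqrt_pos.mpr ht0
      have hsqq : 0 < Real.sqrt (t ^ 2 - 2 * c * t + 1) := Real.sqrt_pos.mpr hq
      have hub : |t - c| ≤ Real.sqrt (t ^ 2 - 2 * c * t + 1) := by
        apply Real.le_sqrt_of_sq_le
        rw [_root_.sq_abs]
        nlinarith
      have hlow := hsqrtq t ht0.le
      have hlow0 : 0 < 2 * d / π * Real.sqrt t := by positivity
      rw [abs_div, abs_of_pos hq]
      calc |t - c| / (t ^ 2 - 2 * c * t + 1)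
          ≤ Real.sqrt (t ^ 2 - 2 * c * t + 1) / (t ^ 2 - 2 * c * t + 1) :=
            (div_le_div_iff_of_pos_right hq).mpr hub
        _ = 1 / Real.sqrt (t ^ 2 - 2 * c * t + 1) := by
            rw [div_eq_div_iff hq.ne' hsqq.ne', one_mul, Real.mul_self_sqrt hq.le]
        _ ≤ 1 / (2 * d / π * Real.sqrt t) := one_div_le_one_div_of_le hlow0 hlow
        _ = π / d * (1 / (2 * Real.sqrt t)) := by
            ring_nf
            rw [inv_inv]
            ring
  -- assembling
  have hsum_eq : (∑ ℓ ∈ Finset.Icc 1 n, r ^ (2 * ℓ) / ℓ * Real.cos (ℓ * x))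
      = ∑ ℓ ∈ Finset.Icc 1 n, s ^ ℓ * Real.cos (ℓ * x) / ℓ :=
    Finset.sum_congr rfl fun ℓ _ => by rw [hs, pow_mul]; ring
  have hlogA : 2 * Real.log A = Real.log (1 ^ 2 - 2 * c * 1 + 1) := by
    have h2 : Real.log (A ^ 2) = 2 * Real.log A := by
      rw [Real.log_pow]; norm_num
    rw [← h2, hA2]
    congr 1
    ring
  rw [hsum_eq, hlogA]
  have hss : s ≤ Real.sqrt s := by
    calc s = Real.sqrt (s ^ 2) := (Real.sqrt_sq hs0.le).symm
      _ ≤ Real.sqrt s := Real.sqrt_le_sqrt (by nlinarith)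
  have hsn1 : s ^ n ≤ 1 := pow_le_one₀ hs0.le hs1
  calc |2 * (∑ ℓ ∈ Finset.Icc 1 n, s ^ ℓ * Real.cos (ℓ * x) / ℓ)
        + Real.log (1 ^ 2 - 2 * c * 1 + 1)|
      = |2 * ((∑ ℓ ∈ Finset.Icc 1 n, s ^ ℓ * Real.cos (ℓ * x) / ℓ)
          + 1 / 2 * Real.log (s ^ 2 - 2 * c * s + 1))
        + 2 * (1 / 2 * Real.log (1 ^ 2 - 2 * c * 1 + 1)
          - 1 / 2 * Real.log (s ^ 2 - 2 * c * s + 1))| := by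
        congr 1
        ring
    _ ≤ |2 * ((∑ ℓ ∈ Finset.Icc 1 n, s ^ ℓ * Real.cos (ℓ * x) / ℓ)
          + 1 / 2 * Real.log (s ^ 2 - 2 * c * s + 1))|
        + |2 * (1 / 2 * Real.log (1 ^ 2 - 2 * c * 1 + 1)
          - 1 / 2 * Real.log (s ^ 2 - 2 * c * s + 1))| := abs_add_le _ _
    _ = 2 * |(∑ ℓ ∈ Finset.Icc 1 n, s ^ ℓ * Real.cos (ℓ * x) / ℓ)
          + 1 / 2 * Real.log (s ^ 2 - 2 * c * s + 1)|
        + 2 * |1 / 2 * Real.log (1 ^ 2 - 2 * c * 1 + 1)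
          - 1 / 2 * Real.log (s ^ 2 - 2 * c * s + 1)| := by
        rw [abs_mul, abs_mul]
        norm_num
    _ ≤ 2 * (π / (2 * d) / n * s ^ n) + 2 * (π / d * (Real.sqrt 1 - Real.sqrt s)) := by
        have := mul_le_mul_of_nonneg_left hGs (by norm_num : (0:ℝ) ≤ 2)
        have := mul_le_mul_of_nonneg_left hHs (by norm_num : (0:ℝ) ≤ 2)
        linarith
    _ ≤ 2 * π * ((n : ℝ)⁻¹ + (1 - s)) * d⁻¹ := by
        rw [Real.sqrt_one]
        have e : 2 * π * ((n : ℝ)⁻¹ + (1 - s)) * d⁻¹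
            - (2 * (π / (2 * d) / n * s ^ n) + 2 * (π / d * (1 - Real.sqrt s)))
            = π * (2 - s ^ n) / (d * n) + 2 * π * (Real.sqrt s - s) / d := by
          field_simp
          ring
        have hpos1 : 0 ≤ π * (2 - s ^ n) / (d * n) := by
          apply div_nonneg _ (by positivity)
          nlinarith
        have hpos2 : 0 ≤ 2 * π * (Real.sqrt s - s) / d := by
          apply div_nonneg _ hd0.le
          nlinarith
        linarith
end

section
/- For all integers 1 ≤ n < n', every r ∈ (0,1], and every α ∈ ℝ, the tail sum T = Σ_{ℓ=n+1}^{n'} (r^{2ℓ}/ℓ)·cos(ℓα) satisfies: (i) if r < 1, then |T| ≤ 12π · n^{-1} · (1 − r²)^{-1}; and (ii) if ‖α‖ > 0, then |T| ≤ 12π · n^{-1} · ‖α‖^{-1}; where ‖α‖ denotes the distance from α to 2πℤ. -/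
open Real

/-- Abel summation identity. -/
lemma abel_identity (a : ℕ → ℝ) (c : ℕ → ℝ) (m N : ℕ) (hmN : m ≤ N) :
    ∑ ℓ ∈ Finset.Icc m N, c ℓ * a ℓ =
      (∑ k ∈ Finset.Ico m N, (c k - c (k + 1)) * (∑ ℓ ∈ Finset.Icc m k, a ℓ)) +
        c N * (∑ ℓ ∈ Finset.Icc m N, a ℓ) := by
  induction N, hmN using Nat.le_induction with
  | base => simp
  | succ N hN ih =>
    rw [Finset.sum_Icc_succ_top (by omega), Finset.sum_Ico_succ_top (by omega), ih,
      Finset.sum_Icc_succ_top (by omega : m ≤ N + 1)]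
    ring

/-- Telescoping. -/
lemma telescope (c : ℕ → ℝ) (m N : ℕ) (hmN : m ≤ N) :
    ∑ k ∈ Finset.Ico m N, (c k - c (k + 1)) = c m - c N := by
  induction N, hmN using Nat.le_induction with
  | base => simp
  | succ N hN ih => rw [Finset.sum_Ico_succ_top (by omega), ih]; ring

/-- Abel summation bound with coefficients `1/ℓ`. -/
lemma abel_bound (a : ℕ → ℝ) (m N : ℕ) (hm : 1 ≤ m) (hmN : m ≤ N) (B : ℝ)
    (hS : ∀ k, |∑ ℓ ∈ Finset.Icc m k, a ℓ| ≤ B) :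
    |∑ ℓ ∈ Finset.Icc m N, a ℓ / (ℓ : ℝ)| ≤ B * (m : ℝ)⁻¹ := by
  have hc : ∀ ℓ, a ℓ / (ℓ : ℝ) = (ℓ : ℝ)⁻¹ * a ℓ := fun ℓ => by ring
  simp only [hc]
  rw [abel_identity a (fun ℓ => (ℓ : ℝ)⁻¹) m N hmN]
  have hB : 0 ≤ B := le_trans (abs_nonneg _) (hS m)
  calc |(∑ k ∈ Finset.Ico m N, (((k : ℝ))⁻¹ - ((k + 1 : ℕ) : ℝ)⁻¹) *
          (∑ ℓ ∈ Finset.Icc m k, a ℓ)) + ((N : ℝ))⁻¹ * (∑ ℓ ∈ Finset.Icc m N, a ℓ)|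
      ≤ (∑ k ∈ Finset.Ico m N, |(((k : ℝ))⁻¹ - ((k + 1 : ℕ) : ℝ)⁻¹) *
          (∑ ℓ ∈ Finset.Icc m k, a ℓ)|) + |((N : ℝ))⁻¹ * (∑ ℓ ∈ Finset.Icc m N, a ℓ)| := by
        exact le_trans (abs_add_le _ _) (by gcongr; exact Finset.abs_sum_le_sum_abs _ _)
    _ ≤ (∑ k ∈ Finset.Ico m N, (((k : ℝ))⁻¹ - ((k + 1 : ℕ) : ℝ)⁻¹) * B) + ((N : ℝ))⁻¹ * B := by
        gcongr with k hk
        · rw [abs_mul]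
          have hk1 : 1 ≤ k := le_trans hm (Finset.mem_Ico.1 hk).1
          have h1 : (0:ℝ) < (k : ℝ) := by exact_mod_cast hk1
          have h2 : 0 ≤ ((k : ℝ))⁻¹ - ((k + 1 : ℕ) : ℝ)⁻¹ := by
            have : ((k + 1 : ℕ) : ℝ)⁻¹ ≤ ((k : ℝ))⁻¹ := by
              apply inv_anti₀ h1; push_cast; linarith
            linarith
          rw [abs_of_nonneg h2]
          exact mul_le_mul_of_nonneg_left (hS k) h2
        · rw [abs_mul]
          have hN1 : (0:ℝ) < (N : ℝ) := by exact_mod_cast le_trans hm hmN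
          rw [abs_of_nonneg (by positivity : (0:ℝ) ≤ ((N:ℝ))⁻¹)]
          exact mul_le_mul_of_nonneg_left (hS N) (by positivity)
    _ = ((m : ℝ)⁻¹ - (N : ℝ)⁻¹) * B + (N : ℝ)⁻¹ * B := by
        rw [← Finset.sum_mul, telescope (fun ℓ => ((ℓ : ℝ))⁻¹) m N hmN]
    _ = B * (m : ℝ)⁻¹ := by ring

/-- Geometric sum bound. -/
lemma geom_norm_bound (z : ℂ) (hz : ‖z‖ ≤ 1) (hz1 : z ≠ 1) (m k : ℕ) :
    ‖∑ ℓ ∈ Finset.Icc m k, z ^ ℓ‖ ≤ 2 / ‖z - 1‖ := by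
  have hpos : 0 < ‖z - 1‖ := by
    rw [norm_pos_iff]; exact sub_ne_zero.2 hz1
  rcases le_or_gt m k with h | h
  · rw [← Finset.Ico_add_one_right_eq_Icc, geom_sum_Ico hz1 (by omega)]
    rw [norm_div]
    have hnum : ‖z ^ (k + 1) - z ^ m‖ ≤ 2 := by
      calc ‖z ^ (k + 1) - z ^ m‖ ≤ ‖z ^ (k+1)‖ + ‖z ^ m‖ := norm_sub_le _ _
        _ ≤ 1 + 1 := by
            rw [norm_pow, norm_pow]
            gcongr <;> [exact pow_le_one₀ (norm_nonneg z) hz; exact pow_le_one₀ (norm_nonneg z) hz]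
        _ = 2 := by norm_num
    gcongr
  · rw [Finset.Icc_eq_empty (by omega), Finset.sum_empty, norm_zero]
    positivity

/-- The real part computation. -/
lemma zpow_re (r α : ℝ) (ℓ : ℕ) :
    ((((r ^ 2 : ℝ) : ℂ) * Complex.exp ((α : ℂ) * Complex.I)) ^ ℓ).re =
      r ^ (2 * ℓ) * Real.cos (ℓ * α) := by
  rw [mul_pow, ← Complex.exp_nat_mul]
  have h1 : (ℓ:ℂ) * ((α:ℂ) * Complex.I) = (((ℓ : ℝ) * α : ℝ) : ℂ) * Complex.I := by
    push_cast; ring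
  have h2 : ((((r ^ 2 : ℝ)):ℂ)) ^ ℓ = ((r ^ (2*ℓ) : ℝ) : ℂ) := by
    push_cast; rw [pow_mul]
  rw [h1, h2, Complex.re_ofReal_mul, Complex.exp_ofReal_mul_I_re]

lemma norm_z_sub_one_sq (r α : ℝ) :
    ‖((r ^ 2 : ℝ) : ℂ) * Complex.exp ((α : ℂ) * Complex.I) - 1‖ ^ 2 =
      (1 - r ^ 2) ^ 2 + 2 * r ^ 2 * (1 - Real.cos α) := by
  set w := ((r ^ 2 : ℝ) : ℂ) * Complex.exp ((α : ℂ) * Complex.I) - 1 with hw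
  have hre : w.re = r ^ 2 * Real.cos α - 1 := by
    rw [hw, Complex.sub_re, Complex.re_ofReal_mul, Complex.exp_ofReal_mul_I_re, Complex.one_re]
  have him : w.im = r ^ 2 * Real.sin α := by
    rw [hw, Complex.sub_im, Complex.im_ofReal_mul, Complex.exp_ofReal_mul_I_im, Complex.one_im,
      sub_zero]
  rw [Complex.sq_norm, Complex.normSq_apply, hre, him]
  linear_combination (r:ℝ) ^ 4 * Real.sin_sq_add_cos_sq α

/-- Key lower bound: `‖z - 1‖ ≥ d/(2π)`. -/
lemma norm_z_sub_one_ge (r α : ℝ) (hr0 : 0 < r) (hr1 : r ≤ 1) :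
    distToTwoPiZ α / (2 * Real.pi) ≤
      ‖((r ^ 2 : ℝ) : ℂ) * Complex.exp ((α : ℂ) * Complex.I) - 1‖ := by
  set d := distToTwoPiZ α with hd
  have hπ := Real.pi_pos
  have hd0 : 0 ≤ d := Metric.infDist_nonneg
  set m : ℤ := round (α / (2 * Real.pi)) with hm
  have h2π : (0:ℝ) < 2 * Real.pi := by positivity
  have hβ : |α - 2 * Real.pi * m| ≤ Real.pi := by
    have h := abs_sub_round (α / (2 * Real.pi))
    have heq : α - 2 * Real.pi * m = (α / (2 * Real.pi) - m) * (2 * Real.pi) := by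
      field_simp
    rw [heq, abs_mul, abs_of_pos h2π]
    calc |α / (2 * Real.pi) - (m:ℝ)| * (2 * Real.pi) ≤ (1/2) * (2 * Real.pi) := by
          exact mul_le_mul_of_nonneg_right h h2π.le
      _ = Real.pi := by ring
  have hdle : d ≤ |α - 2 * Real.pi * m| := by
    rw [hd, distToTwoPiZ]
    have hmem : (2 * Real.pi * m : ℝ) ∈ Set.range fun m : ℤ => 2 * Real.pi * m := ⟨m, rfl⟩
    calc Metric.infDist α _ ≤ dist α (2 * Real.pi * m) := Metric.infDist_le_dist_of_mem hmem
      _ = |α - 2 * Real.pi * m| := by rw [Real.dist_eq]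
  have hdπ : d ≤ Real.pi := le_trans hdle hβ
  have hcos : Real.cos α ≤ Real.cos d := by
    have h1 : Real.cos α = Real.cos (α - m * (2 * Real.pi)) :=
      (Real.cos_sub_int_mul_two_pi α m).symm
    have h2 : Real.cos (α - m * (2 * Real.pi)) = Real.cos |α - 2 * Real.pi * m| := by
      rw [← Real.cos_abs]; ring_nf
    rw [h1, h2]
    exact Real.cos_le_cos_of_nonneg_of_le_pi hd0 hβ hdle
  have hsin : d / Real.pi ≤ Real.sin (d / 2) := by
    have h := Real.mul_le_sin (x := d / 2) (by linarith) (by linarith)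
    calc d / Real.pi = 2 / Real.pi * (d / 2) := by field_simp
      _ ≤ Real.sin (d / 2) := h
  have hcosd : Real.cos d = 1 - 2 * Real.sin (d / 2) ^ 2 := by
    have h := Real.cos_two_mul' (d / 2)
    have h2 : 2 * (d / 2) = d := by ring
    rw [h2] at h
    linarith [Real.sin_sq_add_cos_sq (d / 2)]
  have hdivnn : 0 ≤ d / Real.pi := div_nonneg hd0 hπ.le
  have honecos : 2 * (d ^ 2 / Real.pi ^ 2) ≤ 1 - Real.cos d := by
    have h2 : (d / Real.pi) ^ 2 ≤ Real.sin (d / 2) ^ 2 := by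
      apply sq_le_sq' _ hsin
      linarith
    rw [div_pow] at h2
    rw [hcosd]
    linarith
  set t := r ^ 2 with ht
  have ht0 : 0 < t := by positivity
  have ht1 : t ≤ 1 := by nlinarith
  have hsq : (d / (2 * Real.pi)) ^ 2 ≤ (1 - t) ^ 2 + 2 * t * (1 - Real.cos α) := by
    have h1cos : 0 ≤ 1 - Real.cos α := by linarith [Real.cos_le_one α]
    have hdd : d ^ 2 ≤ Real.pi ^ 2 := by nlinarith
    have hq : (d / (2 * Real.pi)) ^ 2 = d ^ 2 / (4 * Real.pi ^ 2) := by
      rw [div_pow]; ring_nf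
    rcases le_or_gt t (1/2) with hcase | hcase
    · have hhalf : (1/2 : ℝ) ≤ 1 - t := by linarith
      have h14 : (d / (2 * Real.pi)) ^ 2 ≤ 1/4 := by
        rw [hq, div_le_iff₀ (by positivity)]
        nlinarith
      nlinarith
    · have h1 : 2 * (d ^ 2 / Real.pi ^ 2) ≤ 1 - Real.cos α := le_trans honecos (by linarith)
      have h2 : 1 * (2 * (d ^ 2 / Real.pi ^ 2)) ≤ (2 * t) * (1 - Real.cos α) := by
        apply mul_le_mul (by linarith) h1 (by positivity) (by linarith)
      have h4 : d ^ 2 / (4 * Real.pi ^ 2) ≤ 2 * (d ^ 2 / Real.pi ^ 2) := by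
        have heq : d ^ 2 / (4 * Real.pi ^ 2) = (1/8) * (2 * (d ^ 2 / Real.pi ^ 2)) := by
          field_simp; ring
        have hnn2 : 0 ≤ d ^ 2 / Real.pi ^ 2 := by positivity
        rw [heq]; linarith
      rw [hq]
      linarith [sq_nonneg (1 - t)]
  rw [← norm_z_sub_one_sq r α] at hsq
  have hnn : 0 ≤ ‖((r ^ 2 : ℝ) : ℂ) * Complex.exp ((α : ℂ) * Complex.I) - 1‖ := norm_nonneg _
  have hA0 : 0 ≤ d / (2 * Real.pi) := div_nonneg hd0 h2π.le
  calc d / (2 * Real.pi) = Real.sqrt ((d / (2 * Real.pi)) ^ 2) := (Real.sqrt_sq hA0).symm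
    _ ≤ Real.sqrt (‖((r ^ 2 : ℝ) : ℂ) * Complex.exp ((α : ℂ) * Complex.I) - 1‖ ^ 2) :=
        Real.sqrt_le_sqrt hsq
    _ = _ := Real.sqrt_sq hnn

/-- Tail estimate for the covariance sums: for `1 ≤ n < n'`, `r ∈ (0,1]` and `α ∈ ℝ`,
the tail `T = Σ_{ℓ=n+1}^{n'} (r^{2ℓ}/ℓ)·cos(ℓα)` satisfies `|T| ≤ 12π·n⁻¹·(1-r²)⁻¹`
when `r < 1`, and `|T| ≤ 12π·n⁻¹·‖α‖⁻¹` when `‖α‖ > 0`. -/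
theorem abs_tail_sum_le (n n' : ℕ) (hn : 1 ≤ n) (hnn' : n < n')
    (r : ℝ) (hr0 : 0 < r) (hr1 : r ≤ 1) (α : ℝ) :
    (r < 1 →
      |∑ ℓ ∈ Finset.Icc (n + 1) n', r ^ (2 * ℓ) / ℓ * Real.cos (ℓ * α)| ≤
        12 * Real.pi * (n : ℝ)⁻¹ * (1 - r ^ 2)⁻¹) ∧
    (0 < distToTwoPiZ α →
      |∑ ℓ ∈ Finset.Icc (n + 1) n', r ^ (2 * ℓ) / ℓ * Real.cos (ℓ * α)| ≤
        12 * Real.pi * (n : ℝ)⁻¹ * (distToTwoPiZ α)⁻¹) := by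
  have hπ := Real.pi_pos
  set a : ℕ → ℝ := fun ℓ => r ^ (2 * ℓ) * Real.cos (ℓ * α) with ha
  have hsum_eq : ∑ ℓ ∈ Finset.Icc (n + 1) n', r ^ (2 * ℓ) / ℓ * Real.cos (ℓ * α) =
      ∑ ℓ ∈ Finset.Icc (n + 1) n', a ℓ / (ℓ : ℝ) := by
    apply Finset.sum_congr rfl
    intro ℓ _
    rw [ha]; ring
  have hn0 : (0:ℝ) < n := by exact_mod_cast hn
  have hninv : ((n+1 : ℕ) : ℝ)⁻¹ ≤ (n : ℝ)⁻¹ := by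
    apply inv_anti₀ hn0; push_cast; linarith
  have h12π : (1:ℝ) ≤ 12 * Real.pi := by nlinarith [Real.pi_gt_three]
  constructor
  · -- part (i)
    intro hr
    have h1r : 0 < 1 - r ^ 2 := by nlinarith
    have hS : ∀ k, |∑ ℓ ∈ Finset.Icc (n + 1) k, a ℓ| ≤ (1 - r ^ 2)⁻¹ := by
      intro k
      calc |∑ ℓ ∈ Finset.Icc (n + 1) k, a ℓ| ≤ ∑ ℓ ∈ Finset.Icc (n + 1) k, |a ℓ| :=
            Finset.abs_sum_le_sum_abs _ _
        _ ≤ ∑ ℓ ∈ Finset.Icc (n + 1) k, (r ^ 2) ^ ℓ := by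
            apply Finset.sum_le_sum
            intro ℓ _
            rw [ha, abs_mul, pow_mul, abs_of_nonneg (by positivity)]
            calc (r ^ 2) ^ ℓ * |Real.cos (ℓ * α)| ≤ (r ^ 2) ^ ℓ * 1 := by
                  exact mul_le_mul_of_nonneg_left (Real.abs_cos_le_one _) (by positivity)
              _ = (r ^ 2) ^ ℓ := mul_one _
        _ ≤ ∑ ℓ ∈ Finset.range (k + 1), (r ^ 2) ^ ℓ := by
            apply Finset.sum_le_sum_of_subset_of_nonneg
            · intro x hx
              simp only [Finset.mem_Icc] at hx
              simp only [Finset.mem_range]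
              omega
            · intro i _ _; positivity
        _ ≤ (1 - r ^ 2)⁻¹ := by
            rw [geom_sum_eq (by nlinarith : (r:ℝ) ^ 2 ≠ 1)]
            rw [div_le_iff_of_neg (by nlinarith : r ^ 2 - 1 < 0)]
            have hx : (0:ℝ) ≤ (r ^ 2) ^ (k + 1) := by positivity
            have hmul : (1 - r ^ 2)⁻¹ * (1 - r ^ 2) = 1 := inv_mul_cancel₀ h1r.ne'
            nlinarith
    have habel := abel_bound a (n + 1) n' (by omega) (by omega) ((1 - r ^ 2)⁻¹) hS
    rw [hsum_eq]
    calc |∑ ℓ ∈ Finset.Icc (n + 1) n', a ℓ / (ℓ : ℝ)|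
        ≤ (1 - r ^ 2)⁻¹ * ((n + 1 : ℕ) : ℝ)⁻¹ := habel
      _ ≤ (1 - r ^ 2)⁻¹ * (n : ℝ)⁻¹ := by gcongr
      _ = 1 * ((n : ℝ)⁻¹ * (1 - r ^ 2)⁻¹) := by ring
      _ ≤ (12 * Real.pi) * ((n : ℝ)⁻¹ * (1 - r ^ 2)⁻¹) := by
          exact mul_le_mul_of_nonneg_right h12π (by positivity)
      _ = 12 * Real.pi * (n : ℝ)⁻¹ * (1 - r ^ 2)⁻¹ := by ring
  · -- part (ii)
    intro hdpos
    set d := distToTwoPiZ α with hd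
    set z : ℂ := ((r ^ 2 : ℝ) : ℂ) * Complex.exp ((α : ℂ) * Complex.I) with hz
    have hkey : d / (2 * Real.pi) ≤ ‖z - 1‖ := norm_z_sub_one_ge r α hr0 hr1
    have hz1pos : 0 < ‖z - 1‖ := lt_of_lt_of_le (div_pos hdpos (by positivity)) hkey
    have hz1 : z ≠ 1 := by
      intro h
      rw [h, sub_self, norm_zero] at hz1pos
      exact lt_irrefl 0 hz1pos
    have hznorm : ‖z‖ ≤ 1 := by
      rw [hz, norm_mul, Complex.norm_exp_ofReal_mul_I, mul_one, Complex.norm_real,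
        Real.norm_eq_abs, abs_of_nonneg (by positivity)]
      nlinarith
    have hS : ∀ k, |∑ ℓ ∈ Finset.Icc (n + 1) k, a ℓ| ≤ 4 * Real.pi / d := by
      intro k
      have hre : ∑ ℓ ∈ Finset.Icc (n + 1) k, a ℓ = (∑ ℓ ∈ Finset.Icc (n + 1) k, z ^ ℓ).re := by
        rw [Complex.re_sum]
        exact Finset.sum_congr rfl fun ℓ _ => (zpow_re r α ℓ).symm
      rw [hre]
      calc |(∑ ℓ ∈ Finset.Icc (n + 1) k, z ^ ℓ).re| ≤ ‖∑ ℓ ∈ Finset.Icc (n + 1) k, z ^ ℓ‖ :=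
            Complex.abs_re_le_norm _
        _ ≤ 2 / ‖z - 1‖ := geom_norm_bound z hznorm hz1 _ _
        _ ≤ 2 / (d / (2 * Real.pi)) := by
            apply div_le_div_of_nonneg_left (by norm_num) (div_pos hdpos (by positivity)) hkey
        _ = 4 * Real.pi / d := by
            rw [div_div_eq_mul_div]
            ring
    have habel := abel_bound a (n + 1) n' (by omega) (by omega) (4 * Real.pi / d) hS
    rw [hsum_eq]
    calc |∑ ℓ ∈ Finset.Icc (n + 1) n', a ℓ / (ℓ : ℝ)|
        ≤ 4 * Real.pi / d * ((n + 1 : ℕ) : ℝ)⁻¹ := habel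
      _ ≤ 4 * Real.pi / d * (n : ℝ)⁻¹ := by
          gcongr
      _ = (4 * Real.pi) * (d⁻¹ * (n : ℝ)⁻¹) := by rw [div_eq_mul_inv]; ring
      _ ≤ (12 * Real.pi) * (d⁻¹ * (n : ℝ)⁻¹) := by
          apply mul_le_mul_of_nonneg_right (by linarith) _
          have : 0 ≤ d⁻¹ := inv_nonneg.2 hdpos.le
          positivity
      _ = 12 * Real.pi * (n : ℝ)⁻¹ * d⁻¹ := by ring
end

section
/- For all integers m ≥ 1 and q ≥ 1, the number of permutations σ of the set {1, …, m} all of whose cycles have length strictly greater than q is at most m!/(q+1). -/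
namespace CardPermLongAux

open Function Equiv Finset


/-- Transfer of `minimalPeriod` along an injective semiconjugacy. -/
theorem minimalPeriod_of_semiconj {α β : Type*} {f : α → α} {g : β → β} {j : α → β}
    (hj : Function.Injective j) (hsc : ∀ x, g (j x) = j (f x)) (x : α) :
    Function.minimalPeriod g (j x) = Function.minimalPeriod f x := by
  have hit : ∀ (n : ℕ) (y : α), g^[n] (j y) = j (f^[n] y) := by
    intro n
    induction n with
    | zero => intro y; rfl
    | succ n ih =>
      intro y
      rw [Function.iterate_succ_apply, Function.iterate_succ_apply, hsc, ih]
  have hiff : ∀ n : ℕ, Function.IsPeriodicPt g n (j x) ↔ Function.IsPeriodicPt f n x := by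
    intro n
    unfold Function.IsPeriodicPt Function.IsFixedPt
    rw [hit]
    exact ⟨fun h => hj h, fun h => by rw [h]⟩
  by_cases hx : x ∈ Function.periodicPts f
  · have hx' : j x ∈ Function.periodicPts g := by
      obtain ⟨n, hn, hp⟩ := Function.mem_periodicPts.mp hx
      exact Function.mk_mem_periodicPts hn ((hiff n).mpr hp)
    apply le_antisymm
    · exact Function.IsPeriodicPt.minimalPeriod_le
        (Function.minimalPeriod_pos_of_mem_periodicPts hx)
        ((hiff _).mpr (Function.isPeriodicPt_minimalPeriod f x))
    · exact Function.IsPeriodicPt.minimalPeriod_le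
        (Function.minimalPeriod_pos_of_mem_periodicPts hx')
        ((hiff _).mp (Function.isPeriodicPt_minimalPeriod g (j x)))
  · have hx' : j x ∉ Function.periodicPts g := by
      intro h
      obtain ⟨n, hn, hp⟩ := Function.mem_periodicPts.mp h
      exact hx (Function.mk_mem_periodicPts hn ((hiff n).mp hp))
    rw [Function.minimalPeriod_eq_zero_of_notMem_periodicPts hx,
      Function.minimalPeriod_eq_zero_of_notMem_periodicPts hx']

theorem minimalPeriod_permCongr {α β : Type*} (e : α ≃ β) (σ : Equiv.Perm α) (x : α) :
    Function.minimalPeriod (e.permCongr σ) (e x) = Function.minimalPeriod σ x :=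
  minimalPeriod_of_semiconj e.injective (fun y => by simp) x

theorem subtypePerm_period {α : Type*} (σ : Equiv.Perm α) {p : α → Prop}
    (h : ∀ x, p x ↔ p (σ x)) (y : {x // p x}) :
    Function.minimalPeriod (σ.subtypePerm (fun x => (h x).symm)) y = Function.minimalPeriod σ (y : α) :=
  (minimalPeriod_of_semiconj Subtype.val_injective (fun _ => rfl) y).symm

/-- The number of permutations of `Fin n` with all cycles of length `> q`. -/
noncomputable def g (q n : ℕ) : ℕ :=
  Nat.card {σ : Equiv.Perm (Fin n) // ∀ x, q < Function.minimalPeriod σ x}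

theorem card_eq_g {α : Type*} {n : ℕ} (q : ℕ) (e : α ≃ Fin n) :
    Nat.card {σ : Equiv.Perm α // ∀ x, q < Function.minimalPeriod σ x} = g q n := by
  apply Nat.card_congr
  refine Equiv.subtypeEquiv (Equiv.permCongr e) fun σ => ?_
  constructor
  · intro h y
    have hmp := minimalPeriod_permCongr e σ (e.symm y)
    rw [Equiv.apply_symm_apply] at hmp
    rw [hmp]; exact h _
  · intro h x
    have hmp := minimalPeriod_permCongr e σ x
    rw [← hmp]; exact h _

theorem g_zero (q : ℕ) : g q 0 = 1 := by
  rw [g, Nat.card_eq_one_iff_unique]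
  constructor
  · constructor
    rintro ⟨a, _⟩ ⟨b, _⟩
    ext x
    exact x.elim0
  · exact ⟨1, fun x => x.elim0⟩

noncomputable def encB (q n k : ℕ) (s : Finset (Fin n)) (hs : s.card = k) :
    {τ : Equiv.Perm {x : Fin n // x ∈ s} // ∀ y, q < Function.minimalPeriod τ y} ≃
      Fin (g q k) :=
  (Finite.equivFin _).trans
    (finCongr (card_eq_g q (s.equivFin.trans (finCongr hs))))


variable {n k : ℕ}

theorem iterate_injOn' (σ : Equiv.Perm (Fin n)) (x0 : Fin n)
    (hl : Function.minimalPeriod σ x0 = k + 1) :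
    Set.InjOn (fun i => σ^[i] x0) (Set.Iio (k + 1)) := by
  have h := Function.iterate_injOn_Iio_minimalPeriod (f := ⇑σ) (x := x0)
  rwa [hl] at h

theorem iterate_period (σ : Equiv.Perm (Fin n)) (x0 : Fin n)
    (hl : Function.minimalPeriod σ x0 = k + 1) : σ^[k + 1] x0 = x0 := by
  have h := Function.isPeriodicPt_minimalPeriod (⇑σ) x0
  rwa [hl] at h

def femb (k : ℕ) (x0 : Fin n) (σ : Equiv.Perm (Fin n))
    (hl : Function.minimalPeriod σ x0 = k + 1) : Fin k ↪ {y : Fin n // y ≠ x0} where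
  toFun j := ⟨σ^[(j : ℕ) + 1] x0, by
    intro hEq
    have h := iterate_injOn' σ x0 hl (Set.mem_Iio.mpr (Nat.succ_lt_succ j.2))
      (Set.mem_Iio.mpr (Nat.succ_pos k)) (by simpa using hEq)
    omega⟩
  inj' := by
    intro a b hab
    have h : σ^[(a : ℕ) + 1] x0 = σ^[(b : ℕ) + 1] x0 := congrArg Subtype.val hab
    have := iterate_injOn' σ x0 hl (Set.mem_Iio.mpr (Nat.succ_lt_succ a.2))
      (Set.mem_Iio.mpr (Nat.succ_lt_succ b.2)) h
    exact Fin.ext (by omega)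

def sOf (x0 : Fin n) (f : Fin k ↪ {y : Fin n // y ≠ x0}) : Finset (Fin n) :=
  (insert x0 (Finset.univ.image fun j => ((f j) : Fin n)))ᶜ

theorem card_sOf (x0 : Fin n) (f : Fin k ↪ {y : Fin n // y ≠ x0}) (hkn : k + 1 ≤ n) :
    (sOf x0 f).card = n - (k + 1) := by
  have himg : x0 ∉ Finset.univ.image fun j => ((f j) : Fin n) := by
    simp only [Finset.mem_image, Finset.mem_univ, true_and]
    rintro ⟨j, hj⟩
    exact (f j).2 hj
  have hinj : Function.Injective fun j => ((f j) : Fin n) := fun a b hab =>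
    f.injective (Subtype.ext hab)
  rw [sOf, Finset.card_compl, Finset.card_insert_of_notMem himg,
    Finset.card_image_of_injective _ hinj, Finset.card_univ, Fintype.card_fin,
    Fintype.card_fin]

theorem sOf_femb_eq (x0 : Fin n) (σ : Equiv.Perm (Fin n))
    (hl : Function.minimalPeriod σ x0 = k + 1) :
    insert x0 (Finset.univ.image fun j => ((femb k x0 σ hl j) : Fin n)) =
      (Finset.range (k + 1)).image fun i => σ^[i] x0 := by
  ext y
  simp only [Finset.mem_insert, Finset.mem_image, Finset.mem_univ, true_and,
    Finset.mem_range, femb, Function.Embedding.coeFn_mk]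
  constructor
  · rintro (rfl | ⟨j, rfl⟩)
    · exact ⟨0, Nat.succ_pos k, rfl⟩
    · exact ⟨(j : ℕ) + 1, Nat.succ_lt_succ j.2, rfl⟩
  · rintro ⟨i, hi, rfl⟩
    cases i with
    | zero => left; rfl
    | succ i => right; exact ⟨⟨i, Nat.lt_of_succ_lt_succ hi⟩, rfl⟩

theorem orbit_mem_iff (σ : Equiv.Perm (Fin n)) (x0 : Fin n)
    (hl : Function.minimalPeriod σ x0 = k + 1) (x : Fin n) :
    σ x ∈ (Finset.range (k + 1)).image (fun i => σ^[i] x0) ↔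
      x ∈ (Finset.range (k + 1)).image (fun i => σ^[i] x0) := by
  have hper := iterate_period σ x0 hl
  simp only [Finset.mem_image, Finset.mem_range]
  constructor
  · rintro ⟨i, hi, hx⟩
    cases i with
    | zero =>
      exact ⟨k, Nat.lt_succ_self k, σ.injective
        ((Function.iterate_succ_apply' (⇑σ) k x0).symm.trans (hper.trans hx))⟩
    | succ i =>
      exact ⟨i, by omega, σ.injective
        ((Function.iterate_succ_apply' (⇑σ) i x0).symm.trans hx)⟩
  · rintro ⟨i, hi, rfl⟩
    by_cases hik : i + 1 < k + 1
    · exact ⟨i + 1, hik, Function.iterate_succ_apply' (⇑σ) i x0⟩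
    · have hik' : i = k := by omega
      subst hik'
      exact ⟨0, Nat.succ_pos _, hper.symm.trans (Function.iterate_succ_apply' (⇑σ) i x0)⟩

theorem sOf_closed (x0 : Fin n) (σ : Equiv.Perm (Fin n))
    (hl : Function.minimalPeriod σ x0 = k + 1) :
    ∀ x : Fin n, x ∈ sOf x0 (femb k x0 σ hl) ↔ σ x ∈ sOf x0 (femb k x0 σ hl) := by
  intro x
  simp only [sOf, Finset.mem_compl]
  rw [sOf_femb_eq x0 σ hl]
  exact not_congr (orbit_mem_iff σ x0 hl x).symm


variable {n k : ℕ}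

theorem next_congr {α : Type*} [DecidableEq α] (l : List α) (x y : α) (hx : x ∈ l)
    (hy : y ∈ l) (hxy : x = y) : l.next x hx = l.next y hy := by subst hxy; rfl

noncomputable def Phi (q n k : ℕ) (x0 : Fin n) (hkn : k + 1 ≤ n)
    (σA : {σ : Equiv.Perm (Fin n) //
      (∀ x, q < Function.minimalPeriod σ x) ∧ Function.minimalPeriod σ x0 = k + 1}) :
    (Fin k ↪ {y : Fin n // y ≠ x0}) × Fin (g q (n - (k + 1))) :=
  ⟨femb k x0 σA.1 σA.2.2,
    encB q n (n - (k + 1)) (sOf x0 (femb k x0 σA.1 σA.2.2))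
        (card_sOf x0 (femb k x0 σA.1 σA.2.2) hkn)
      ⟨σA.1.subtypePerm (fun x => (sOf_closed x0 σA.1 σA.2.2 x).symm),
        fun y => by
          rw [subtypePerm_period (h := sOf_closed x0 σA.1 σA.2.2)]
          exact σA.2.1 (y : Fin n)⟩⟩

noncomputable def decode (q n k : ℕ) (x0 : Fin n) (hkn : k + 1 ≤ n)
    (p : (Fin k ↪ {y : Fin n // y ≠ x0}) × Fin (g q (n - (k + 1)))) : Fin n → Fin n :=
  fun x =>
    if h : x ∈ sOf x0 p.1 then
      ((((encB q n (n - (k + 1)) (sOf x0 p.1) (card_sOf x0 p.1 hkn)).symm p.2) :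
          Equiv.Perm {z : Fin n // z ∈ sOf x0 p.1}) ⟨x, h⟩ : Fin n)
    else
      if h2 : x ∈ (x0 :: List.ofFn fun j => ((p.1 j) : Fin n)) then
        List.next _ x h2
      else x

theorem decode_Phi (q : ℕ) (x0 : Fin n) (hkn : k + 1 ≤ n)
    (σA : {σ : Equiv.Perm (Fin n) //
      (∀ x, q < Function.minimalPeriod σ x) ∧ Function.minimalPeriod σ x0 = k + 1}) :
    decode q n k x0 hkn (Phi q n k x0 hkn σA) = ⇑σA.1 := by
  obtain ⟨σ, hP, hl⟩ := σA
  funext x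
  have hper := iterate_period σ x0 hl
  have hinj := iterate_injOn' σ x0 hl
  have hlist : (x0 :: List.ofFn fun j => ((femb k x0 σ hl j) : Fin n)) =
      List.ofFn (fun i : Fin (k + 1) => σ^[(i : ℕ)] x0) := by
    rw [List.ofFn_succ]
    rfl
  unfold decode Phi
  simp only [Equiv.symm_apply_apply]
  split_ifs with h h2
  · rfl
  · -- x in the cycle of x0
    have hx : x ∈ (Finset.range (k + 1)).image (fun i => σ^[i] x0) := by
      rw [sOf, Finset.mem_compl, not_not, sOf_femb_eq x0 σ hl] at h
      exact h
    obtain ⟨i, hi, hxi⟩ := Finset.mem_image.mp hx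
    rw [Finset.mem_range] at hi
    have hnodup : (List.ofFn (fun i : Fin (k + 1) => σ^[(i : ℕ)] x0)).Nodup :=
      List.nodup_ofFn.mpr (fun a b hab =>
        Fin.ext (hinj (Set.mem_Iio.mpr a.2) (Set.mem_Iio.mpr b.2) hab))
    have h2' : x ∈ List.ofFn (fun i : Fin (k + 1) => σ^[(i : ℕ)] x0) := hlist ▸ h2
    have hnext : List.next (x0 :: List.ofFn fun j => ((femb k x0 σ hl j) : Fin n)) x h2 =
        List.next (List.ofFn (fun i : Fin (k + 1) => σ^[(i : ℕ)] x0)) x h2' := by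
      congr 1
    rw [hnext]
    have hlen : (List.ofFn (fun i : Fin (k + 1) => σ^[(i : ℕ)] x0)).length = k + 1 := by
      simp
    have hget : (List.ofFn (fun i : Fin (k + 1) => σ^[(i : ℕ)] x0)).get
        ⟨i, by rw [hlen]; exact hi⟩ = x := by
      rw [List.get_ofFn]
      simpa using hxi
    rw [next_congr _ x _ h2' (List.get_mem _ _) hget.symm,
      (show
        List.next (List.ofFn (fun i : Fin (k + 1) => σ^[(i : ℕ)] x0))
          ((List.ofFn (fun i : Fin (k + 1) => σ^[(i : ℕ)] x0)).get ⟨i, by rw [hlen]; exact hi⟩)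
          (List.get_mem _ _) =
        (List.ofFn (fun i : Fin (k + 1) => σ^[(i : ℕ)] x0)).get
          ⟨(i + 1) % (List.ofFn (fun i : Fin (k + 1) => σ^[(i : ℕ)] x0)).length,
            Nat.mod_lt _ (by rw [hlen]; omega)⟩ from
        List.next_getElem _ hnodup i (by rw [hlen]; exact hi))]
    rw [List.get_ofFn]
    simp only [hlen]
    show σ^[(i + 1) % (k + 1)] x0 = σ x
    rcases Nat.lt_or_ge (i + 1) (k + 1) with hc | hc
    · rw [Nat.mod_eq_of_lt hc, Function.iterate_succ_apply', hxi]
    · have hik : i = k := by omega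
      subst hik
      rw [Nat.mod_self]
      show x0 = σ x
      rw [← hxi, ← Function.iterate_succ_apply' (⇑σ) i x0]
      exact hper.symm
  · -- impossible: x not in sOf means x is in the cycle list
    exfalso
    apply h2
    rw [sOf, Finset.mem_compl, not_not] at h
    simp only [List.mem_cons, List.mem_ofFn, Set.mem_range] at *
    rcases Finset.mem_insert.mp h with h' | h'
    · exact Or.inl h'
    · obtain ⟨j, hj⟩ := Finset.mem_image.mp h'
      exact Or.inr ⟨j, hj.2⟩

theorem card_Al_le (q : ℕ) (x0 : Fin n) (hkn : k + 1 ≤ n) :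
    Nat.card {σ : Equiv.Perm (Fin n) //
        (∀ x, q < Function.minimalPeriod σ x) ∧ Function.minimalPeriod σ x0 = k + 1}
      ≤ (n - 1).descFactorial k * g q (n - (k + 1)) := by
  have hinj : Function.Injective (Phi q n k x0 hkn) := by
    intro a b hab
    have h := congrArg (decode q n k x0 hkn) hab
    rw [decode_Phi, decode_Phi] at h
    exact Subtype.ext (Equiv.coe_fn_injective h)
  calc Nat.card {σ : Equiv.Perm (Fin n) //
        (∀ x, q < Function.minimalPeriod σ x) ∧ Function.minimalPeriod σ x0 = k + 1}
      ≤ Nat.card ((Fin k ↪ {y : Fin n // y ≠ x0}) × Fin (g q (n - (k + 1)))) :=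
        Nat.card_le_card_of_injective _ hinj
    _ = (n - 1).descFactorial k * g q (n - (k + 1)) := by
        rw [Nat.card_eq_fintype_card, Fintype.card_prod, Fintype.card_fin,
          Fintype.card_embedding_eq, Fintype.card_fin]
        congr 2
        rw [Fintype.card_subtype_compl, Fintype.card_subtype_eq, Fintype.card_fin]

theorem minimalPeriod_le_n (σ : Equiv.Perm (Fin n)) (x : Fin n) :
    Function.minimalPeriod σ x ≤ n := by
  have h := Function.iterate_injOn_Iio_minimalPeriod (f := ⇑σ) (x := x)
  have hcard := Finset.card_le_card_of_injOn (fun i => σ^[i] x)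
    (s := Finset.range (Function.minimalPeriod (⇑σ) x)) (t := Finset.univ)
    (fun a _ => Finset.mem_univ _)
    (fun a ha b hb hab => h (by simpa using ha) (by simpa using hb) hab)
  simpa using hcard

theorem g_rec (q n : ℕ) (hn : 1 ≤ n) :
    g q n ≤ ∑ ℓ ∈ Finset.Icc (q + 1) n, (n - 1).descFactorial (ℓ - 1) * g q (n - ℓ) := by
  classical
  have hx0 : (0 : ℕ) < n := hn
  set x0 : Fin n := ⟨0, hx0⟩
  rw [g, Nat.card_eq_fintype_card, Fintype.card_subtype]
  rw [Finset.card_eq_sum_card_fiberwise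
    (f := fun σ : Equiv.Perm (Fin n) => Function.minimalPeriod σ x0)
    (t := Finset.Icc (q + 1) n)
    (fun σ hσ => by
      rw [Finset.mem_coe, Finset.mem_filter] at hσ
      exact Finset.mem_Icc.mpr ⟨hσ.2 x0, minimalPeriod_le_n σ x0⟩)]
  apply Finset.sum_le_sum
  intro ℓ hℓ
  rw [Finset.mem_Icc] at hℓ
  obtain ⟨k, rfl⟩ : ∃ k, ℓ = k + 1 := ⟨ℓ - 1, by omega⟩
  rw [Finset.filter_filter]
  have hcard : (Finset.univ.filter fun σ : Equiv.Perm (Fin n) =>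
      (∀ x, q < Function.minimalPeriod σ x) ∧ Function.minimalPeriod σ x0 = k + 1).card
      = Nat.card {σ : Equiv.Perm (Fin n) //
          (∀ x, q < Function.minimalPeriod σ x) ∧ Function.minimalPeriod σ x0 = k + 1} := by
    rw [Nat.card_eq_fintype_card, Fintype.card_subtype]
  rw [hcard]
  have h := card_Al_le q x0 (show k + 1 ≤ n by omega)
  simpa using h

theorem g_le (q : ℕ) : ∀ n : ℕ, 1 ≤ n → (g q n : ℝ) ≤ (Nat.factorial n : ℝ) / ((q : ℝ) + 1) := by
  intro n
  induction n using Nat.strong_induction_on with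
  | _ n ih =>
    intro hn
    have hq1 : (0 : ℝ) < (q : ℝ) + 1 := by positivity
    by_cases hcase : n ≤ q
    · have hempty : Finset.Icc (q + 1) n = ∅ := Finset.Icc_eq_empty (by omega)
      have h0 : g q n = 0 := by
        have h := g_rec q n hn
        rw [hempty, Finset.sum_empty] at h
        omega
      rw [h0, Nat.cast_zero]
      positivity
    · push_neg at hcase
      obtain ⟨b, rfl⟩ : ∃ b, n = b + 1 := ⟨n - 1, by omega⟩
      have hqb : q ≤ b := by omega
      have hrec := g_rec q (b + 1) hn
      have hcast : (g q (b + 1) : ℝ) ≤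
          ∑ ℓ ∈ Finset.Icc (q + 1) (b + 1),
            ((b.descFactorial (ℓ - 1) : ℝ) * (g q (b + 1 - ℓ) : ℝ)) := by
        calc (g q (b + 1) : ℝ)
            ≤ ((∑ ℓ ∈ Finset.Icc (q + 1) (b + 1),
                (b + 1 - 1).descFactorial (ℓ - 1) * g q (b + 1 - ℓ) : ℕ) : ℝ) :=
              Nat.cast_le.mpr hrec
          _ = _ := by push_cast [Nat.add_sub_cancel]; rfl
      rw [Finset.sum_Icc_succ_top (by omega : q + 1 ≤ b + 1)] at hcast
      have htop : ((b.descFactorial (b + 1 - 1) : ℝ) * (g q (b + 1 - (b + 1)) : ℝ))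
          = (Nat.factorial b : ℝ) := by
        simp [Nat.descFactorial_self, g_zero]
      rw [htop] at hcast
      have hterm : ∀ ℓ ∈ Finset.Icc (q + 1) b,
          ((b.descFactorial (ℓ - 1) : ℝ) * (g q (b + 1 - ℓ) : ℝ))
            ≤ (Nat.factorial b : ℝ) / ((q : ℝ) + 1) := by
        intro ℓ hℓ
        rw [Finset.mem_Icc] at hℓ
        have h1 : 1 ≤ b + 1 - ℓ := by omega
        have h2 : b + 1 - ℓ < b + 1 := by omega
        have hIH := ih (b + 1 - ℓ) h2 h1
        have hfact : (b.descFactorial (ℓ - 1) : ℝ) * (Nat.factorial (b + 1 - ℓ) : ℝ)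
            = (Nat.factorial b : ℝ) := by
          have hfd := Nat.factorial_mul_descFactorial (show ℓ - 1 ≤ b by omega)
          have hbl : b - (ℓ - 1) = b + 1 - ℓ := by omega
          rw [hbl] at hfd
          push_cast [← hfd]
          ring
        calc (b.descFactorial (ℓ - 1) : ℝ) * (g q (b + 1 - ℓ) : ℝ)
            ≤ (b.descFactorial (ℓ - 1) : ℝ) *
                ((Nat.factorial (b + 1 - ℓ) : ℝ) / ((q : ℝ) + 1)) :=
              mul_le_mul_of_nonneg_left hIH (by positivity)
          _ = (Nat.factorial b : ℝ) / ((q : ℝ) + 1) := by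
              rw [mul_div_assoc', hfact]
      have hsum : ∑ ℓ ∈ Finset.Icc (q + 1) b,
          ((b.descFactorial (ℓ - 1) : ℝ) * (g q (b + 1 - ℓ) : ℝ))
            ≤ ((b - q : ℕ) : ℝ) * ((Nat.factorial b : ℝ) / ((q : ℝ) + 1)) := by
        have := Finset.sum_le_card_nsmul _ _ _ hterm
        rwa [Nat.card_Icc, nsmul_eq_mul, show b + 1 - (q + 1) = b - q from by omega] at this
      have hfinal : (g q (b + 1) : ℝ) ≤
          ((b - q : ℕ) : ℝ) * ((Nat.factorial b : ℝ) / ((q : ℝ) + 1)) + (Nat.factorial b : ℝ) :=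
        hcast.trans (by linarith [hsum])
      have hcastsub : ((b - q : ℕ) : ℝ) = (b : ℝ) - (q : ℝ) := by
        push_cast [Nat.cast_sub hqb]
        ring
      rw [hcastsub] at hfinal
      have heq : ((b : ℝ) - (q : ℝ)) * ((Nat.factorial b : ℝ) / ((q : ℝ) + 1))
          + (Nat.factorial b : ℝ) = (Nat.factorial (b + 1) : ℝ) / ((q : ℝ) + 1) := by
        rw [Nat.factorial_succ]
        push_cast
        field_simp
        ring
      rw [heq] at hfinal
      exact hfinal



end CardPermLongAux

/-- The number of permutations of `{1, …, m}` all of whose cycles have length strictly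
greater than `q` (the cycle length of a point `x` being the minimal period of `x`,
fixed points counting as cycles of length `1`) is at most `m!/(q+1)`. -/
theorem card_perm_all_cycles_long_le (m q : ℕ) (hm : 1 ≤ m) (hq : 1 ≤ q) :
    (Nat.card {σ : Equiv.Perm (Fin m) // ∀ x, q < Function.minimalPeriod σ x} : ℝ) ≤
      (Nat.factorial m : ℝ) / (q + 1) := by
  exact CardPermLongAux.g_le q m hm
end

section
/- Let N ≥ 2, q ≥ 1 and 1 ≤ ℓ ≤ ℓ' be integers with ℓ + ℓ' ≤ N. Let A be the set of permutations σ of {1, …, N} such that σ has no cycle of length at most q, and σ has two distinct cycles of lengths ℓ and ℓ' respectively (if ℓ = ℓ', this means at least two cycles of length ℓ). Then: if ℓ + ℓ' < N, the cardinality of A is at most N!/(q·ℓ·ℓ'); and if ℓ + ℓ' = N, the cardinality of A is at most N!/(ℓ·ℓ'). -/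
open Function Equiv Equiv.Perm

universe u

section Aux
variable {α : Type u}

lemma subtypePerm_iterate_coe (σ : Equiv.Perm α) {p : α → Prop} (h : ∀ x, p x ↔ p (σ x))
    (n : ℕ) (x : {x // p x}) : (((σ.subtypePerm (fun x => (h x).symm))^[n] x : {x // p x}) : α) = (⇑σ)^[n] (x : α) := by
  induction n with
  | zero => rfl
  | succ n ih => rw [Function.iterate_succ_apply', Function.iterate_succ_apply', ← ih]; rfl

lemma minimalPeriod_subtypePerm (σ : Equiv.Perm α) {p : α → Prop} (h : ∀ x, p x ↔ p (σ x))
    (x : {x // p x}) :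
    Function.minimalPeriod (σ.subtypePerm (fun x => (h x).symm)) x = Function.minimalPeriod σ (x : α) := by
  have key : ∀ n : ℕ, Function.IsPeriodicPt (σ.subtypePerm (fun x => (h x).symm)) n x ↔
      Function.IsPeriodicPt (⇑σ) n (x : α) := by
    intro n
    unfold Function.IsPeriodicPt Function.IsFixedPt
    rw [← subtypePerm_iterate_coe σ h n x, ← Subtype.ext_iff]
  apply Nat.dvd_antisymm
  · exact Function.IsPeriodicPt.minimalPeriod_dvd ((key _).mpr (Function.isPeriodicPt_minimalPeriod _ _))
  · exact Function.IsPeriodicPt.minimalPeriod_dvd ((key _).mp (Function.isPeriodicPt_minimalPeriod _ _))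

lemma card_fix_le [Fintype α] [DecidableEq α] (q : ℕ) (s : Set α) (P' : Equiv.Perm α → Prop)
    (hmap : ∀ σ, P' σ → ∀ x ∈ s, σ x ∈ s)
    (hdet : ∀ σ₁ σ₂, P' σ₁ → P' σ₂ → (∀ x, x ∉ s → σ₁ x = σ₂ x) → σ₁ = σ₂)
    (hgood : ∀ σ, P' σ → ∀ x, x ∉ s → q < Function.minimalPeriod σ x) :
    Nat.card {σ : Equiv.Perm α // P' σ} ≤
      Nat.card {τ : Equiv.Perm {x : α // x ∉ s} // ∀ y, q < Function.minimalPeriod τ y} := by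
  have hiff : ∀ (σ : Equiv.Perm α), P' σ → ∀ x, x ∉ s ↔ σ x ∉ s := by
    intro σ hσ x
    have hbij : Set.BijOn σ s s := by
      refine (Set.Finite.injOn_iff_bijOn_of_mapsTo (Set.toFinite s) ?_).mp ?_
      · exact fun x hx => hmap σ hσ x hx
      · exact fun a _ b _ hab => σ.injective hab
    constructor
    · intro hx hcon
      obtain ⟨y, hy, hxy⟩ := hbij.surjOn hcon
      exact hx (σ.injective hxy ▸ hy)
    · intro hx hcon
      exact hx (hmap σ hσ x hcon)
  refine Nat.card_le_card_of_injective
    (fun σp => ⟨σp.1.subtypePerm (fun x => (hiff σp.1 σp.2 x).symm), fun y => by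
      rw [minimalPeriod_subtypePerm (h := hiff σp.1 σp.2)]
      exact hgood σp.1 σp.2 y.1 y.2⟩) ?_
  intro σ₁ σ₂ hεq
  have h12 : ∀ x, x ∉ s → σ₁.1 x = σ₂.1 x := by
    intro x hx
    have := congrArg (fun τ => ((τ.1 : Equiv.Perm {x : α // x ∉ s}) ⟨x, hx⟩ : α)) hεq
    simpa [Equiv.Perm.subtypePerm_apply] using this
  exact Subtype.ext (hdet σ₁.1 σ₂.1 σ₁.2 σ₂.2 h12)

def chain [DecidableEq α] (a : α) {k : ℕ} (e : Fin k ↪ {x : α // x ≠ a}) : Fin (k + 1) → α :=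
  Fin.cases a (fun s => (e s : α))

def Ccond [DecidableEq α] (q : ℕ) (a : α) {k : ℕ} (e : Fin k ↪ {x : α // x ≠ a})
    (σ : Equiv.Perm α) : Prop :=
  q ≤ k ∧ (∀ t : Fin (k + 1), σ (chain a e t) = chain a e (t + 1)) ∧
    ∀ x, x ∉ Set.range (chain a e) → q < Function.minimalPeriod σ x

lemma chain_injective [DecidableEq α] (a : α) {k : ℕ} (e : Fin k ↪ {x : α // x ≠ a}) :
    Function.Injective (chain a e) := by
  intro t u h
  induction t using Fin.cases with
  | zero =>
    induction u using Fin.cases with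
    | zero => rfl
    | succ u => simp [chain] at h; exact absurd h.symm (e u).2
  | succ t =>
    induction u using Fin.cases with
    | zero => simp [chain] at h; exact absurd h (e t).2
    | succ u =>
      simp only [chain, Fin.cases_succ] at h
      exact congrArg Fin.succ (e.injective (Subtype.ext h))

lemma good_to_data [Fintype α] [DecidableEq α] (q : ℕ) (a : α)
    (σ : Equiv.Perm α) (hσ : ∀ x, q < Function.minimalPeriod σ x) :
    ∃ k : ℕ, k + 1 ≤ Fintype.card α ∧ ∃ e : Fin k ↪ {x : α // x ≠ a}, Ccond q a e σ := by
  set L := Function.minimalPeriod (⇑σ) a with hLdef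
  have hL : q < L := hσ a
  have hL1 : 1 ≤ L := by omega
  have hinjL : Function.Injective (fun t : Fin L => (⇑σ)^[(t : ℕ)] a) := by
    intro t u h
    exact Fin.ext (Function.iterate_injOn_Iio_minimalPeriod
      (Set.mem_Iio.mpr t.isLt) (Set.mem_Iio.mpr u.isLt) h)
  have hLm : L ≤ Fintype.card α := by
    simpa using Fintype.card_le_of_injective _ hinjL
  refine ⟨L - 1, by omega, ?_⟩
  have hne : ∀ t : ℕ, t + 1 < L → (⇑σ)^[t + 1] a ≠ a := by
    intro t ht h
    have : L ≤ t + 1 := Function.IsPeriodicPt.minimalPeriod_le (by omega) h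
    omega
  have hkL : L - 1 + 1 = L := by omega
  refine ⟨⟨fun t => ⟨(⇑σ)^[(t : ℕ) + 1] a, hne _ (by have := t.isLt; omega)⟩, ?_⟩, ?_⟩
  · intro t u h
    simp only [Subtype.mk.injEq] at h
    have := Function.iterate_injOn_Iio_minimalPeriod
      (Set.mem_Iio.mpr (show (t : ℕ) + 1 < L by have := t.isLt; omega))
      (Set.mem_Iio.mpr (show (u : ℕ) + 1 < L by have := u.isLt; omega)) h
    exact Fin.ext (by omega)
  · set e : Fin (L - 1) ↪ {x : α // x ≠ a} :=
      ⟨fun t => ⟨(⇑σ)^[(t : ℕ) + 1] a, hne _ (by have := t.isLt; omega)⟩, by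
        intro t u h
        simp only [Subtype.mk.injEq] at h
        have := Function.iterate_injOn_Iio_minimalPeriod
          (Set.mem_Iio.mpr (show (t : ℕ) + 1 < L by have := t.isLt; omega))
          (Set.mem_Iio.mpr (show (u : ℕ) + 1 < L by have := u.isLt; omega)) h
        exact Fin.ext (by omega)⟩ with hedef
    have chain_eq : ∀ t : Fin (L - 1 + 1), chain a e t = (⇑σ)^[(t : ℕ)] a := by
      intro t
      induction t using Fin.cases with
      | zero => simp [chain]
      | succ s => simp [chain, hedef]
    refine ⟨by omega, ?_, fun x _ => hσ x⟩
    intro t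
    rw [chain_eq, chain_eq, ← Function.iterate_succ_apply' (⇑σ)]
    rcases eq_or_ne t (Fin.last (L - 1)) with rfl | hlast
    · have h1 : (Fin.last (L - 1) + 1 : Fin (L - 1 + 1)) = 0 := by
        simp
      rw [h1]
      show (⇑σ)^[(Fin.last (L-1) : ℕ) + 1] a = (⇑σ)^[(0 : ℕ)] a
      simp only [Fin.val_last, Function.iterate_zero, id]
      have : (⇑σ)^[L] a = a := Function.isPeriodicPt_minimalPeriod (⇑σ) a
      rw [show L - 1 + 1 = L from hkL]
      exact this
    · congr 1
      rw [Fin.val_add_one]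
      simp [hlast]

lemma lemP (q : ℕ) (hq : 1 ≤ q) : ∀ m : ℕ, 1 ≤ m → ∀ (α : Type u) [Fintype α] [DecidableEq α],
    Fintype.card α = m →
    q * Nat.card {σ : Equiv.Perm α // ∀ x, q < Function.minimalPeriod σ x} ≤ m.factorial := by
  intro m
  induction m using Nat.strong_induction_on with
  | _ m IH =>
  intro hm α _ _ hcard
  classical
  obtain ⟨n, rfl⟩ : ∃ n, m = n + 1 := ⟨m - 1, by omega⟩
  obtain ⟨a⟩ : Nonempty α := Fintype.card_pos_iff.mp (by omega)
  have hβ : Fintype.card {x : α // x ≠ a} = n := by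
    have h1 : Fintype.card {x : α // ¬ x = a} = Fintype.card α - Fintype.card {x : α // x = a} :=
      Fintype.card_subtype_compl _
    rw [Fintype.card_subtype_eq] at h1
    simpa [hcard] using h1
  have hinj : Nat.card {σ : Equiv.Perm α // ∀ x, q < Function.minimalPeriod σ x} ≤
      Nat.card (Σ k : Fin (n + 1), Σ e : Fin (k : ℕ) ↪ {x : α // x ≠ a},
        {σ : Equiv.Perm α // Ccond q a e σ}) := by
    refine Nat.card_le_card_of_injective (fun σp =>
      ⟨⟨(good_to_data q a σp.1 σp.2).choose, by
          have := (good_to_data q a σp.1 σp.2).choose_spec.1; omega⟩,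
        (good_to_data q a σp.1 σp.2).choose_spec.2.choose,
        ⟨σp.1, (good_to_data q a σp.1 σp.2).choose_spec.2.choose_spec⟩⟩) ?_
    intro σ₁ σ₂ h
    exact Subtype.ext (congrArg (fun x : (Σ k : Fin (n + 1),
      Σ e : Fin (k : ℕ) ↪ {x : α // x ≠ a}, {σ : Equiv.Perm α // Ccond q a e σ}) => x.2.2.1) h)
  have hsum : Nat.card (Σ k : Fin (n + 1), Σ e : Fin (k : ℕ) ↪ {x : α // x ≠ a},
        {σ : Equiv.Perm α // Ccond q a e σ}) =
      ∑ k : Fin (n + 1), ∑ e : Fin (k : ℕ) ↪ {x : α // x ≠ a},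
        Nat.card {σ : Equiv.Perm α // Ccond q a e σ} := by
    rw [Nat.card_eq_fintype_card, Fintype.card_sigma]
    exact Finset.sum_congr rfl fun k _ => by
      rw [Fintype.card_sigma]
      exact Finset.sum_congr rfl fun e _ => (Nat.card_eq_fintype_card).symm
  have fib_le : ∀ (k : Fin (n + 1)) (e : Fin (k : ℕ) ↪ {x : α // x ≠ a}),
      Nat.card {σ : Equiv.Perm α // Ccond q a e σ} ≤
      Nat.card {τ : Equiv.Perm {x : α // x ∉ Set.range (chain a e)} //
        ∀ y, q < Function.minimalPeriod τ y} := by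
    intro k e
    refine card_fix_le q _ _ ?_ ?_ ?_
    · rintro σ hσ x ⟨t, rfl⟩
      exact ⟨t + 1, (hσ.2.1 t).symm⟩
    · intro σ₁ σ₂ h₁ h₂ h12
      ext x
      by_cases hx : x ∈ Set.range (chain a e)
      · obtain ⟨t, rfl⟩ := hx
        rw [h₁.2.1 t, h₂.2.1 t]
      · exact h12 x hx
    · exact fun σ hσ x hx => hσ.2.2 x hx
  have compl_card : ∀ (k : Fin (n + 1)) (e : Fin (k : ℕ) ↪ {x : α // x ≠ a}),
      Fintype.card {x : α // x ∉ Set.range (chain a e)} = n + 1 - ((k : ℕ) + 1) := by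
    intro k e
    have h1 : Fintype.card {x : α // ¬ x ∈ Set.range (chain a e)} =
        Fintype.card α - Fintype.card {x : α // x ∈ Set.range (chain a e)} :=
      Fintype.card_subtype_compl _
    have h2 : Fintype.card {x : α // x ∈ Set.range (chain a e)} = (k : ℕ) + 1 := by
      calc Fintype.card {x : α // x ∈ Set.range (chain a e)}
          = Fintype.card (Fin ((k : ℕ) + 1)) :=
            (Fintype.card_congr (Equiv.ofInjective _ (chain_injective a e))).symm
        _ = (k : ℕ) + 1 := Fintype.card_fin _
    rw [h2, hcard] at h1
    exact h1
  have key : ∀ k : Fin (n + 1),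
      q * ∑ e : Fin (k : ℕ) ↪ {x : α // x ≠ a}, Nat.card {σ : Equiv.Perm α // Ccond q a e σ} ≤
        if q ≤ (k : ℕ) then (if (k : ℕ) = n then q * n.factorial else n.factorial) else 0 := by
    intro k
    by_cases hqk : q ≤ (k : ℕ)
    · by_cases hkn : (k : ℕ) = n
      · have h1 : ∀ e : Fin (k : ℕ) ↪ {x : α // x ≠ a},
            Nat.card {σ : Equiv.Perm α // Ccond q a e σ} ≤ 1 := by
          intro e
          refine le_trans (fib_le k e) ?_
          refine le_trans (Nat.card_le_card_of_injective Subtype.val Subtype.val_injective) ?_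
          rw [Nat.card_eq_fintype_card, Fintype.card_perm, compl_card k e, hkn]
          simp
        rw [if_pos hqk, if_pos hkn]
        calc q * ∑ e : Fin (k : ℕ) ↪ {x : α // x ≠ a}, Nat.card {σ : Equiv.Perm α // Ccond q a e σ}
            ≤ q * ∑ _e : Fin (k : ℕ) ↪ {x : α // x ≠ a}, 1 :=
              Nat.mul_le_mul_left q (Finset.sum_le_sum fun e _ => h1 e)
          _ = q * Fintype.card (Fin (k : ℕ) ↪ {x : α // x ≠ a}) := by simp
          _ = q * n.factorial := by
              rw [Fintype.card_embedding_eq, hβ, Fintype.card_fin, hkn, Nat.descFactorial_self]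
      · have hklt : (k : ℕ) < n := by have := k.isLt; omega
        have h1 : ∀ e : Fin (k : ℕ) ↪ {x : α // x ≠ a},
            q * Nat.card {σ : Equiv.Perm α // Ccond q a e σ} ≤ (n - (k : ℕ)).factorial := by
          intro e
          refine le_trans (Nat.mul_le_mul_left q (fib_le k e)) ?_
          have := IH (n + 1 - ((k : ℕ) + 1)) (by omega) (by omega) _ (compl_card k e)
          rwa [show n + 1 - ((k : ℕ) + 1) = n - (k : ℕ) by omega] at this
        rw [if_pos hqk, if_neg hkn]
        calc q * ∑ e : Fin (k : ℕ) ↪ {x : α // x ≠ a}, Nat.card {σ : Equiv.Perm α // Ccond q a e σ}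
            = ∑ e : Fin (k : ℕ) ↪ {x : α // x ≠ a},
                q * Nat.card {σ : Equiv.Perm α // Ccond q a e σ} := Finset.mul_sum _ _ _
          _ ≤ ∑ _e : Fin (k : ℕ) ↪ {x : α // x ≠ a}, (n - (k : ℕ)).factorial :=
              Finset.sum_le_sum fun e _ => h1 e
          _ = Fintype.card (Fin (k : ℕ) ↪ {x : α // x ≠ a}) * (n - (k : ℕ)).factorial := by
              simp [mul_comm]
          _ = n.descFactorial (k : ℕ) * (n - (k : ℕ)).factorial := by
              rw [Fintype.card_embedding_eq, hβ, Fintype.card_fin]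
          _ = n.factorial := by
              rw [mul_comm, Nat.factorial_mul_descFactorial (le_of_lt hklt)]
    · have h0 : ∀ e : Fin (k : ℕ) ↪ {x : α // x ≠ a},
          Nat.card {σ : Equiv.Perm α // Ccond q a e σ} = 0 := by
        intro e
        haveI : IsEmpty {σ : Equiv.Perm α // Ccond q a e σ} := ⟨fun σp => hqk σp.2.1⟩
        exact Nat.card_of_isEmpty
      rw [if_neg hqk, Finset.sum_eq_zero fun e _ => h0 e, Nat.mul_zero]
  calc q * Nat.card {σ : Equiv.Perm α // ∀ x, q < Function.minimalPeriod σ x}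
      ≤ q * ∑ k : Fin (n + 1), ∑ e : Fin (k : ℕ) ↪ {x : α // x ≠ a},
          Nat.card {σ : Equiv.Perm α // Ccond q a e σ} := by
        rw [← hsum]; exact Nat.mul_le_mul_left q hinj
    _ = ∑ k : Fin (n + 1), q * ∑ e : Fin (k : ℕ) ↪ {x : α // x ≠ a},
          Nat.card {σ : Equiv.Perm α // Ccond q a e σ} := Finset.mul_sum _ _ _
    _ ≤ ∑ k : Fin (n + 1), (if q ≤ (k : ℕ) then
          (if (k : ℕ) = n then q * n.factorial else n.factorial) else 0) :=
        Finset.sum_le_sum fun k _ => key k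
    _ = ∑ k ∈ Finset.range (n + 1), (if q ≤ k then
          (if k = n then q * n.factorial else n.factorial) else 0) :=
        Fin.sum_univ_eq_sum_range
          (fun k => if q ≤ k then (if k = n then q * n.factorial else n.factorial) else 0) (n + 1)
    _ ≤ (n + 1).factorial := by
        rw [Finset.sum_range_succ]
        have hr : ∑ k ∈ Finset.range n, (if q ≤ k then
            (if k = n then q * n.factorial else n.factorial) else 0) =
            ∑ k ∈ Finset.range n, (if q ≤ k then n.factorial else 0) := by
          refine Finset.sum_congr rfl fun k hk => ?_
          have : k ≠ n := Nat.ne_of_lt (Finset.mem_range.mp hk)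
          simp [this]
        rw [hr]
        have hfil : ∑ k ∈ Finset.range n, (if q ≤ k then n.factorial else 0) =
            (Finset.filter (fun k => q ≤ k) (Finset.range n)).card * n.factorial := by
          rw [← Finset.sum_filter]
          simp [Finset.sum_const, Nat.smul_one_eq_cast]
        have hico : Finset.filter (fun k => q ≤ k) (Finset.range n) = Finset.Ico q n := by
          ext k
          simp [Finset.mem_Ico, Finset.mem_range, and_comm]
        rw [hfil, hico, Nat.card_Ico]
        by_cases hqn : q ≤ n
        · simp only [hqn, if_true]
          have : (n - q) * n.factorial + q * n.factorial = n * n.factorial := by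
            rw [← Nat.add_mul]
            congr 1
            omega
          rw [this, Nat.factorial_succ]
          exact Nat.mul_le_mul_right _ (by omega)
        · have h2 : n - q = 0 := by omega
          rw [if_neg hqn, h2]
          simp

lemma isCycle_minimalPeriod [Fintype α] [DecidableEq α] {c : Equiv.Perm α} (hc : c.IsCycle)
    {a : α} (ha : a ∈ c.support) :
    Function.minimalPeriod (⇑c) a = c.support.card := by
  have hca : c a ≠ a := Equiv.Perm.mem_support.mp ha
  rw [← hc.orderOf]
  apply Nat.dvd_antisymm
  · apply Function.IsPeriodicPt.minimalPeriod_dvd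
    show (⇑c)^[orderOf c] a = a
    rw [Equiv.Perm.iterate_eq_pow, pow_orderOf_eq_one]
    rfl
  · apply orderOf_dvd_of_pow_eq_one
    rw [hc.pow_eq_one_iff' hca]
    exact Function.isPeriodicPt_minimalPeriod (⇑c) a

lemma exists_two_cycles [Fintype α] [DecidableEq α] {σ : Equiv.Perm α} {ℓ ℓ' : ℕ}
    (h : ({ℓ, ℓ'} : Multiset ℕ) ≤ σ.cycleType) :
    ∃ c c' : Equiv.Perm α, c ∈ σ.cycleFactorsFinset ∧ c' ∈ σ.cycleFactorsFinset ∧ c ≠ c' ∧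
      c.support.card = ℓ ∧ c'.support.card = ℓ' := by
  have hm : ℓ ∈ σ.cycleType := Multiset.mem_of_le h (by simp)
  rw [Equiv.Perm.cycleType_def, Multiset.mem_map] at hm
  obtain ⟨c, hc, hcℓ⟩ := hm
  obtain ⟨rest, hrest⟩ := Multiset.exists_cons_of_mem hc
  have hle2 : ({ℓ'} : Multiset ℕ) ≤ rest.map (Finset.card ∘ Equiv.Perm.support) := by
    have h1 : ({ℓ, ℓ'} : Multiset ℕ) ≤ ℓ ::ₘ rest.map (Finset.card ∘ Equiv.Perm.support) := by
      have := h
      rwa [Equiv.Perm.cycleType_def, hrest, Multiset.map_cons, hcℓ] at this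
    rw [show ({ℓ, ℓ'} : Multiset ℕ) = ℓ ::ₘ {ℓ'} from rfl] at h1
    exact (Multiset.cons_le_cons_iff ℓ).mp h1
  have h2 : ℓ' ∈ rest.map (Finset.card ∘ Equiv.Perm.support) :=
    Multiset.mem_of_le hle2 (Multiset.mem_singleton_self _)
  rw [Multiset.mem_map] at h2
  obtain ⟨c', hc', hc'ℓ⟩ := h2
  have hnd := σ.cycleFactorsFinset.nodup
  rw [hrest] at hnd
  refine ⟨c, c', hc, ?_, ?_, hcℓ, hc'ℓ⟩
  · show c' ∈ σ.cycleFactorsFinset.1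
    rw [hrest]
    exact Multiset.mem_cons_of_mem hc'
  · intro hccc
    exact (Multiset.nodup_cons.mp hnd).1 (hccc ▸ hc')

lemma main_pkg [Fintype α] [DecidableEq α] [LinearOrder α] {ℓ ℓ' : ℕ}
    (hℓ : 1 ≤ ℓ) (hℓ' : 1 ≤ ℓ') (σ : Equiv.Perm α)
    (hσ2 : ({ℓ, ℓ'} : Multiset ℕ) ≤ σ.cycleType) :
    ∃ u v : ℕ → α,
      (∀ t, σ (u t) = u (t + 1)) ∧ (∀ t, σ (v t) = v (t + 1)) ∧
      (∀ t, u (t + ℓ) = u t) ∧ (∀ t, v (t + ℓ') = v t) ∧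
      (∀ s t, s < ℓ → t < ℓ → u s = u t → s = t) ∧
      (∀ s t, s < ℓ' → t < ℓ' → v s = v t → s = t) ∧
      (∀ s t, u s ≠ v t) := by
  obtain ⟨c, c', hc, hc', hne, hcℓ, hc'ℓ⟩ := exists_two_cycles hσ2
  obtain ⟨hcyc, hagree⟩ := Equiv.Perm.mem_cycleFactorsFinset_iff.mp hc
  obtain ⟨hcyc', hagree'⟩ := Equiv.Perm.mem_cycleFactorsFinset_iff.mp hc'
  have hdisj : _root_.Disjoint c.support c'.support :=
    Equiv.Perm.Disjoint.disjoint_support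
      (Equiv.Perm.cycleFactorsFinset_pairwise_disjoint σ hc hc' hne)
  obtain ⟨a, ha⟩ : c.support.Nonempty := Finset.card_pos.mp (by omega)
  obtain ⟨b, hb⟩ : c'.support.Nonempty := Finset.card_pos.mp (by omega)
  have hmina : Function.minimalPeriod (⇑c) a = ℓ := by rw [isCycle_minimalPeriod hcyc ha, hcℓ]
  have hminb : Function.minimalPeriod (⇑c') b = ℓ' := by rw [isCycle_minimalPeriod hcyc' hb, hc'ℓ]
  have hmema : ∀ t : ℕ, (⇑c)^[t] a ∈ c.support := by
    intro t
    rw [Equiv.Perm.iterate_eq_pow]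
    exact Equiv.Perm.pow_apply_mem_support.mpr ha
  have hmemb : ∀ t : ℕ, (⇑c')^[t] b ∈ c'.support := by
    intro t
    rw [Equiv.Perm.iterate_eq_pow]
    exact Equiv.Perm.pow_apply_mem_support.mpr hb
  refine ⟨fun t => (⇑c)^[t] a, fun t => (⇑c')^[t] b, ?_, ?_, ?_, ?_, ?_, ?_, ?_⟩
  · intro t
    rw [← hagree _ (hmema t), ← Function.iterate_succ_apply' (⇑c)]
  · intro t
    rw [← hagree' _ (hmemb t), ← Function.iterate_succ_apply' (⇑c')]
  · intro t
    show (⇑c)^[t + ℓ] a = (⇑c)^[t] a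
    rw [Function.iterate_add_apply]
    congr 1
    have := Function.isPeriodicPt_minimalPeriod (⇑c) a
    rw [hmina] at this
    exact this
  · intro t
    show (⇑c')^[t + ℓ'] b = (⇑c')^[t] b
    rw [Function.iterate_add_apply]
    congr 1
    have := Function.isPeriodicPt_minimalPeriod (⇑c') b
    rw [hminb] at this
    exact this
  · intro s t hs ht hst
    exact Function.iterate_injOn_Iio_minimalPeriod
      (Set.mem_Iio.mpr (hmina ▸ hs)) (Set.mem_Iio.mpr (hmina ▸ ht)) hst
  · intro s t hs ht hst
    exact Function.iterate_injOn_Iio_minimalPeriod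
      (Set.mem_Iio.mpr (hminb ▸ hs)) (Set.mem_Iio.mpr (hminb ▸ ht)) hst
  · intro s t hst
    dsimp only at hst
    exact Finset.disjoint_left.mp hdisj (hmema s) (hst ▸ hmemb t)

end Aux

lemma periodic_mod {γ : Type*} (f : ℕ → γ) (p : ℕ) (hper : ∀ t, f (t + p) = f t) (x : ℕ) :
    f x = f (x % p) := by
  conv_lhs => rw [← Nat.mod_add_div x p]
  generalize x / p = d
  induction d with
  | zero => simp
  | succ d ih => rw [Nat.mul_succ, ← Nat.add_assoc, hper, ih]

lemma periodic_inj_mod {γ : Type*} (f : ℕ → γ) (p : ℕ) (hp1 : 1 ≤ p)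
    (hper : ∀ t, f (t + p) = f t)
    (hinj : ∀ s t, s < p → t < p → f s = f t → s = t)
    (x y : ℕ) (hxy : f x = f y) : x % p = y % p := by
  rw [periodic_mod f p hper x, periodic_mod f p hper y] at hxy
  exact hinj _ _ (Nat.mod_lt _ (by omega)) (Nat.mod_lt _ (by omega)) hxy

def wrapf (ℓ ℓ' : ℕ) (hℓ : 1 ≤ ℓ) (hℓ' : 1 ≤ ℓ') (t : Fin (ℓ + ℓ')) : Fin (ℓ + ℓ') :=
  if (t : ℕ) + 1 = ℓ then ⟨0, by omega⟩
  else if h2 : (t : ℕ) + 1 = ℓ + ℓ' then ⟨ℓ, by omega⟩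
  else ⟨(t : ℕ) + 1, by have := t.isLt; omega⟩

def Qcond (N q ℓ ℓ' : ℕ) (hℓ : 1 ≤ ℓ) (hℓ' : 1 ≤ ℓ') (h : Fin (ℓ + ℓ') ↪ Fin N)
    (σ : Equiv.Perm (Fin N)) : Prop :=
  (∀ t, σ (h t) = h (wrapf ℓ ℓ' hℓ hℓ' t)) ∧
    ∀ x, x ∉ Set.range ⇑h → q < Function.minimalPeriod ⇑σ x

lemma build_emb {N q ℓ ℓ' : ℕ} (hℓ : 1 ≤ ℓ) (hℓ'1 : 1 ≤ ℓ') (σ : Equiv.Perm (Fin N))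
    (u v : ℕ → Fin N)
    (hu1 : ∀ t, σ (u t) = u (t + 1)) (hv1 : ∀ t, σ (v t) = v (t + 1))
    (hu2 : ∀ t, u (t + ℓ) = u t) (hv2 : ∀ t, v (t + ℓ') = v t)
    (hu3 : ∀ s t, s < ℓ → t < ℓ → u s = u t → s = t)
    (hv3 : ∀ s t, s < ℓ' → t < ℓ' → v s = v t → s = t)
    (huv : ∀ s t, u s ≠ v t)
    (hgood : ∀ x, q < Function.minimalPeriod ⇑σ x)
    (i : Fin ℓ) (j : Fin ℓ') :
    ∃ h : Fin (ℓ + ℓ') ↪ Fin N,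
      h ⟨0, by omega⟩ = u i ∧ h ⟨ℓ, by omega⟩ = v j ∧ Qcond N q ℓ ℓ' hℓ hℓ'1 h σ := by
  set hfun : Fin (ℓ + ℓ') → Fin N := fun t =>
    if (t : ℕ) < ℓ then u ((i : ℕ) + (t : ℕ)) else v ((j : ℕ) + ((t : ℕ) - ℓ)) with hfdef
  have hinj : Function.Injective hfun := by
    intro t s h
    rw [hfdef] at h
    dsimp only at h
    by_cases ht : (t : ℕ) < ℓ <;> by_cases hs : (s : ℕ) < ℓ
    · rw [if_pos ht, if_pos hs] at h
      have h2 := periodic_inj_mod u ℓ hℓ hu2 hu3 _ _ h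
      have h3 : (t : ℕ) ≡ (s : ℕ) [MOD ℓ] := Nat.ModEq.add_left_cancel' (i : ℕ) h2
      have h4 : (t : ℕ) = (s : ℕ) := by
        rwa [Nat.ModEq, Nat.mod_eq_of_lt ht, Nat.mod_eq_of_lt hs] at h3
      exact Fin.ext h4
    · rw [if_pos ht, if_neg hs] at h
      exact absurd h (huv _ _)
    · rw [if_neg ht, if_pos hs] at h
      exact absurd h.symm (huv _ _)
    · rw [if_neg ht, if_neg hs] at h
      have h2 := periodic_inj_mod v ℓ' hℓ'1 hv2 hv3 _ _ h
      have h3 : ((t : ℕ) - ℓ) ≡ ((s : ℕ) - ℓ) [MOD ℓ'] := Nat.ModEq.add_left_cancel' (j : ℕ) h2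
      have htl : (t : ℕ) - ℓ < ℓ' := by have := t.isLt; omega
      have hsl : (s : ℕ) - ℓ < ℓ' := by have := s.isLt; omega
      have h4 : (t : ℕ) - ℓ = (s : ℕ) - ℓ := by
        rwa [Nat.ModEq, Nat.mod_eq_of_lt htl, Nat.mod_eq_of_lt hsl] at h3
      exact Fin.ext (by omega)
  refine ⟨⟨hfun, hinj⟩, ?_, ?_, ⟨?_, ?_⟩⟩
  · show hfun ⟨0, by omega⟩ = u i
    rw [hfdef]
    dsimp only
    rw [if_pos (show (0 : ℕ) < ℓ by omega), Nat.add_zero]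
  · show hfun ⟨ℓ, by omega⟩ = v j
    rw [hfdef]
    dsimp only
    rw [if_neg (show ¬ (ℓ < ℓ) by omega), Nat.sub_self, Nat.add_zero]
  · intro t
    show σ (hfun t) = hfun (wrapf ℓ ℓ' hℓ hℓ'1 t)
    rw [hfdef]
    dsimp only
    by_cases ht : (t : ℕ) < ℓ
    · rw [if_pos ht, hu1]
      by_cases h1 : (t : ℕ) + 1 = ℓ
      · rw [wrapf, if_pos h1]
        simp only [Fin.val_mk]
        rw [if_pos (show (0 : ℕ) < ℓ by omega)]
        have e1 : (i : ℕ) + (t : ℕ) + 1 = (i : ℕ) + 0 + ℓ := by omega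
        rw [e1, hu2]
      · have h2 : ¬ ((t : ℕ) + 1 = ℓ + ℓ') := by omega
        rw [wrapf, if_neg h1, dif_neg h2]
        simp only [Fin.val_mk]
        rw [if_pos (show (t : ℕ) + 1 < ℓ by omega)]
        exact congrArg u (by omega)
    · rw [if_neg ht, hv1]
      have h1 : ¬ ((t : ℕ) + 1 = ℓ) := by omega
      by_cases h2 : (t : ℕ) + 1 = ℓ + ℓ'
      · rw [wrapf, if_neg h1, dif_pos h2]
        simp only [Fin.val_mk]
        rw [if_neg (show ¬ (ℓ : ℕ) < ℓ by omega)]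
        have e1 : (j : ℕ) + ((t : ℕ) - ℓ) + 1 = (j : ℕ) + (ℓ - ℓ) + ℓ' := by
          have := t.isLt; omega
        rw [e1, hv2]
      · rw [wrapf, if_neg h1, dif_neg h2]
        simp only [Fin.val_mk]
        rw [if_neg (show ¬ ((t : ℕ) + 1 < ℓ) by omega)]
        exact congrArg v (by omega)
  · intro x _
    exact hgood x
set_option maxHeartbeats 2000000 in
lemma main_count (N q ℓ ℓ' : ℕ) (hℓ : 1 ≤ ℓ) (hℓ'1 : 1 ≤ ℓ') :
    Nat.card {σ : Equiv.Perm (Fin N) //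
        (∀ x, q < Function.minimalPeriod σ x) ∧ ({ℓ, ℓ'} : Multiset ℕ) ≤ σ.cycleType}
      * (ℓ * ℓ')
    ≤ Nat.card (Σ h : Fin (ℓ + ℓ') ↪ Fin N,
        {σ : Equiv.Perm (Fin N) // Qcond N q ℓ ℓ' hℓ hℓ'1 h σ}) := by
  classical
  have hprod : Nat.card ({σ : Equiv.Perm (Fin N) //
      (∀ x, q < Function.minimalPeriod σ x) ∧ ({ℓ, ℓ'} : Multiset ℕ) ≤ σ.cycleType}
        × (Fin ℓ × Fin ℓ')) =
      Nat.card {σ : Equiv.Perm (Fin N) //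
        (∀ x, q < Function.minimalPeriod σ x) ∧ ({ℓ, ℓ'} : Multiset ℕ) ≤ σ.cycleType}
        * (ℓ * ℓ') := by
    simp [Nat.card_prod]
  rw [← hprod]
  have build : ∀ (σp : {σ : Equiv.Perm (Fin N) //
      (∀ x, q < Function.minimalPeriod σ x) ∧ ({ℓ, ℓ'} : Multiset ℕ) ≤ σ.cycleType})
      (i : Fin ℓ) (j : Fin ℓ'),
      ∃ h : Fin (ℓ + ℓ') ↪ Fin N,
        h ⟨0, by omega⟩ = (main_pkg hℓ hℓ'1 σp.1 σp.2.2).choose (i : ℕ) ∧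
        h ⟨ℓ, by omega⟩ = (main_pkg hℓ hℓ'1 σp.1 σp.2.2).choose_spec.choose (j : ℕ) ∧
        Qcond N q ℓ ℓ' hℓ hℓ'1 h σp.1 := by
    intro σp i j
    obtain ⟨h1, h2, h3, h4, h5, h6, h7⟩ :=
      (main_pkg hℓ hℓ'1 σp.1 σp.2.2).choose_spec.choose_spec
    exact build_emb hℓ hℓ'1 σp.1 _ _ h1 h2 h3 h4 h5 h6 h7 σp.2.1 i j
  refine Nat.card_le_card_of_injective
    (fun x => ⟨(build x.1 x.2.1 x.2.2).choose,
      ⟨x.1.1, (build x.1 x.2.1 x.2.2).choose_spec.2.2⟩⟩) ?_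
  rintro ⟨σp1, i1, j1⟩ ⟨σp2, i2, j2⟩ heq
  have hσ : σp1.1 = σp2.1 := congrArg (fun z : (Σ h : Fin (ℓ + ℓ') ↪ Fin N,
      {σ : Equiv.Perm (Fin N) // Qcond N q ℓ ℓ' hℓ hℓ'1 h σ}) => z.2.1) heq
  have hps : σp1 = σp2 := Subtype.ext hσ
  subst hps
  have hh : (build σp1 i1 j1).choose = (build σp1 i2 j2).choose := congrArg Sigma.fst heq
  obtain ⟨hA1, hB1, _⟩ := (build σp1 i1 j1).choose_spec
  obtain ⟨hA2, hB2, _⟩ := (build σp1 i2 j2).choose_spec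
  obtain ⟨_, _, _, _, h5, h6, _⟩ :=
    (main_pkg hℓ hℓ'1 σp1.1 σp1.2.2).choose_spec.choose_spec
  have hi : i1 = i2 := by
    have e0 : (build σp1 i1 j1).choose ⟨0, by omega⟩ = (build σp1 i2 j2).choose ⟨0, by omega⟩ := by
      rw [hh]
    rw [hA1, hA2] at e0
    exact Fin.ext (h5 _ _ i1.isLt i2.isLt e0)
  have hj : j1 = j2 := by
    have e0 : (build σp1 i1 j1).choose ⟨ℓ, by omega⟩ = (build σp1 i2 j2).choose ⟨ℓ, by omega⟩ := by
      rw [hh]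
    rw [hB1, hB2] at e0
    exact Fin.ext (h6 _ _ j1.isLt j2.isLt e0)
  rw [hi, hj]

lemma sigma_count (N q ℓ ℓ' : ℕ) (hq : 1 ≤ q) (hℓ : 1 ≤ ℓ) (hℓ'1 : 1 ≤ ℓ') (hsum : ℓ + ℓ' ≤ N) :
    (ℓ + ℓ' < N → q * Nat.card (Σ h : Fin (ℓ + ℓ') ↪ Fin N,
        {σ : Equiv.Perm (Fin N) // Qcond N q ℓ ℓ' hℓ hℓ'1 h σ}) ≤ N.factorial) ∧
    (ℓ + ℓ' = N → Nat.card (Σ h : Fin (ℓ + ℓ') ↪ Fin N,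
        {σ : Equiv.Perm (Fin N) // Qcond N q ℓ ℓ' hℓ hℓ'1 h σ}) ≤ N.factorial) := by
  classical
  have hsig : Nat.card (Σ h : Fin (ℓ + ℓ') ↪ Fin N,
      {σ : Equiv.Perm (Fin N) // Qcond N q ℓ ℓ' hℓ hℓ'1 h σ}) =
      ∑ h : Fin (ℓ + ℓ') ↪ Fin N,
        Nat.card {σ : Equiv.Perm (Fin N) // Qcond N q ℓ ℓ' hℓ hℓ'1 h σ} := by
    rw [Nat.card_eq_fintype_card, Fintype.card_sigma]
    exact Finset.sum_congr rfl fun h _ => (Nat.card_eq_fintype_card).symm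
  have fib_le : ∀ h : Fin (ℓ + ℓ') ↪ Fin N,
      Nat.card {σ : Equiv.Perm (Fin N) // Qcond N q ℓ ℓ' hℓ hℓ'1 h σ} ≤
      Nat.card {τ : Equiv.Perm {x : Fin N // x ∉ Set.range ⇑h} //
        ∀ y, q < Function.minimalPeriod τ y} := by
    intro h
    refine card_fix_le q _ _ ?_ ?_ ?_
    · rintro σ hσ x ⟨t, rfl⟩
      exact ⟨_, (hσ.1 t).symm⟩
    · intro σ₁ σ₂ h₁ h₂ h12
      apply Equiv.ext
      intro x
      by_cases hx : x ∈ Set.range ⇑h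
      · obtain ⟨t, rfl⟩ := hx
        rw [h₁.1 t, h₂.1 t]
      · exact h12 x hx
    · exact fun σ hσ x hx => hσ.2 x hx
  have compl_card : ∀ h : Fin (ℓ + ℓ') ↪ Fin N,
      Fintype.card {x : Fin N // x ∉ Set.range ⇑h} = N - (ℓ + ℓ') := by
    intro h
    have h1 : Fintype.card {x : Fin N // ¬ x ∈ Set.range ⇑h} =
        Fintype.card (Fin N) - Fintype.card {x : Fin N // x ∈ Set.range ⇑h} :=
      Fintype.card_subtype_compl _
    have h2 : Fintype.card {x : Fin N // x ∈ Set.range ⇑h} = ℓ + ℓ' := by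
      calc Fintype.card {x : Fin N // x ∈ Set.range ⇑h}
          = Fintype.card (Fin (ℓ + ℓ')) :=
            (Fintype.card_congr (Equiv.ofInjective _ h.injective)).symm
        _ = ℓ + ℓ' := Fintype.card_fin _
    rw [h2, Fintype.card_fin] at h1
    exact h1
  have embcard : Fintype.card (Fin (ℓ + ℓ') ↪ Fin N) = N.descFactorial (ℓ + ℓ') := by
    rw [Fintype.card_embedding_eq, Fintype.card_fin, Fintype.card_fin]
  constructor
  · intro hlt
    calc q * Nat.card (Σ h : Fin (ℓ + ℓ') ↪ Fin N,
          {σ : Equiv.Perm (Fin N) // Qcond N q ℓ ℓ' hℓ hℓ'1 h σ})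
        = ∑ h : Fin (ℓ + ℓ') ↪ Fin N,
            q * Nat.card {σ : Equiv.Perm (Fin N) // Qcond N q ℓ ℓ' hℓ hℓ'1 h σ} := by
          rw [hsig, Finset.mul_sum]
      _ ≤ ∑ _h : Fin (ℓ + ℓ') ↪ Fin N, (N - (ℓ + ℓ')).factorial := by
          refine Finset.sum_le_sum fun h _ => ?_
          refine le_trans (Nat.mul_le_mul_left q (fib_le h)) ?_
          exact lemP q hq (N - (ℓ + ℓ')) (by omega) _ (compl_card h)
      _ = Fintype.card (Fin (ℓ + ℓ') ↪ Fin N) * (N - (ℓ + ℓ')).factorial := by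
          simp [mul_comm]
      _ = N.descFactorial (ℓ + ℓ') * (N - (ℓ + ℓ')).factorial := by rw [embcard]
      _ = N.factorial := by rw [mul_comm, Nat.factorial_mul_descFactorial hsum]
  · intro heqN
    calc Nat.card (Σ h : Fin (ℓ + ℓ') ↪ Fin N,
          {σ : Equiv.Perm (Fin N) // Qcond N q ℓ ℓ' hℓ hℓ'1 h σ})
        = ∑ h : Fin (ℓ + ℓ') ↪ Fin N,
            Nat.card {σ : Equiv.Perm (Fin N) // Qcond N q ℓ ℓ' hℓ hℓ'1 h σ} := hsig
      _ ≤ ∑ _h : Fin (ℓ + ℓ') ↪ Fin N, 1 := by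
          refine Finset.sum_le_sum fun h _ => ?_
          refine le_trans (fib_le h) ?_
          refine le_trans (Nat.card_le_card_of_injective Subtype.val Subtype.val_injective) ?_
          rw [Nat.card_eq_fintype_card, Fintype.card_perm, compl_card h, heqN]
          simp
      _ = Fintype.card (Fin (ℓ + ℓ') ↪ Fin N) := by simp
      _ = N.factorial := by rw [embcard, heqN, Nat.descFactorial_self]

/-- Counting permutations with two prescribed long cycles and no short cycle.
For `N ≥ 2`, `q ≥ 1`, `1 ≤ ℓ ≤ ℓ'` with `ℓ + ℓ' ≤ N`, let `A` be the set of permutations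
of `{1,…,N}` with no cycle of length at most `q` (the cycle length of a point being its
minimal period, fixed points counting as cycles of length `1`) having two distinct cycles
of lengths `ℓ` and `ℓ'` (encoded as `{ℓ, ℓ'} ≤ cycleType σ` as multisets; if `ℓ = ℓ'`,
this means at least two cycles of length `ℓ`). Then `#A ≤ N!/(q·ℓ·ℓ')` if `ℓ + ℓ' < N`,
and `#A ≤ N!/(ℓ·ℓ')` if `ℓ + ℓ' = N`. -/
theorem card_perm_two_cycles_no_short_cycle_le (N q ℓ ℓ' : ℕ)
    (hN : 2 ≤ N) (hq : 1 ≤ q) (hℓ : 1 ≤ ℓ) (hℓℓ' : ℓ ≤ ℓ') (hsum : ℓ + ℓ' ≤ N) :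
    (ℓ + ℓ' < N →
      (Nat.card {σ : Equiv.Perm (Fin N) //
          (∀ x, q < Function.minimalPeriod σ x) ∧
            ({ℓ, ℓ'} : Multiset ℕ) ≤ Equiv.Perm.cycleType σ} : ℝ) ≤
        (Nat.factorial N : ℝ) / (q * ℓ * ℓ')) ∧
    (ℓ + ℓ' = N →
      (Nat.card {σ : Equiv.Perm (Fin N) //
          (∀ x, q < Function.minimalPeriod σ x) ∧
            ({ℓ, ℓ'} : Multiset ℕ) ≤ Equiv.Perm.cycleType σ} : ℝ) ≤
        (Nat.factorial N : ℝ) / (ℓ * ℓ')) := by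
  have hℓ'1 : 1 ≤ ℓ' := le_trans hℓ hℓℓ'
  have hmain := main_count N q ℓ ℓ' hℓ hℓ'1
  have hsig := sigma_count N q ℓ ℓ' hq hℓ hℓ'1 hsum
  constructor
  · intro hlt
    have h1 : q * (Nat.card {σ : Equiv.Perm (Fin N) //
        (∀ x, q < Function.minimalPeriod σ x) ∧
          ({ℓ, ℓ'} : Multiset ℕ) ≤ Equiv.Perm.cycleType σ} * (ℓ * ℓ')) ≤ N.factorial :=
      le_trans (Nat.mul_le_mul_left q hmain) (hsig.1 hlt)
    have hpos : (0 : ℝ) < (q : ℝ) * ℓ * ℓ' := by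
      have : (0 : ℕ) < q * ℓ * ℓ' := Nat.mul_pos (Nat.mul_pos hq hℓ) hℓ'1
      exact_mod_cast this
    rw [le_div_iff₀ hpos]
    calc (Nat.card {σ : Equiv.Perm (Fin N) //
          (∀ x, q < Function.minimalPeriod σ x) ∧
            ({ℓ, ℓ'} : Multiset ℕ) ≤ Equiv.Perm.cycleType σ} : ℝ) * ((q : ℝ) * ℓ * ℓ')
        = ((q * (Nat.card {σ : Equiv.Perm (Fin N) //
            (∀ x, q < Function.minimalPeriod σ x) ∧
              ({ℓ, ℓ'} : Multiset ℕ) ≤ Equiv.Perm.cycleType σ} * (ℓ * ℓ')) : ℕ) : ℝ) := by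
          push_cast
          ring
      _ ≤ ((N.factorial : ℕ) : ℝ) := by exact_mod_cast h1
  · intro heqN
    have h1 : Nat.card {σ : Equiv.Perm (Fin N) //
        (∀ x, q < Function.minimalPeriod σ x) ∧
          ({ℓ, ℓ'} : Multiset ℕ) ≤ Equiv.Perm.cycleType σ} * (ℓ * ℓ') ≤ N.factorial :=
      le_trans hmain (hsig.2 heqN)
    have hpos : (0 : ℝ) < (ℓ : ℝ) * ℓ' := by
      have : (0 : ℕ) < ℓ * ℓ' := Nat.mul_pos hℓ hℓ'1
      exact_mod_cast this
    rw [le_div_iff₀ hpos]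
    calc (Nat.card {σ : Equiv.Perm (Fin N) //
          (∀ x, q < Function.minimalPeriod σ x) ∧
            ({ℓ, ℓ'} : Multiset ℕ) ≤ Equiv.Perm.cycleType σ} : ℝ) * ((ℓ : ℝ) * ℓ')
        = ((Nat.card {σ : Equiv.Perm (Fin N) //
            (∀ x, q < Function.minimalPeriod σ x) ∧
              ({ℓ, ℓ'} : Multiset ℕ) ≤ Equiv.Perm.cycleType σ} * (ℓ * ℓ') : ℕ) : ℝ) := by
          push_cast
          ring
      _ ≤ ((N.factorial : ℕ) : ℝ) := by exact_mod_cast h1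
end

section
/- There exists a constant C > 0 such that for all integers q ≥ 1 and s ≥ C·q, the number of permutations of {1, …, s} all of whose cycles have length at most q is at most s! · (2q/s)^{s/(3q)}. -/
open Equiv Function Finset

namespace CPACS

variable {α : Type*} {β : Type*}

lemma minPd_eq_of_iterate_eq {f g : α → α} {x : α}
    (h : ∀ k, f^[k] x = g^[k] x) : minimalPeriod f x = minimalPeriod g x := by
  have hpp : ∀ n, IsPeriodicPt f n x ↔ IsPeriodicPt g n x := by
    intro n
    unfold IsPeriodicPt IsFixedPt
    rw [h n]
  have hper : x ∈ periodicPts f ↔ x ∈ periodicPts g := by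
    rw [mem_periodicPts, mem_periodicPts]
    exact exists_congr fun n => and_congr_right fun _ => hpp n
  by_cases hx : x ∈ periodicPts f
  · have hx' := hper.1 hx
    exact le_antisymm
      (IsPeriodicPt.minimalPeriod_le (minimalPeriod_pos_of_mem_periodicPts hx')
        ((hpp _).2 (isPeriodicPt_minimalPeriod g x)))
      (IsPeriodicPt.minimalPeriod_le (minimalPeriod_pos_of_mem_periodicPts hx)
        ((hpp _).1 (isPeriodicPt_minimalPeriod f x)))
  · rw [minimalPeriod_eq_zero_of_notMem_periodicPts hx,
      minimalPeriod_eq_zero_of_notMem_periodicPts (fun h' => hx (hper.2 h'))]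

lemma minPd_map {f : α → α} {g : β → β} {h : α → β}
    (hinj : Injective h) (hsc : ∀ y, h (f y) = g (h y)) (x : α) :
    minimalPeriod g (h x) = minimalPeriod f x := by
  have hit : ∀ n, g^[n] (h x) = h (f^[n] x) := fun n =>
    ((Semiconj.iterate_right hsc n) x).symm
  have hpp : ∀ n, IsPeriodicPt g n (h x) ↔ IsPeriodicPt f n x := by
    intro n
    unfold IsPeriodicPt IsFixedPt
    rw [hit n, hinj.eq_iff]
  have hper : h x ∈ periodicPts g ↔ x ∈ periodicPts f := by
    rw [mem_periodicPts, mem_periodicPts]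
    exact exists_congr fun n => and_congr_right fun _ => hpp n
  by_cases hx : x ∈ periodicPts f
  · have hx' := hper.2 hx
    exact le_antisymm
      (IsPeriodicPt.minimalPeriod_le (minimalPeriod_pos_of_mem_periodicPts hx)
        ((hpp _).2 (isPeriodicPt_minimalPeriod f x)))
      (IsPeriodicPt.minimalPeriod_le (minimalPeriod_pos_of_mem_periodicPts hx')
        ((hpp _).1 (isPeriodicPt_minimalPeriod g (h x))))
  · rw [minimalPeriod_eq_zero_of_notMem_periodicPts hx,
      minimalPeriod_eq_zero_of_notMem_periodicPts (fun h' => hx (hper.1 h'))]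

lemma perm_mem_periodicPts [Fintype α] (σ : Perm α) (x : α) : x ∈ periodicPts ⇑σ := by
  classical
  refine mem_periodicPts.2 ⟨orderOf σ, orderOf_pos σ, ?_⟩
  show σ^[orderOf σ] x = x
  rw [Equiv.Perm.iterate_eq_pow, pow_orderOf_eq_one]
  rfl

lemma perm_minPd_pos [Fintype α] (σ : Perm α) (x : α) : 0 < minimalPeriod ⇑σ x :=
  minimalPeriod_pos_of_mem_periodicPts (perm_mem_periodicPts σ x)

lemma sameCycle_iff_exists_iterate [Fintype α] (σ : Perm α) (a x : α) :
    σ.SameCycle a x ↔ ∃ i, i < minimalPeriod ⇑σ a ∧ σ^[i] a = x := by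
  constructor
  · intro h
    obtain ⟨i, _, hix⟩ := h.exists_pow_eq'
    refine ⟨i % minimalPeriod ⇑σ a, Nat.mod_lt _ (perm_minPd_pos σ a), ?_⟩
    rw [iterate_mod_minimalPeriod_eq, Equiv.Perm.iterate_eq_pow]
    exact hix
  · rintro ⟨i, _, rfl⟩
    exact ⟨(i : ℤ), by rw [zpow_natCast, ← Equiv.Perm.iterate_eq_pow]⟩


noncomputable def g (q n : ℕ) : ℕ :=
  Nat.card {σ : Equiv.Perm (Fin n) // ∀ x, Function.minimalPeriod σ x ≤ q}

lemma gcard {β : Type*} [Fintype β] (q : ℕ) :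
    Nat.card {σ : Perm β // ∀ x, minimalPeriod ⇑σ x ≤ q} = g q (Fintype.card β) := by
  classical
  let e := Fintype.equivFin β
  have key : ∀ (σ : Perm β) (y : β),
      minimalPeriod ⇑(e.permCongr σ) (e y) = minimalPeriod ⇑σ y := fun σ y =>
    minPd_map e.injective (fun z => by simp) y
  apply Nat.card_congr
  refine Equiv.subtypeEquiv e.permCongr fun σ => ⟨fun h y => ?_, fun h x => ?_⟩
  · rw [← e.apply_symm_apply y, key]
    exact h _
  · rw [← key]
    exact h _

lemma g_le_factorial (q n : ℕ) : g q n ≤ n.factorial := by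
  have h2 : Nat.card (Perm (Fin n)) = n.factorial := by
    simp [Nat.card_eq_fintype_card, Fintype.card_perm, Fintype.card_fin]
  calc g q n ≤ Nat.card (Perm (Fin n)) :=
        Nat.card_le_card_of_injective _ Subtype.coe_injective
    _ = n.factorial := h2

lemma nat_card_sigma {ι : Type*} [Fintype ι] (f : ι → Type*) [∀ i, Finite (f i)] :
    Nat.card (Σ i, f i) = ∑ i, Nat.card (f i) := by
  classical
  haveI : ∀ i, Fintype (f i) := fun i => Fintype.ofFinite _
  simp [Nat.card_eq_fintype_card]

lemma card_fixing (q : ℕ) (hq : 1 ≤ q) [Fintype α] [DecidableEq α] (S : Finset α) :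
    Nat.card {r : Perm α // (∀ x ∈ S, r x = x) ∧ ∀ x, minimalPeriod ⇑r x ≤ q}
      = g q (Fintype.card α - S.card) := by
  classical
  have hcard : Fintype.card {x : α // x ∉ S} = Fintype.card α - S.card := by
    rw [Fintype.card_subtype_compl, Fintype.card_coe]
  rw [← hcard, ← gcard]
  have HP : ∀ r : Perm α, (∀ y ∈ S, r y = y) → ∀ x, x ∉ S ↔ r x ∉ S := by
    intro r hfix x
    constructor
    · intro hx hrx
      have h2 := r.injective (hfix _ hrx)
      exact hx (h2 ▸ hrx)
    · intro hrx hx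
      exact hrx (by rw [hfix x hx]; exact hx)
  apply Nat.card_congr
  refine Equiv.symm ⟨fun r' => ⟨Equiv.Perm.ofSubtype r'.1, fun x hx =>
      Equiv.Perm.ofSubtype_apply_of_not_mem r'.1 (not_not_intro hx), fun x => ?_⟩,
    fun r => ?_, fun r' => ?_, fun r => ?_⟩
  · by_cases hx : x ∉ S
    · rw [show x = ((⟨x, hx⟩ : {x : α // x ∉ S}) : α) from rfl,
        minPd_map Subtype.coe_injective
          (fun z => (Equiv.Perm.ofSubtype_apply_coe r'.1 z).symm) ⟨x, hx⟩]
      exact r'.2 _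
    · have hfx : IsFixedPt ⇑(Equiv.Perm.ofSubtype r'.1) x :=
        Equiv.Perm.ofSubtype_apply_of_not_mem r'.1 hx
      exact (minimalPeriod_eq_one_iff_isFixedPt.mpr hfx).le.trans hq
  · -- invFun
    have hp : ∀ x, r.1 x ∉ S ↔ x ∉ S := fun x => (HP r.1 r.2.1 x).symm
    refine ⟨r.1.subtypePerm hp, fun y => ?_⟩
    have key : minimalPeriod (⇑(r.1)) (y : α) = minimalPeriod (⇑(r.1.subtypePerm hp)) y :=
      minPd_map (f := ⇑(r.1.subtypePerm hp)) (g := ⇑(r.1))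
        (h := (Subtype.val : {x : α // x ∉ S} → α)) Subtype.coe_injective
        (fun z => rfl) y
    rw [← key]
    exact r.2.2 _
  · -- left_inv
    exact Subtype.ext (Equiv.Perm.subtypePerm_ofSubtype r'.1)
  · -- right_inv
    refine Subtype.ext (Equiv.Perm.ofSubtype_subtypePerm (fun x => (HP r.1 r.2.1 x).symm) fun x hx => ?_)
    by_contra hxS
    exact hx (r.2.1 x hxS)


section Step

variable [Fintype α] [DecidableEq α]

/-- `σ` with the cycle of `a` removed. -/
def theR (σ : Perm α) (a : α) : Perm α := σ * (σ.cycleOf a)⁻¹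

lemma theR_apply_of_sameCycle (σ : Perm α) (a x : α) (hx : σ.SameCycle a x) :
    theR σ a x = x := by
  rw [theR, Equiv.Perm.mul_apply, Equiv.Perm.cycleOf_inv, Equiv.Perm.cycleOf_apply,
    if_pos (Equiv.Perm.sameCycle_inv.2 hx), Equiv.Perm.inv_def, Equiv.apply_symm_apply]

lemma theR_apply_of_not_sameCycle (σ : Perm α) (a x : α) (hx : ¬ σ.SameCycle a x) :
    theR σ a x = σ x := by
  rw [theR, Equiv.Perm.mul_apply, Equiv.Perm.cycleOf_inv, Equiv.Perm.cycleOf_apply,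
    if_neg (fun h => hx (Equiv.Perm.sameCycle_inv.1 h))]

lemma sameCycle_iterate (σ : Perm α) (x : α) (k : ℕ) : σ.SameCycle x (σ^[k] x) :=
  ⟨(k : ℤ), by rw [zpow_natCast, ← Equiv.Perm.iterate_eq_pow]⟩

lemma theR_iterate (σ : Perm α) (a x : α) (hx : ¬ σ.SameCycle a x) (k : ℕ) :
    (theR σ a)^[k] x = σ^[k] x := by
  induction k with
  | zero => rfl
  | succ k ih =>
    rw [iterate_succ_apply', iterate_succ_apply', ih]
    exact theR_apply_of_not_sameCycle σ a _
      (fun h => hx (h.trans (sameCycle_iterate σ x k).symm))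

lemma theR_prop (σ : Perm α) (a : α) {q : ℕ} (hq : 1 ≤ q)
    (hσ : ∀ x, minimalPeriod ⇑σ x ≤ q) (x : α) : minimalPeriod ⇑(theR σ a) x ≤ q := by
  by_cases hx : σ.SameCycle a x
  · have hfx : IsFixedPt ⇑(theR σ a) x := theR_apply_of_sameCycle σ a x hx
    exact (minimalPeriod_eq_one_iff_isFixedPt.mpr hfx).le.trans hq
  · rw [minPd_eq_of_iterate_eq (theR_iterate σ a x hx)]
    exact hσ x

lemma step (q n : ℕ) (hq : 1 ≤ q) (hn : 0 < n) :
    g q n ≤ ∑ ℓ ∈ Finset.range q, (n - 1).descFactorial ℓ * g q (n - 1 - ℓ) := by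
  classical
  set a : Fin n := ⟨0, hn⟩ with ha
  set T := (Σ ℓ : Fin q, Σ _e : (Fin (ℓ : ℕ) ↪ {x : Fin n // x ≠ a}),
    {r : Perm (Fin n) //
      (∀ x ∈ insert a (Finset.univ.image fun i => ((_e i : {x : Fin n // x ≠ a}) : Fin n)),
        r x = x) ∧ ∀ x, minimalPeriod ⇑r x ≤ q}) with hT
  -- the injection
  have hinj : ∃ Φ : {σ : Perm (Fin n) // ∀ x, minimalPeriod ⇑σ x ≤ q} → T, Injective Φ := by
    have build : ∀ σ : {σ : Perm (Fin n) // ∀ x, minimalPeriod ⇑σ x ≤ q},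
        (minimalPeriod ⇑σ.1 a - 1 < q) ∧
        (∀ i : ℕ, i < minimalPeriod ⇑σ.1 a - 1 → σ.1^[i+1] a ≠ a) := by
      intro σ
      have hm0 := perm_minPd_pos σ.1 a
      have hmq := σ.2 a
      refine ⟨by omega, fun i hi h => ?_⟩
      have := iterate_injOn_Iio_minimalPeriod (f := ⇑σ.1) (x := a)
        (Set.mem_Iio.2 (by omega : i + 1 < minimalPeriod ⇑σ.1 a))
        (Set.mem_Iio.2 hm0) (by simpa using h)
      omega
    have einj : ∀ (σ : {σ : Perm (Fin n) // ∀ x, minimalPeriod ⇑σ x ≤ q}),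
        ∀ i j : Fin (minimalPeriod ⇑σ.1 a - 1), σ.1^[(i:ℕ)+1] a = σ.1^[(j:ℕ)+1] a → i = j := by
      intro σ i j h
      have hm0 := perm_minPd_pos σ.1 a
      have := iterate_injOn_Iio_minimalPeriod (f := ⇑σ.1) (x := a)
        (Set.mem_Iio.2 (by omega : (i:ℕ) + 1 < minimalPeriod ⇑σ.1 a))
        (Set.mem_Iio.2 (by omega : (j:ℕ) + 1 < minimalPeriod ⇑σ.1 a)) h
      exact Fin.ext (by omega)
    refine ⟨fun σ => ⟨⟨minimalPeriod ⇑σ.1 a - 1, (build σ).1⟩,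
      ⟨⟨fun i => ⟨σ.1^[(i:ℕ)+1] a, (build σ).2 i.1 i.2⟩,
        fun i j hij => einj σ i j (congrArg Subtype.val hij)⟩,
      ⟨theR σ.1 a, by
        constructor
        · intro x hx
          rcases Finset.mem_insert.1 hx with rfl | hx
          · exact theR_apply_of_sameCycle σ.1 a a (Equiv.Perm.SameCycle.refl σ.1 a)
          · obtain ⟨i, -, rfl⟩ := Finset.mem_image.1 hx
            exact theR_apply_of_sameCycle σ.1 a _ (sameCycle_iterate σ.1 a ((i:ℕ)+1))
        · exact fun x => theR_prop σ.1 a hq σ.2 x⟩⟩⟩, ?_⟩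
    intro σ τ h
    have hmσ := perm_minPd_pos σ.1 a
    have hmτ := perm_minPd_pos τ.1 a
    have h1 : minimalPeriod ⇑σ.1 a - 1 = minimalPeriod ⇑τ.1 a - 1 := by
      have := congrArg (fun t : T => (t.1 : ℕ)) h
      simpa using this
    have hm : minimalPeriod ⇑σ.1 a = minimalPeriod ⇑τ.1 a := by omega
    have h3 : theR σ.1 a = theR τ.1 a := congrArg (fun t : T => t.2.2.1) h
    have h2 : ∀ i : ℕ, i < minimalPeriod ⇑σ.1 a - 1 → σ.1^[i+1] a = τ.1^[i+1] a := by
      intro i hi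
      have hcg := congrArg
        (fun t : T => if hlt : i < (t.1 : ℕ) then (t.2.1 ⟨i, hlt⟩ : Fin n) else a) h
      dsimp only at hcg
      rwa [dif_pos hi, dif_pos (h1 ▸ hi)] at hcg
    have hiter : ∀ i, i ≤ minimalPeriod ⇑σ.1 a → σ.1^[i] a = τ.1^[i] a := by
      intro i hi
      rcases Nat.lt_or_ge i (minimalPeriod ⇑σ.1 a) with hlt | hge
      · match i with
        | 0 => rfl
        | (j+1) => exact h2 j (by omega)
      · have hieq : i = minimalPeriod ⇑σ.1 a := by omega
        rw [hieq, iterate_minimalPeriod, hm, iterate_minimalPeriod]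
    refine Subtype.ext (Equiv.ext fun x => ?_)
    by_cases hx : σ.1.SameCycle a x
    · obtain ⟨i, him, rfl⟩ := (sameCycle_iff_exists_iterate σ.1 a x).1 hx
      calc σ.1 (σ.1^[i] a) = σ.1^[i+1] a := (iterate_succ_apply' σ.1 i a).symm
        _ = τ.1^[i+1] a := hiter (i+1) (by omega)
        _ = τ.1 (τ.1^[i] a) := iterate_succ_apply' τ.1 i a
        _ = τ.1 (σ.1^[i] a) := by rw [hiter i (by omega)]
    · have hx' : ¬ τ.1.SameCycle a x := by
        intro hcon
        obtain ⟨i, him, hieq⟩ := (sameCycle_iff_exists_iterate τ.1 a x).1 hcon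
        refine hx ?_
        rw [← hieq, ← hiter i (by omega)]
        exact sameCycle_iterate σ.1 a i
      calc σ.1 x = theR σ.1 a x := (theR_apply_of_not_sameCycle σ.1 a x hx).symm
        _ = theR τ.1 a x := by rw [h3]
        _ = τ.1 x := theR_apply_of_not_sameCycle τ.1 a x hx'
  obtain ⟨Φ, hΦ⟩ := hinj
  -- counting
  have hsub : Fintype.card {x : Fin n // x ≠ a} = n - 1 := by
    have h := Fintype.card_subtype_compl (fun x : Fin n => x = a)
    rw [Fintype.card_subtype_eq, Fintype.card_fin] at h
    calc Fintype.card {x : Fin n // x ≠ a}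
        = Fintype.card {x : Fin n // ¬ x = a} := Fintype.card_congr (Equiv.refl _)
      _ = n - 1 := h
  have hcount : Nat.card T = ∑ ℓ ∈ Finset.range q, (n - 1).descFactorial ℓ * g q (n - 1 - ℓ) := by
    rw [hT, nat_card_sigma, ← Fin.sum_univ_eq_sum_range
      (fun ℓ => (n - 1).descFactorial ℓ * g q (n - 1 - ℓ)) q]
    refine Finset.sum_congr rfl fun ℓ _ => ?_
    rw [nat_card_sigma]
    have hone : ∀ e : Fin (ℓ : ℕ) ↪ {x : Fin n // x ≠ a},
        Nat.card {r : Perm (Fin n) //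
          (∀ x ∈ insert a (Finset.univ.image fun i => ((e i : {x : Fin n // x ≠ a}) : Fin n)),
            r x = x) ∧ ∀ x, minimalPeriod ⇑r x ≤ q} = g q (n - 1 - ℓ) := by
      intro e
      rw [card_fixing q hq]
      have hanotmem : a ∉ Finset.univ.image
          (fun i => ((e i : {x : Fin n // x ≠ a}) : Fin n)) := by
        simp only [Finset.mem_image, Finset.mem_univ, true_and]
        rintro ⟨i, hi⟩
        exact (e i).2 hi
      have himg : (Finset.univ.image
          (fun i => ((e i : {x : Fin n // x ≠ a}) : Fin n))).card = (ℓ : ℕ) := by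
        rw [Finset.card_image_of_injective _
            (fun i j hij => e.injective (Subtype.coe_injective hij)),
          Finset.card_univ, Fintype.card_fin]
      rw [Finset.card_insert_of_notMem hanotmem, himg, Fintype.card_fin]
      congr 1
      omega
    calc (∑ e : Fin (ℓ : ℕ) ↪ {x : Fin n // x ≠ a}, Nat.card
            {r : Perm (Fin n) //
              (∀ x ∈ insert a (Finset.univ.image
                fun i => ((e i : {x : Fin n // x ≠ a}) : Fin n)), r x = x) ∧
              ∀ x, minimalPeriod ⇑r x ≤ q})
        = ∑ _e : Fin (ℓ : ℕ) ↪ {x : Fin n // x ≠ a}, g q (n - 1 - ℓ) :=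
          Finset.sum_congr rfl fun e _ => hone e
      _ = (n - 1).descFactorial ℓ * g q (n - 1 - ℓ) := by
          rw [Finset.sum_const, Finset.card_univ, Fintype.card_embedding_eq, hsub,
            Fintype.card_fin, smul_eq_mul]
  calc g q n = Nat.card {σ : Perm (Fin n) // ∀ x, minimalPeriod ⇑σ x ≤ q} := rfl
    _ ≤ Nat.card T := Nat.card_le_card_of_injective Φ hΦ
    _ = _ := hcount

end Step

lemma main_claim (q s : ℕ) (hq : 1 ≤ q) (hs : (12 : ℝ) * q ≤ s) :
    ∀ k n : ℕ, (s : ℝ) / 2 + k * q ≤ n →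
      (g q n : ℝ) ≤ n.factorial * ((2 * q : ℝ) / s) ^ k := by
  have hq1 : (1 : ℝ) ≤ q := by exact_mod_cast hq
  have hs0 : (0 : ℝ) < s := by nlinarith
  intro k
  induction k with
  | zero =>
    intro n hn
    simpa using (Nat.cast_le.2 (g_le_factorial q n) : (g q n : ℝ) ≤ n.factorial)
  | succ k ih =>
    intro n hn
    push_cast at hn
    have hkq : (0 : ℝ) ≤ (k : ℝ) * q := by positivity
    have hn6 : (6 : ℝ) * q ≤ (s : ℝ) / 2 := by linarith
    have hqn : q ≤ n := by
      have : (q : ℝ) ≤ n := by nlinarith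
      exact_mod_cast this
    have hn1 : 0 < n := by omega
    have hb0 : (0 : ℝ) ≤ (2 * q : ℝ) / s := by positivity
    have hstep := step q n hq hn1
    have hterm : ∀ ℓ ∈ Finset.range q, (((n - 1).descFactorial ℓ * g q (n - 1 - ℓ) : ℕ) : ℝ)
        ≤ ((n - 1).factorial : ℝ) * ((2 * q : ℝ) / s) ^ k := by
      intro ℓ hℓ
      have hℓq : ℓ < q := Finset.mem_range.1 hℓ
      have hℓn : ℓ + 1 ≤ n := by omega
      have hsubeq : n - 1 - ℓ = n - (ℓ + 1) := by omega
      have hcastsub : ((n - 1 - ℓ : ℕ) : ℝ) = (n : ℝ) - 1 - (ℓ : ℝ) := by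
        rw [hsubeq, Nat.cast_sub hℓn]
        push_cast
        ring
      have hIH := ih (n - 1 - ℓ) (by
        rw [hcastsub]
        have hℓq' : (ℓ : ℝ) + 1 ≤ q := by exact_mod_cast hℓq
        linarith)
      have hdesc : ((n - 1).descFactorial ℓ : ℝ) * ((n - 1 - ℓ).factorial : ℝ)
          = ((n - 1).factorial : ℝ) := by
        rw [← Nat.cast_mul]
        congr 1
        rw [mul_comm]
        exact Nat.factorial_mul_descFactorial (by omega : ℓ ≤ n - 1)
      calc (((n - 1).descFactorial ℓ * g q (n - 1 - ℓ) : ℕ) : ℝ)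
          = ((n - 1).descFactorial ℓ : ℝ) * (g q (n - 1 - ℓ) : ℝ) := by push_cast; ring
        _ ≤ ((n - 1).descFactorial ℓ : ℝ) * ((n - 1 - ℓ).factorial * ((2 * q : ℝ) / s) ^ k) :=
            mul_le_mul_of_nonneg_left hIH (by positivity)
        _ = ((n - 1).factorial : ℝ) * ((2 * q : ℝ) / s) ^ k := by rw [← mul_assoc, hdesc]
    have hsum : (g q n : ℝ) ≤ q * (((n - 1).factorial : ℝ) * ((2 * q : ℝ) / s) ^ k) := by
      calc (g q n : ℝ)
          ≤ ((∑ ℓ ∈ Finset.range q, (n - 1).descFactorial ℓ * g q (n - 1 - ℓ) : ℕ) : ℝ) :=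
            Nat.cast_le.2 hstep
        _ = ∑ ℓ ∈ Finset.range q, (((n - 1).descFactorial ℓ * g q (n - 1 - ℓ) : ℕ) : ℝ) := by
            push_cast
            rfl
        _ ≤ ∑ _ℓ ∈ Finset.range q, ((n - 1).factorial : ℝ) * ((2 * q : ℝ) / s) ^ k :=
            Finset.sum_le_sum hterm
        _ = q * (((n - 1).factorial : ℝ) * ((2 * q : ℝ) / s) ^ k) := by
            rw [Finset.sum_const, Finset.card_range, nsmul_eq_mul]
    have hpred : n - 1 + 1 = n := by omega
    have hnfact : (n.factorial : ℝ) = n * ((n - 1).factorial : ℝ) := by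
      conv_lhs => rw [← hpred, Nat.factorial_succ, hpred]
      push_cast
      ring
    have hn2 : (s : ℝ) / 2 ≤ n := by linarith
    have hqnb : (q : ℝ) ≤ (n : ℝ) * ((2 * q : ℝ) / s) := by
      have key : (s / 2 : ℝ) * ((2 * q : ℝ) / s) = q := by
        field_simp
      nlinarith
    calc (g q n : ℝ) ≤ q * (((n - 1).factorial : ℝ) * ((2 * q : ℝ) / s) ^ k) := hsum
      _ ≤ ((n : ℝ) * ((2 * q : ℝ) / s)) * (((n - 1).factorial : ℝ) * ((2 * q : ℝ) / s) ^ k) :=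
          mul_le_mul_of_nonneg_right hqnb (by positivity)
      _ = n.factorial * ((2 * q : ℝ) / s) ^ (k + 1) := by rw [hnfact]; ring

end CPACS

/-- There is a constant `C > 0` such that for all `q ≥ 1` and `s ≥ C·q`, the number of
permutations of `{1,…,s}` all of whose cycles have length at most `q` (the cycle length
of a point being its minimal period, fixed points counting as cycles of length `1`) is
at most `s!·(2q/s)^{s/(3q)}`. -/
theorem card_perm_all_cycles_short_le :
    ∃ C : ℝ, 0 < C ∧ ∀ q s : ℕ, 1 ≤ q → C * q ≤ (s : ℝ) →
      (Nat.card {σ : Equiv.Perm (Fin s) // ∀ x, Function.minimalPeriod σ x ≤ q} : ℝ) ≤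
        (Nat.factorial s : ℝ) * ((2 * q : ℝ) / s) ^ ((s : ℝ) / (3 * q)) := by
  refine ⟨12, by norm_num, fun q s hq hC => ?_⟩
  have hq1 : (1 : ℝ) ≤ q := by exact_mod_cast hq
  have hs0 : (0 : ℝ) < s := by nlinarith
  have hq0 : (0 : ℝ) < q := by linarith
  have hb0 : (0 : ℝ) < (2 * q : ℝ) / s := by positivity
  have hb1 : (2 * q : ℝ) / s ≤ 1 := by
    rw [div_le_one hs0]
    linarith
  set k := ⌈(s : ℝ) / (3 * q)⌉₊ with hk
  have hkle : (k : ℝ) < (s : ℝ) / (3 * q) + 1 := Nat.ceil_lt_add_one (by positivity)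
  have hge : (s : ℝ) / (3 * q) ≤ k := Nat.le_ceil _
  have hdiv : (s : ℝ) / (3 * q) * q = s / 3 := by
    field_simp
  have hcond : (s : ℝ) / 2 + k * q ≤ s := by nlinarith
  have hcl := CPACS.main_claim q s hq hC k s hcond
  have heq : (Nat.card {σ : Equiv.Perm (Fin s) // ∀ x, Function.minimalPeriod σ x ≤ q} : ℕ)
      = CPACS.g q s := rfl
  rw [heq]
  calc (CPACS.g q s : ℝ) ≤ s.factorial * ((2 * q : ℝ) / s) ^ k := hcl
    _ ≤ s.factorial * ((2 * q : ℝ) / s) ^ ((s : ℝ) / (3 * q)) := by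
        refine mul_le_mul_of_nonneg_left ?_ (by positivity)
        rw [← Real.rpow_natCast ((2 * q : ℝ) / s) k]
        exact Real.rpow_le_rpow_of_exponent_ge hb0 hb1 hge
end

section
/- Let ρ : ℝ → ℝ be continuous on [0,∞), with ρ(x) = 1 for x ∈ [0,1], ρ(x) ≥ 0 for all x ≥ 0, and ρ differentiable on (1,∞) with x·ρ'(x) + ρ(x−1) = 0 for all x > 1 (so ρ is the Dickman function). Then ρ(x)/(1+x) is integrable on [0,∞) and ∫_0^∞ ρ(x)/(1+x) dx = 1; equivalently, ∫_0^1 ρ((1−v)/v)/v dv = 1. -/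
open MeasureTheory intervalIntegral

/-- Integral identity for the Dickman function `ρ` (equal to `1` on `[0,1]`, nonnegative,
continuous on `[0,∞)`, satisfying `x·ρ'(x) + ρ(x-1) = 0` for `x > 1`):
`x ↦ ρ(x)/(1+x)` is integrable on `[0,∞)` with `∫_0^∞ ρ(x)/(1+x) dx = 1`;
equivalently `∫_0^1 ρ((1-v)/v)/v dv = 1`. -/
theorem dickman_integral_eq_one (ρ : ℝ → ℝ)
    (hcont : ContinuousOn ρ (Set.Ici 0))
    (hone : ∀ x ∈ Set.Icc (0 : ℝ) 1, ρ x = 1)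
    (hnonneg : ∀ x : ℝ, 0 ≤ x → 0 ≤ ρ x)
    (hderiv : ∀ x : ℝ, 1 < x → HasDerivAt ρ (-ρ (x - 1) / x) x) :
    IntegrableOn (fun x => ρ x / (1 + x)) (Set.Ici 0) ∧
      ∫ x in Set.Ici (0 : ℝ), ρ x / (1 + x) = 1 ∧
      ∫ v in (0 : ℝ)..1, ρ ((1 - v) / v) / v = 1 := by
  -- continuity of the shifted integrand on [a,b] for 1 ≤ a
  have hcg : ∀ a b : ℝ, 1 ≤ a → ContinuousOn (fun x => ρ (x - 1) / x) (Set.Icc a b) := by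
    intro a b ha
    apply ContinuousOn.div
    · exact hcont.comp ((continuous_id.sub continuous_const).continuousOn)
        (fun x hx => by simp only [Set.mem_Ici]; linarith [hx.1])
    · exact continuousOn_id
    · intro x hx; have := hx.1; intro h; rw [h] at this; linarith
  -- FTC on [a,b] for 1 ≤ a
  have key : ∀ a b : ℝ, 1 ≤ a → a ≤ b → ∫ x in a..b, ρ (x - 1) / x = ρ a - ρ b := by
    intro a b ha hab
    have hii : IntervalIntegrable (fun x => ρ (x - 1) / x) volume a b := by
      apply ContinuousOn.intervalIntegrable
      rw [Set.uIcc_of_le hab]; exact hcg a b ha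
    have h1 : ∫ x in a..b, -(ρ (x - 1) / x) = ρ b - ρ a := by
      apply integral_eq_sub_of_hasDeriv_right_of_le hab
        (hcont.mono (fun x hx => by simp only [Set.mem_Ici]; linarith [hx.1]))
      · intro x hx
        have := hderiv x (by linarith [hx.1])
        rw [neg_div] at this
        exact this.hasDerivWithinAt
      · exact hii.neg
    rw [intervalIntegral.integral_neg] at h1
    linarith
  -- monotonicity
  have mono : ∀ a b : ℝ, 1 ≤ a → a ≤ b → ρ b ≤ ρ a := by
    intro a b ha hab
    have h0 : 0 ≤ ∫ x in a..b, ρ (x - 1) / x :=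
      intervalIntegral.integral_nonneg hab (fun x hx =>
        div_nonneg (hnonneg _ (by linarith [hx.1])) (by linarith [hx.1]))
    have := key a b ha hab
    linarith
  have hρ1 : ρ 1 = 1 := hone 1 ⟨zero_le_one, le_rfl⟩
  -- quantitative decay bound
  have hbound : ∀ X : ℝ, 2 ≤ X → ρ X ≤ ρ 2 / (1 + Real.log (X / 2)) := by
    intro X hX
    have hlog : 0 ≤ Real.log (X / 2) := Real.log_nonneg (by linarith)
    have hii : IntervalIntegrable (fun x => ρ (x - 1) / x) volume 2 X := by
      apply ContinuousOn.intervalIntegrable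
      rw [Set.uIcc_of_le hX]; exact hcg 2 X one_le_two
    have hii2 : IntervalIntegrable (fun x => ρ X * (1 / x)) volume 2 X := by
      apply ContinuousOn.intervalIntegrable
      apply ContinuousOn.mul continuousOn_const
      apply ContinuousOn.div continuousOn_const continuousOn_id
      intro x hx
      rw [Set.uIcc_of_le hX] at hx
      simp only [id_eq]
      intro h; rw [h] at hx; linarith [hx.1]
    have hcmp : ∫ x in (2:ℝ)..X, ρ X * (1 / x) ≤ ∫ x in (2:ℝ)..X, ρ (x - 1) / x := by
      apply intervalIntegral.integral_mono_on hX hii2 hii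
      intro x hx
      rw [mul_one_div]
      have hx0 : (0:ℝ) < x := by linarith [hx.1]
      have hm : ρ X ≤ ρ (x - 1) := mono (x - 1) X (by linarith [hx.1]) (by linarith [hx.2])
      gcongr
    have hval : ∫ x in (2:ℝ)..X, ρ X * (1 / x) = ρ X * Real.log (X / 2) := by
      rw [intervalIntegral.integral_const_mul, integral_one_div]
      rw [Set.uIcc_of_le hX]
      intro h; linarith [h.1]
    rw [hval, key 2 X one_le_two hX] at hcmp
    have hρX : 0 ≤ ρ X := hnonneg X (by linarith)
    rw [le_div_iff₀ (by linarith)]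
    nlinarith
  -- limit of ρ at infinity is 0
  have hlim : Filter.Tendsto ρ Filter.atTop (nhds 0) := by
    apply squeeze_zero' (g := fun X => ρ 2 / (1 + Real.log (X / 2)))
    · filter_upwards [Filter.eventually_ge_atTop (0:ℝ)] with x hx
      exact hnonneg x hx
    · filter_upwards [Filter.eventually_ge_atTop (2:ℝ)] with x hx
      exact hbound x hx
    · apply Filter.Tendsto.div_atTop tendsto_const_nhds
      apply Filter.tendsto_atTop_add_const_left
      exact Real.tendsto_log_atTop.comp (Filter.tendsto_id.atTop_div_const two_pos)
  -- formula for the partial integrals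
  have hF : ∀ X : ℝ, 0 ≤ X → ∫ x in (0:ℝ)..X, ρ x / (1 + x) = 1 - ρ (X + 1) := by
    intro X hX
    have h2 : ∫ x in (0:ℝ)..X, ρ x / (1 + x)
        = ∫ x in (0:ℝ)..X, (fun y => ρ (y - 1) / y) (x + 1) := by
      apply intervalIntegral.integral_congr
      intro x _
      simp only [add_sub_cancel_right]
      ring_nf
    rw [h2, intervalIntegral.integral_comp_add_right (fun y => ρ (y - 1) / y) 1, zero_add,
      key 1 (X + 1) le_rfl (by linarith), hρ1]
  set f : ℝ → ℝ := fun x => ρ x / (1 + x) with hf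
  have hcontf : ContinuousOn f (Set.Ici 0) := by
    apply ContinuousOn.div hcont ((continuous_const.add continuous_id).continuousOn)
    intro x hx
    have : (0:ℝ) ≤ x := hx
    show (1:ℝ) + x ≠ 0
    positivity
  have hfi : ∀ X : ℝ, IntegrableOn f (Set.Ioc 0 X) := by
    intro X
    have h1 : IntegrableOn f (Set.Icc 0 (max 0 X)) :=
      (hcontf.mono (fun x hx => hx.1)).integrableOn_Icc
    exact h1.mono_set (fun x hx => ⟨le_of_lt hx.1, le_trans hx.2 (le_max_right _ _)⟩)
  have hnn : ∀ x : ℝ, 0 ≤ x → 0 ≤ f x := by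
    intro x hx
    exact div_nonneg (hnonneg x hx) (by linarith)
  have htend1 : Filter.Tendsto (fun X : ℝ => 1 - ρ (X + 1)) Filter.atTop (nhds 1) := by
    have h : Filter.Tendsto (fun X : ℝ => ρ (X + 1)) Filter.atTop (nhds 0) :=
      hlim.comp (Filter.tendsto_atTop_add_const_right _ 1 Filter.tendsto_id)
    have h2 : Filter.Tendsto (fun _ : ℝ => (1:ℝ)) Filter.atTop (nhds 1) := tendsto_const_nhds
    simpa using h2.sub h
  have htendF : Filter.Tendsto (fun X : ℝ => ∫ x in (0:ℝ)..X, f x) Filter.atTop (nhds 1) := by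
    apply htend1.congr'
    filter_upwards [Filter.eventually_ge_atTop (0:ℝ)] with X hX
    exact (hF X hX).symm
  have hIoi : IntegrableOn f (Set.Ioi 0) := by
    apply integrableOn_Ioi_of_intervalIntegral_norm_tendsto 1 0 hfi Filter.tendsto_id
    apply htendF.congr'
    filter_upwards [Filter.eventually_ge_atTop (0:ℝ)] with X hX
    apply intervalIntegral.integral_congr
    intro x hx
    rw [Set.uIcc_of_le hX] at hx
    exact (Real.norm_of_nonneg (hnn x hx.1)).symm
  have hval : ∫ x in Set.Ioi (0:ℝ), f x = 1 := by
    have h := intervalIntegral_tendsto_integral_Ioi 0 hIoi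
      (Filter.tendsto_id (x := Filter.atTop))
    exact tendsto_nhds_unique h htendF
  have hIci : IntegrableOn f (Set.Ici 0) := Iff.mpr integrableOn_Ici_iff_integrableOn_Ioi hIoi
  have hvalIci : ∫ x in Set.Ici (0:ℝ), f x = 1 := by
    rw [MeasureTheory.integral_Ici_eq_integral_Ioi]; exact hval
  refine ⟨hIci, hvalIci, ?_⟩
  -- change of variables v ↦ (1-v)/v
  set φ : ℝ → ℝ := fun v => (1 - v) / v with hφ
  have hφd : ∀ v ∈ Set.Ioo (0:ℝ) 1, HasDerivWithinAt φ (-(v ^ 2)⁻¹) (Set.Ioo 0 1) v := by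
    intro v hv
    have hv0 : v ≠ 0 := ne_of_gt hv.1
    have h := (hasDerivAt_inv hv0).sub_const 1
    have heq : φ =ᶠ[nhds v] fun y => y⁻¹ - 1 := by
      filter_upwards [isOpen_compl_singleton.mem_nhds
        (show v ∈ ({(0:ℝ)}ᶜ : Set ℝ) from hv0)] with y hy
      have hy0 : y ≠ 0 := hy
      simp only [hφ]; field_simp
    exact (h.congr_of_eventuallyEq heq).hasDerivWithinAt
  have hφinj : Set.InjOn φ (Set.Ioo 0 1) := by
    intro a ha b hb h
    have ha0 : a ≠ 0 := ne_of_gt ha.1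
    have hb0 : b ≠ 0 := ne_of_gt hb.1
    simp only [hφ] at h; field_simp at h
    nlinarith [h]
  have hφimg : φ '' Set.Ioo 0 1 = Set.Ioi 0 := by
    ext x
    simp only [Set.mem_image, Set.mem_Ioi, Set.mem_Ioo]
    constructor
    · rintro ⟨v, ⟨h0, h1⟩, rfl⟩
      exact div_pos (by linarith) h0
    · intro hx
      refine ⟨1 / (1 + x), ⟨by positivity, ?_⟩, ?_⟩
      · rw [div_lt_one (by linarith)]; linarith
      · simp only [hφ]; field_simp; ring
  have hchg := MeasureTheory.integral_image_eq_integral_abs_deriv_smul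
    measurableSet_Ioo hφd hφinj f
  rw [hφimg] at hchg
  have hrhs : ∫ v in Set.Ioo (0:ℝ) 1, |(-(v ^ 2)⁻¹)| • f (φ v)
      = ∫ v in Set.Ioo (0:ℝ) 1, ρ ((1 - v) / v) / v := by
    apply MeasureTheory.setIntegral_congr_fun measurableSet_Ioo
    intro v hv
    have hv0 : (0:ℝ) < v := hv.1
    have h1 : (1 : ℝ) + (1 - v) / v = 1 / v := by field_simp; ring
    simp only [hφ, hf, smul_eq_mul, abs_neg, abs_inv, h1]
    rw [abs_of_pos (pow_pos hv0 2), one_div]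
    generalize ρ ((1 - v) / v) = r
    rw [div_eq_mul_inv, inv_inv, eq_div_iff hv0.ne']
    field_simp
  rw [intervalIntegral.integral_of_le zero_le_one,
    MeasureTheory.integral_Ioc_eq_integral_Ioo, ← hrhs, ← hchg, hval]
end

section
/- Let ρ : ℝ → ℝ be continuous on [0,∞), with ρ(x) = 1 for x ∈ [0,1], ρ(x) ≥ 0 for all x ≥ 0, and ρ differentiable on (1,∞) with x·ρ'(x) + ρ(x−1) = 0 for all x > 1 (so ρ is the Dickman function). Then Σ_{K=1}^{L−1} ∫_{(L−K−1)/K}^{(L−K)/K} ρ(x)/(L/K − x) dx converges to 1 as the integer L tends to infinity. -/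
open MeasureTheory intervalIntegral Filter Topology

lemma dickman_anti (ρ : ℝ → ℝ)
    (hcont : ContinuousOn ρ (Set.Ici 0))
    (hone : ∀ x ∈ Set.Icc (0 : ℝ) 1, ρ x = 1)
    (hnonneg : ∀ x : ℝ, 0 ≤ x → 0 ≤ ρ x)
    (hderiv : ∀ x : ℝ, 1 < x → HasDerivAt ρ (-ρ (x - 1) / x) x) :
    AntitoneOn ρ (Set.Ici 0) := by
  have h1 : AntitoneOn ρ (Set.Ici 1) := by
    apply antitoneOn_of_deriv_nonpos (convex_Ici 1)
      (hcont.mono fun x hx => Set.mem_Ici.2 (le_trans zero_le_one hx))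
    · intro x hx
      rw [interior_Ici] at hx
      exact ((hderiv x hx).differentiableAt).differentiableWithinAt
    · intro x hx
      rw [interior_Ici] at hx
      rw [(hderiv x hx).deriv]
      apply div_nonpos_of_nonpos_of_nonneg
      · simp only [neg_nonpos]
        exact hnonneg _ (by simp only [Set.mem_Ioi] at hx; linarith)
      · simp only [Set.mem_Ioi] at hx; linarith
  intro x hx y hy hxy
  rcases le_or_gt y 1 with h | h
  · rw [hone x ⟨hx, by linarith⟩, hone y ⟨hy, h⟩]
  · rcases le_or_gt 1 x with h2 | h2
    · exact h1 h2 (le_of_lt h) hxy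
    · rw [hone x ⟨hx, h2.le⟩]
      calc ρ y ≤ ρ 1 := h1 (Set.mem_Ici.2 le_rfl) h.le h.le
        _ = 1 := hone 1 ⟨zero_le_one, le_rfl⟩

lemma dickman_le_one (ρ : ℝ → ℝ)
    (hcont : ContinuousOn ρ (Set.Ici 0))
    (hone : ∀ x ∈ Set.Icc (0 : ℝ) 1, ρ x = 1)
    (hnonneg : ∀ x : ℝ, 0 ≤ x → 0 ≤ ρ x)
    (hderiv : ∀ x : ℝ, 1 < x → HasDerivAt ρ (-ρ (x - 1) / x) x) :
    ∀ x : ℝ, 0 ≤ x → ρ x ≤ 1 := by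
  intro x hx
  rcases le_or_gt x 1 with h | h
  · exact le_of_eq (hone x ⟨hx, h⟩)
  · calc ρ x ≤ ρ 1 := dickman_anti ρ hcont hone hnonneg hderiv (by norm_num) hx h.le
      _ = 1 := hone 1 ⟨zero_le_one, le_rfl⟩

lemma dickman_integrand_cont (ρ : ℝ → ℝ)
    (hcont : ContinuousOn ρ (Set.Ici 0)) {a b : ℝ} (ha : 1 ≤ a) (hab : a ≤ b) :
    ContinuousOn (fun y => ρ (y - 1) / y) (Set.Icc a b) := by
  apply ContinuousOn.div
  · apply hcont.comp (continuousOn_id.sub continuousOn_const)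
    intro y hy
    simp only [Set.mem_Ici, id_eq, Pi.sub_apply]
    linarith [hy.1]
  · exact continuousOn_id
  · intro y hy
    have := hy.1; intro h0; rw [h0] at this; linarith

lemma dickman_ftc (ρ : ℝ → ℝ)
    (hcont : ContinuousOn ρ (Set.Ici 0))
    (hderiv : ∀ x : ℝ, 1 < x → HasDerivAt ρ (-ρ (x - 1) / x) x)
    {a b : ℝ} (ha : 1 ≤ a) (hab : a ≤ b) :
    ∫ y in a..b, ρ (y - 1) / y = ρ a - ρ b := by
  have hint : IntervalIntegrable (fun y => ρ (y - 1) / y) volume a b := by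
    apply ContinuousOn.intervalIntegrable
    rw [Set.uIcc_of_le hab]
    exact dickman_integrand_cont ρ hcont ha hab
  have h := integral_eq_sub_of_hasDeriv_right_of_le hab
    (f := ρ) (f' := fun y => -(ρ (y - 1) / y))
    (hcont.mono fun x hx => le_trans (by linarith) hx.1)
    (fun x hx => by
      have := hderiv x (lt_of_le_of_lt ha hx.1)
      rw [neg_div] at this
      exact this.hasDerivWithinAt)
    hint.neg
  rw [intervalIntegral.integral_neg] at h
  linarith [h]
lemma dickman_log_bound (ρ : ℝ → ℝ)
    (hcont : ContinuousOn ρ (Set.Ici 0))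
    (hone : ∀ x ∈ Set.Icc (0 : ℝ) 1, ρ x = 1)
    (hnonneg : ∀ x : ℝ, 0 ≤ x → 0 ≤ ρ x)
    (hderiv : ∀ x : ℝ, 1 < x → HasDerivAt ρ (-ρ (x - 1) / x) x)
    (hanti : AntitoneOn ρ (Set.Ici 0))
    (hftc : ∀ a b : ℝ, 1 ≤ a → a ≤ b → ∫ y in a..b, ρ (y - 1) / y = ρ a - ρ b)
    (hintcont : ∀ a b : ℝ, 1 ≤ a → a ≤ b → ContinuousOn (fun y => ρ (y - 1) / y) (Set.Icc a b)) :
    ∀ b : ℝ, 1 < b → ρ b * Real.log b ≤ 1 := by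
  intro b hb
  have hb0 : (0:ℝ) < b := by linarith
  have key : ρ b * Real.log b ≤ ∫ y in (1:ℝ)..b, ρ (y - 1) / y := by
    have h1 : ∫ y in (1:ℝ)..b, ρ b * (1 / y) = ρ b * Real.log b := by
      rw [intervalIntegral.integral_const_mul, integral_one_div
        (by rw [Set.uIcc_of_le hb.le]; intro h; exact absurd h.1 (by norm_num)), div_one]
    rw [← h1]
    apply intervalIntegral.integral_mono_on hb.le
    · apply ContinuousOn.intervalIntegrable
      apply ContinuousOn.mul continuousOn_const
      apply ContinuousOn.div continuousOn_const continuousOn_id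
      intro y hy
      rw [Set.uIcc_of_le hb.le] at hy
      simp only [id_eq]; intro h0; rw [h0] at hy; exact absurd hy.1 (by norm_num)
    · apply ContinuousOn.intervalIntegrable
      rw [Set.uIcc_of_le hb.le]
      exact hintcont 1 b le_rfl hb.le
    · intro y hy
      rw [mul_one_div]
      apply div_le_div₀ (hnonneg _ (by linarith [hy.1])) _ (by linarith [hy.1]) le_rfl
      exact hanti (by simp; linarith [hy.1]) (by simp; linarith) (by linarith [hy.2])
  rw [hftc 1 b le_rfl hb.le, hone 1 ⟨zero_le_one, le_rfl⟩] at key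
  nlinarith [hnonneg b (by linarith)]

lemma dickman_tendsto_zero (ρ : ℝ → ℝ)
    (hnonneg : ∀ x : ℝ, 0 ≤ x → 0 ≤ ρ x)
    (hlog : ∀ b : ℝ, 1 < b → ρ b * Real.log b ≤ 1) :
    Tendsto ρ atTop (𝓝 0) := by
  have hup : ∀ᶠ b in atTop, ρ b ≤ 1 / Real.log b := by
    filter_upwards [eventually_gt_atTop (2:ℝ)] with b hb
    have hlb : 0 < Real.log b := Real.log_pos (by linarith)
    rw [le_div_iff₀ hlb]
    exact hlog b (by linarith)
  have hlo : ∀ᶠ b in atTop, 0 ≤ ρ b := by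
    filter_upwards [eventually_ge_atTop (0:ℝ)] with b hb
    exact hnonneg b hb
  have htend : Tendsto (fun b => 1 / Real.log b) atTop (𝓝 0) := by
    simp only [one_div]
    exact Real.tendsto_log_atTop.inv_tendsto_atTop
  exact squeeze_zero' hlo hup htend
lemma dickman_I_bounds (ρ : ℝ → ℝ)
    (hcont : ContinuousOn ρ (Set.Ici 0))
    (hnonneg : ∀ x : ℝ, 0 ≤ x → 0 ≤ ρ x)
    (hanti : AntitoneOn ρ (Set.Ici 0))
    (u M : ℝ) (hu : 1 ≤ u) (huM : u + 1 ≤ M) :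
    ρ (M/u - 1)/(u+1) ≤ (∫ x in ((M-u-1)/u)..((M-u)/u), ρ x / (M/u - x)) ∧
    (∫ x in ((M-u-1)/u)..((M-u)/u), ρ x / (M/u - x)) ≤ ρ (M/(u+1) - 1)/u := by
  have hu0 : (0:ℝ) < u := by linarith
  have hu10 : (0:ℝ) < u + 1 := by linarith
  have hA0 : 0 ≤ (M-u-1)/u := div_nonneg (by linarith) hu0.le
  have hAB : (M-u-1)/u ≤ (M-u)/u := by
    apply div_le_div_of_nonneg_right (by linarith) ;exact hu0.le
  have hBA : (M-u)/u - (M-u-1)/u = 1/u := by rw [← sub_div]; norm_num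
  have hBle : (M-u)/u = M/u - 1 := by field_simp
  have hArw : 0 ≤ M/(u+1) - 1 := by
    rw [sub_nonneg, le_div_iff₀ hu10]; linarith
  have hAge : M/(u+1) - 1 ≤ (M-u-1)/u := by
    rw [div_sub' hu10.ne', div_le_div_iff₀ hu10 hu0]; nlinarith
  -- pointwise bounds
  have hden1 : ∀ x ∈ Set.Icc ((M-u-1)/u) ((M-u)/u), 1 ≤ M/u - x := by
    intro x hx
    have h2 := (le_div_iff₀ hu0).mp hx.2
    have h3 : (x+1)*u ≤ M := by nlinarith
    have := (le_div_iff₀ hu0).mpr h3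
    linarith
  have hden2 : ∀ x ∈ Set.Icc ((M-u-1)/u) ((M-u)/u), M/u - x ≤ (u+1)/u := by
    intro x hx
    have h1 := (div_le_iff₀ hu0).mp hx.1
    have hc : (u+1)/u*u = u+1 := div_mul_cancel₀ _ hu0.ne'
    have h3 : M ≤ (x + (u+1)/u)*u := by nlinarith
    have := (div_le_iff₀ hu0).mpr h3
    linarith
  have hintg : IntervalIntegrable (fun x => ρ x / (M/u - x)) volume ((M-u-1)/u) ((M-u)/u) := by
    apply ContinuousOn.intervalIntegrable
    rw [Set.uIcc_of_le hAB]
    apply ContinuousOn.div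
    · exact hcont.comp continuousOn_id (fun x hx => le_trans hA0 hx.1)
    · fun_prop
    · intro x hx h0
      have := hden1 x hx; rw [h0] at this; linarith
  constructor
  · -- lower bound
    have hpt : ∀ x ∈ Set.Icc ((M-u-1)/u) ((M-u)/u),
        ρ (M/u - 1)/((u+1)/u) ≤ ρ x / (M/u - x) := by
      intro x hx
      apply div_le_div₀ (hnonneg x (le_trans hA0 hx.1)) _ (by linarith [hden1 x hx]) (hden2 x hx)
      rw [← hBle]
      exact hanti (le_trans hA0 hx.1) (le_trans hA0 hAB) hx.2
    have := intervalIntegral.integral_mono_on hAB intervalIntegrable_const hintg hpt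
    rw [intervalIntegral.integral_const, smul_eq_mul, hBA] at this
    calc ρ (M/u - 1)/(u+1) = 1/u * (ρ (M/u - 1)/((u+1)/u)) := by
          field_simp
      _ ≤ _ := this
  · -- upper bound
    have hpt : ∀ x ∈ Set.Icc ((M-u-1)/u) ((M-u)/u),
        ρ x / (M/u - x) ≤ ρ (M/(u+1) - 1) / 1 := by
      intro x hx
      apply div_le_div₀ (hnonneg _ hArw) _ one_pos (hden1 x hx)
      exact hanti hArw (le_trans hA0 hx.1) (le_trans hAge hx.1)
    have := intervalIntegral.integral_mono_on hAB hintg intervalIntegrable_const hpt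
    rw [intervalIntegral.integral_const, smul_eq_mul, hBA] at this
    calc (∫ x in ((M-u-1)/u)..((M-u)/u), ρ x / (M/u - x))
        ≤ 1/u * (ρ (M/(u+1) - 1) / 1) := this
      _ = ρ (M/(u+1) - 1)/u := by field_simp
lemma dickman_t_bounds (ρ : ℝ → ℝ)
    (hcont : ContinuousOn ρ (Set.Ici 0))
    (hnonneg : ∀ x : ℝ, 0 ≤ x → 0 ≤ ρ x)
    (hanti : AntitoneOn ρ (Set.Ici 0))
    (hftc : ∀ a b : ℝ, 1 ≤ a → a ≤ b → ∫ y in a..b, ρ (y - 1) / y = ρ a - ρ b)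
    (hintcont : ∀ a b : ℝ, 1 ≤ a → a ≤ b → ContinuousOn (fun y => ρ (y - 1) / y) (Set.Icc a b))
    (u M : ℝ) (hu : 1 ≤ u) (huM : u + 1 ≤ M) :
    ρ (M/u - 1)/(u+1) ≤ ρ (M/(u+1)) - ρ (M/u) ∧
    ρ (M/(u+1)) - ρ (M/u) ≤ ρ (M/(u+1) - 1)/u := by
  have hu0 : (0:ℝ) < u := by linarith
  have hu10 : (0:ℝ) < u + 1 := by linarith
  have hM0 : (0:ℝ) < M := by linarith
  have hP1 : 1 ≤ M/(u+1) := by rw [le_div_iff₀ hu10]; linarith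
  have hPQ : M/(u+1) ≤ M/u := by
    apply div_le_div_of_nonneg_left hM0.le hu0; linarith
  have hQP : M/u - M/(u+1) = M/(u*(u+1)) := by field_simp; ring
  have hkey := hftc (M/(u+1)) (M/u) hP1 hPQ
  have hint : IntervalIntegrable (fun y => ρ (y - 1) / y) volume (M/(u+1)) (M/u) := by
    apply ContinuousOn.intervalIntegrable
    rw [Set.uIcc_of_le hPQ]
    exact hintcont _ _ hP1 hPQ
  constructor
  · -- lower
    have hpt : ∀ y ∈ Set.Icc (M/(u+1)) (M/u),
        ρ (M/u - 1) / (M/u) ≤ ρ (y - 1) / y := by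
      intro y hy
      apply div_le_div₀ (hnonneg _ (by linarith [hy.1, hP1])) _ (by linarith [hy.1, hP1]) hy.2
      exact hanti (by simp only [Set.mem_Ici]; linarith [hy.1, hP1])
        (by simp only [Set.mem_Ici]; linarith [hPQ, hP1]) (by linarith [hy.2])
    have := intervalIntegral.integral_mono_on hPQ intervalIntegrable_const hint hpt
    rw [intervalIntegral.integral_const, smul_eq_mul, hkey, hQP] at this
    have heq : M/(u*(u+1)) * (ρ (M/u - 1) / (M/u)) = ρ (M/u - 1)/(u+1) := by
      field_simp
    linarith [heq ▸ this]
  · -- upper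
    have hpt : ∀ y ∈ Set.Icc (M/(u+1)) (M/u),
        ρ (y - 1) / y ≤ ρ (M/(u+1) - 1) / (M/(u+1)) := by
      intro y hy
      apply div_le_div₀ (hnonneg _ (by linarith [hP1])) _ (by linarith [hP1]) hy.1
      exact hanti (by simp only [Set.mem_Ici]; linarith [hP1])
        (by simp only [Set.mem_Ici]; linarith [hy.1, hP1]) (by linarith [hy.1])
    have := intervalIntegral.integral_mono_on hPQ hint intervalIntegrable_const hpt
    rw [intervalIntegral.integral_const, smul_eq_mul, hkey, hQP] at this
    have heq : M/(u*(u+1)) * (ρ (M/(u+1) - 1) / (M/(u+1))) = ρ (M/(u+1) - 1)/u := by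
      field_simp
    linarith [heq ▸ this]
lemma dickman_tele (f : ℕ → ℝ) (a : ℕ) : ∀ b : ℕ, a ≤ b →
    ∑ K ∈ Finset.Ioc a b, (f (K+1) - f K) = f (b+1) - f (a+1) := by
  intro b
  induction b with
  | zero => intro h; interval_cases a; simp
  | succ n ih =>
    intro h
    rcases Nat.lt_or_ge a (n+1) with h' | h'
    · have han : a ≤ n := by omega
      rw [Finset.sum_Ioc_succ_top han, ih han]; ring
    · have : a = n + 1 := by omega
      subst this; simp

lemma dickman_alg1 (p q r u : ℝ) (hu : 1 ≤ u) (hp : 0 ≤ p) (hpq : p ≤ q) (hqr : q ≤ r) :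
    q/u - p/(u+1) ≤ (q - p) + r*(1/u - 1/(u+1)) := by
  have hu0 : (0:ℝ) < u := by linarith
  have hu1 : (0:ℝ) < u + 1 := by linarith
  have h1 : q/u - p/(u+1) = (q*(u+1) - p*u)/(u*(u+1)) := by field_simp
  have h2 : 1/u - 1/(u+1) = 1/(u*(u+1)) := by field_simp; ring
  rw [h1, h2, div_le_iff₀ (by positivity)]
  have key : q*(u+1) - p*u ≤ (q-p)*(u*(u+1)) + r := by
    nlinarith [mul_nonneg (mul_nonneg (sub_nonneg.2 hpq) hu0.le) hu0.le]
  calc q*(u+1) - p*u ≤ (q-p)*(u*(u+1)) + r := key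
    _ = ((q - p) + r*(1/(u*(u+1)))) * (u*(u+1)) := by field_simp

lemma dickman_alg2 (p q u v : ℝ) (hv : 1 ≤ v) (hvu : v ≤ u) (hp : 0 ≤ p) (hpq : p ≤ q)
    (hq : q ≤ 1) : q/u - p/(u+1) ≤ (q - p)/v + (1/u - 1/(u+1)) := by
  have hu0 : (0:ℝ) < u := by linarith
  have hu1 : (0:ℝ) < u + 1 := by linarith
  have hv0 : (0:ℝ) < v := by linarith
  have e1 : q/u - p/(u+1) = (q-p)/u + p*(1/u - 1/(u+1)) := by field_simp; ring
  have piece1 : (q-p)/u ≤ (q-p)/v := div_le_div_of_nonneg_left (by linarith) hv0 hvu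
  have hfac : 0 ≤ 1/u - 1/(u+1) := by
    have := one_div_le_one_div_of_le hu0 (by linarith : u ≤ u + 1)
    linarith
  have piece2 : p*(1/u - 1/(u+1)) ≤ 1/u - 1/(u+1) := by nlinarith
  linarith [e1]


lemma dickman_perK (ρ : ℝ → ℝ)
    (hcont : ContinuousOn ρ (Set.Ici 0))
    (hnonneg : ∀ x : ℝ, 0 ≤ x → 0 ≤ ρ x)
    (hanti : AntitoneOn ρ (Set.Ici 0))
    (hftc : ∀ a b : ℝ, 1 ≤ a → a ≤ b → ∫ y in a..b, ρ (y - 1) / y = ρ a - ρ b)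
    (hintcont : ∀ a b : ℝ, 1 ≤ a → a ≤ b → ContinuousOn (fun y => ρ (y - 1) / y) (Set.Icc a b))
    (hIb : ∀ u M : ℝ, 1 ≤ u → u + 1 ≤ M →
      ρ (M/u - 1)/(u+1) ≤ (∫ x in ((M-u-1)/u)..((M-u)/u), ρ x / (M/u - x)) ∧
      (∫ x in ((M-u-1)/u)..((M-u)/u), ρ x / (M/u - x)) ≤ ρ (M/(u+1) - 1)/u)
    (htb : ∀ u M : ℝ, 1 ≤ u → u + 1 ≤ M →
      ρ (M/u - 1)/(u+1) ≤ ρ (M/(u+1)) - ρ (M/u) ∧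
      ρ (M/(u+1)) - ρ (M/u) ≤ ρ (M/(u+1) - 1)/u)
    (L K : ℕ) (hK : 1 ≤ K) (hKL : K + 1 ≤ L) :
    |(∫ x in (((L:ℝ) - K - 1)/K)..(((L:ℝ) - K)/K), ρ x / ((L:ℝ)/K - x)) -
        (ρ ((L:ℝ)/((K:ℝ)+1)) - ρ ((L:ℝ)/(K:ℝ)))| ≤
      ρ ((L:ℝ)/((K:ℝ)+1) - 1)/(K:ℝ) - ρ ((L:ℝ)/(K:ℝ) - 1)/((K:ℝ)+1) := by
  have hu : (1:ℝ) ≤ (K:ℝ) := by exact_mod_cast hK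
  have huM : (K:ℝ) + 1 ≤ (L:ℝ) := by exact_mod_cast hKL
  obtain ⟨hI1, hI2⟩ := hIb (K:ℝ) (L:ℝ) hu huM
  obtain ⟨ht1, ht2⟩ := htb (K:ℝ) (L:ℝ) hu huM
  rw [abs_le]
  constructor <;> linarith

lemma dickman_main_bound (ρ : ℝ → ℝ) (L' : ℕ)
    (hone : ∀ x ∈ Set.Icc (0 : ℝ) 1, ρ x = 1)
    (hnonneg : ∀ x : ℝ, 0 ≤ x → 0 ≤ ρ x)
    (hanti : AntitoneOn ρ (Set.Ici 0))
    (hle1 : ∀ x : ℝ, 0 ≤ x → ρ x ≤ 1)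
    (hperK : ∀ K : ℕ, 1 ≤ K → K + 1 ≤ L' →
      |(∫ x in (((L':ℝ) - K - 1)/K)..(((L':ℝ) - K)/K), ρ x / ((L':ℝ)/K - x)) -
          (ρ ((L':ℝ)/((K:ℝ)+1)) - ρ ((L':ℝ)/(K:ℝ)))| ≤
        ρ ((L':ℝ)/((K:ℝ)+1) - 1)/(K:ℝ) - ρ ((L':ℝ)/(K:ℝ) - 1)/((K:ℝ)+1))
    (m : ℕ) (hm : 1 ≤ m) (hmL : m + 2 ≤ L') :
    |(∑ K ∈ Finset.Icc 1 (L' - 1), ∫ x in (((L':ℝ) - K - 1)/K)..(((L':ℝ) - K)/K),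
        ρ x / ((L':ℝ)/K - x)) - 1| ≤ 3 * ρ ((L':ℝ)/((m:ℝ)+1) - 1) + 2/(m:ℝ) := by
  have hL2 : 3 ≤ L' := by omega
  have hLn : (0:ℕ) < L' := by omega
  have hL0 : (0:ℝ) < (L':ℝ) := by exact_mod_cast hLn
  set a : ℕ → ℝ := fun K => ρ ((L':ℝ)/(K:ℝ) - 1) with ha_def
  set f : ℕ → ℝ := fun K => ρ ((L':ℝ)/(K:ℝ)) with hf_def
  set g : ℕ → ℝ := fun K => -(1/(K:ℝ)) with hg_def
  have hcs : ∀ K : ℕ, ((K+1:ℕ):ℝ) = (K:ℝ)+1 := fun K => by push_cast; ring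
  -- argument nonnegativity and monotonicity of a
  have harg : ∀ i : ℕ, 1 ≤ i → i ≤ L' → 0 ≤ (L':ℝ)/(i:ℝ) - 1 := by
    intro i hi hiL
    have hi0 : (0:ℝ) < (i:ℝ) := by exact_mod_cast hi
    have hiL' : (i:ℝ) ≤ (L':ℝ) := by exact_mod_cast hiL
    rw [sub_nonneg, le_div_iff₀ hi0]
    linarith
  have hmono : ∀ i j : ℕ, 1 ≤ i → i ≤ j → j ≤ L' → a i ≤ a j := by
    intro i j hi hij hjL
    have hi0 : (0:ℝ) < (i:ℝ) := by exact_mod_cast hi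
    have hij' : (i:ℝ) ≤ (j:ℝ) := by exact_mod_cast hij
    have h1 := harg j (le_trans hi hij) hjL
    have h2 : (L':ℝ)/(j:ℝ) - 1 ≤ (L':ℝ)/(i:ℝ) - 1 := by
      have := div_le_div_of_nonneg_left hL0.le hi0 hij'
      linarith
    exact hanti h1 (h1.trans h2) h2
  have ha0 : ∀ i : ℕ, 1 ≤ i → i ≤ L' → 0 ≤ a i := fun i hi hiL => hnonneg _ (harg i hi hiL)
  have ha1 : ∀ i : ℕ, 1 ≤ i → i ≤ L' → a i ≤ 1 := fun i hi hiL => hle1 _ (harg i hi hiL)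
  -- telescoping sum of f-differences
  have hIcc : Finset.Icc 1 (L' - 1) = Finset.Ioc 0 (L' - 1) := Finset.Icc_add_one_left_eq_Ioc 0 (L' - 1)
  have hL1 : L' - 1 + 1 = L' := by omega
  have hsum_t : ∑ K ∈ Finset.Ioc 0 (L'-1), (f (K+1) - f K) = 1 - ρ (L':ℝ) := by
    rw [dickman_tele f 0 (L'-1) (by omega), hL1]
    have hfL : f L' = 1 := by
      rw [hf_def]
      simp only [div_self (ne_of_gt hL0)]
      exact hone 1 ⟨zero_le_one, le_rfl⟩
    have hf1 : f (0+1) = ρ (L':ℝ) := by rw [hf_def]; norm_num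
    rw [hfL, hf1]
  -- per-K bound restated
  have hperK' : ∀ K ∈ Finset.Ioc 0 (L'-1),
      |(∫ x in (((L':ℝ) - K - 1)/K)..(((L':ℝ) - K)/K), ρ x / ((L':ℝ)/K - x)) -
        (f (K+1) - f K)| ≤ a (K+1)/(K:ℝ) - a K/((K:ℝ)+1) := by
    intro K hK
    rw [Finset.mem_Ioc] at hK
    have h1 : 1 ≤ K := hK.1
    have h2 : K + 1 ≤ L' := by omega
    have := hperK K h1 h2
    have hfK1 : f (K+1) = ρ ((L':ℝ)/((K:ℝ)+1)) := by rw [hf_def]; simp only [hcs K]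
    have hfK : f K = ρ ((L':ℝ)/(K:ℝ)) := by rw [hf_def]
    have haK1 : a (K+1) = ρ ((L':ℝ)/((K:ℝ)+1) - 1) := by rw [ha_def]; simp only [hcs K]
    have haK : a K = ρ ((L':ℝ)/(K:ℝ) - 1) := by rw [ha_def]
    rw [hfK1, hfK, haK1, haK]
    exact this
  -- step 1 : |S - 1| ≤ sum of e + ρ L'
  have hstep1 : |(∑ K ∈ Finset.Icc 1 (L' - 1), ∫ x in (((L':ℝ) - K - 1)/K)..(((L':ℝ) - K)/K),
        ρ x / ((L':ℝ)/K - x)) - 1| ≤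
      (∑ K ∈ Finset.Ioc 0 (L'-1), (a (K+1)/(K:ℝ) - a K/((K:ℝ)+1))) + ρ (L':ℝ) := by
    rw [hIcc]
    have hdiff : (∑ K ∈ Finset.Ioc 0 (L'-1), ∫ x in (((L':ℝ) - K - 1)/K)..(((L':ℝ) - K)/K),
          ρ x / ((L':ℝ)/K - x)) - (1 - ρ (L':ℝ)) =
        ∑ K ∈ Finset.Ioc 0 (L'-1),
          ((∫ x in (((L':ℝ) - K - 1)/K)..(((L':ℝ) - K)/K), ρ x / ((L':ℝ)/K - x)) -
            (f (K+1) - f K)) := by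
      rw [Finset.sum_sub_distrib, hsum_t]
    have habs : |(∑ K ∈ Finset.Ioc 0 (L'-1), ∫ x in (((L':ℝ) - K - 1)/K)..(((L':ℝ) - K)/K),
          ρ x / ((L':ℝ)/K - x)) - (1 - ρ (L':ℝ))| ≤
        ∑ K ∈ Finset.Ioc 0 (L'-1), (a (K+1)/(K:ℝ) - a K/((K:ℝ)+1)) := by
      rw [hdiff]
      exact (Finset.abs_sum_le_sum_abs _ _).trans (Finset.sum_le_sum hperK')
    have hr0 := hnonneg (L':ℝ) hL0.le
    have := abs_sub_abs_le_abs_sub ((∑ K ∈ Finset.Ioc 0 (L'-1),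
      ∫ x in (((L':ℝ) - K - 1)/K)..(((L':ℝ) - K)/K), ρ x / ((L':ℝ)/K - x)) - 1) 0
    calc |(∑ K ∈ Finset.Ioc 0 (L'-1), ∫ x in (((L':ℝ) - K - 1)/K)..(((L':ℝ) - K)/K),
          ρ x / ((L':ℝ)/K - x)) - 1|
        ≤ |(∑ K ∈ Finset.Ioc 0 (L'-1), ∫ x in (((L':ℝ) - K - 1)/K)..(((L':ℝ) - K)/K),
          ρ x / ((L':ℝ)/K - x)) - (1 - ρ (L':ℝ))| + |ρ (L':ℝ)| := by
          have heq : (∑ K ∈ Finset.Ioc 0 (L'-1), ∫ x in (((L':ℝ) - K - 1)/K)..(((L':ℝ) - K)/K),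
              ρ x / ((L':ℝ)/K - x)) - 1 =
              ((∑ K ∈ Finset.Ioc 0 (L'-1), ∫ x in (((L':ℝ) - K - 1)/K)..(((L':ℝ) - K)/K),
              ρ x / ((L':ℝ)/K - x)) - (1 - ρ (L':ℝ))) + (-(ρ (L':ℝ))) := by ring
          rw [heq]
          exact (abs_add_le _ _).trans (le_of_eq (by rw [abs_neg]))
      _ ≤ (∑ K ∈ Finset.Ioc 0 (L'-1), (a (K+1)/(K:ℝ) - a K/((K:ℝ)+1))) + ρ (L':ℝ) := by
          rw [abs_of_nonneg hr0] at *
          linarith [habs]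
  -- Part 1
  have hm1L : m + 1 ≤ L' := by omega
  have hpart1 : ∑ K ∈ Finset.Ioc 0 m, (a (K+1)/(K:ℝ) - a K/((K:ℝ)+1)) ≤ 2 * a (m+1) := by
    have hb : ∀ K ∈ Finset.Ioc 0 m, a (K+1)/(K:ℝ) - a K/((K:ℝ)+1) ≤
        (a (K+1) - a K) + a (m+1) * (g (K+1) - g K) := by
      intro K hK
      rw [Finset.mem_Ioc] at hK
      have hK1 : 1 ≤ K := hK.1
      have hKm : K ≤ m := hK.2
      have hu : (1:ℝ) ≤ (K:ℝ) := by exact_mod_cast hK1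
      have hp := ha0 K hK1 (by omega)
      have hpq := hmono K (K+1) hK1 (by omega) (by omega)
      have hqr := hmono (K+1) (m+1) (by omega) (by omega) hm1L
      have halg := dickman_alg1 (a K) (a (K+1)) (a (m+1)) (K:ℝ) hu hp hpq hqr
      have hgg : g (K+1) - g K = 1/(K:ℝ) - 1/((K:ℝ)+1) := by
        rw [hg_def]; simp only [hcs K]; ring
      rw [hgg]
      linarith
    calc ∑ K ∈ Finset.Ioc 0 m, (a (K+1)/(K:ℝ) - a K/((K:ℝ)+1))
        ≤ ∑ K ∈ Finset.Ioc 0 m, ((a (K+1) - a K) + a (m+1) * (g (K+1) - g K)) :=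
          Finset.sum_le_sum hb
      _ = (a (m+1) - a (0+1)) + a (m+1) * (g (m+1) - g (0+1)) := by
          rw [Finset.sum_add_distrib, ← Finset.mul_sum,
            dickman_tele a 0 m (Nat.zero_le m), dickman_tele g 0 m (Nat.zero_le m)]
      _ ≤ 2 * a (m+1) := by
          have h1 : 0 ≤ a (0+1) := ha0 1 le_rfl (by omega)
          have h2 : 0 ≤ a (m+1) := ha0 (m+1) (by omega) hm1L
          have hg1 : g (0+1) = -1 := by rw [hg_def]; norm_num
          have hm0 : (0:ℝ) < (m:ℝ)+1 := by positivity
          have hgm : g (m+1) - g (0+1) ≤ 1 := by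
            have e1 : g (m+1) = -(1/((m:ℝ)+1)) := by rw [hg_def]; simp only [hcs m]
            rw [e1, hg1]
            have : 0 ≤ 1/((m:ℝ)+1) := by positivity
            linarith
          nlinarith [mul_le_of_le_one_right h2 hgm]
  -- Part 2
  have hpart2 : ∑ K ∈ Finset.Ioc m (L'-1), (a (K+1)/(K:ℝ) - a K/((K:ℝ)+1)) ≤ 2/(m:ℝ) := by
    have hm0 : (0:ℝ) < (m:ℝ) := by exact_mod_cast hm
    have hm10 : (0:ℝ) < (m:ℝ)+1 := by positivity
    have hb : ∀ K ∈ Finset.Ioc m (L'-1), a (K+1)/(K:ℝ) - a K/((K:ℝ)+1) ≤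
        (a (K+1) - a K)/((m:ℝ)+1) + (g (K+1) - g K) := by
      intro K hK
      rw [Finset.mem_Ioc] at hK
      have hK1 : 1 ≤ K := by omega
      have hvu : (m:ℝ)+1 ≤ (K:ℝ) := by
        have : m + 1 ≤ K := hK.1
        exact_mod_cast this
      have hp := ha0 K hK1 (by omega)
      have hpq := hmono K (K+1) hK1 (by omega) (by omega)
      have hq := ha1 (K+1) (by omega) (by omega)
      have halg := dickman_alg2 (a K) (a (K+1)) (K:ℝ) ((m:ℝ)+1) (by linarith) hvu hp hpq hq
      have hgg : g (K+1) - g K = 1/(K:ℝ) - 1/((K:ℝ)+1) := by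
        rw [hg_def]; simp only [hcs K]; ring
      rw [hgg]
      linarith
    calc ∑ K ∈ Finset.Ioc m (L'-1), (a (K+1)/(K:ℝ) - a K/((K:ℝ)+1))
        ≤ ∑ K ∈ Finset.Ioc m (L'-1), ((a (K+1) - a K)/((m:ℝ)+1) + (g (K+1) - g K)) :=
          Finset.sum_le_sum hb
      _ = (a (L'-1+1) - a (m+1))/((m:ℝ)+1) + (g (L'-1+1) - g (m+1)) := by
          rw [Finset.sum_add_distrib, ← Finset.sum_div,
            dickman_tele a m (L'-1) (by omega), dickman_tele g m (L'-1) (by omega)]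
      _ ≤ 2/(m:ℝ) := by
          rw [hL1]
          have h1 : a L' ≤ 1 := ha1 L' (by omega) le_rfl
          have h2 : 0 ≤ a (m+1) := ha0 (m+1) (by omega) hm1L
          have h3 : (a L' - a (m+1))/((m:ℝ)+1) ≤ 1/(m:ℝ) := by
            apply div_le_div₀ (by positivity) (by linarith) hm0 (by linarith)
          have h4 : g L' - g (m+1) ≤ 1/(m:ℝ) := by
            have e1 : g (m+1) = -(1/((m:ℝ)+1)) := by rw [hg_def]; simp only [hcs m]
            have e2 : g L' = -(1/(L':ℝ)) := by rw [hg_def]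
            rw [e1, e2]
            have h5 : 0 ≤ 1/(L':ℝ) := by positivity
            have h6 : 1/((m:ℝ)+1) ≤ 1/(m:ℝ) := by
              apply one_div_le_one_div_of_le hm0 (by linarith)
            linarith
          have h7 : 2/(m:ℝ) = 1/(m:ℝ) + 1/(m:ℝ) := by ring
          linarith
  -- conclusion
  have hram : ρ (L':ℝ) ≤ a (m+1) := by
    have h1 : 0 ≤ (L':ℝ)/((m+1:ℕ):ℝ) - 1 := harg (m+1) (by omega) hm1L
    have h2 : (L':ℝ)/((m+1:ℕ):ℝ) - 1 ≤ (L':ℝ) := by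
      have hm10 : (1:ℝ) ≤ ((m+1:ℕ):ℝ) := by exact_mod_cast Nat.one_le_iff_ne_zero.mpr (by omega)
      have := div_le_self hL0.le hm10
      linarith
    exact hanti h1 hL0.le h2
  have haeq : a (m+1) = ρ ((L':ℝ)/((m:ℝ)+1) - 1) := by rw [ha_def]; simp only [hcs m]
  have hsplit := Finset.sum_Ioc_consecutive
    (fun K => a (K+1)/(K:ℝ) - a K/((K:ℝ)+1)) (Nat.zero_le m) (by omega : m ≤ L'-1)
  rw [← haeq]
  calc |(∑ K ∈ Finset.Icc 1 (L' - 1), ∫ x in (((L':ℝ) - K - 1)/K)..(((L':ℝ) - K)/K),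
        ρ x / ((L':ℝ)/K - x)) - 1|
      ≤ (∑ K ∈ Finset.Ioc 0 (L'-1), (a (K+1)/(K:ℝ) - a K/((K:ℝ)+1))) + ρ (L':ℝ) := hstep1
    _ ≤ 3 * a (m+1) + 2/(m:ℝ) := by
        rw [← hsplit]
        linarith [hpart1, hpart2, hram]
/-- For the Dickman function `ρ` (equal to `1` on `[0,1]`, nonnegative, continuous on
`[0,∞)`, satisfying `x·ρ'(x) + ρ(x-1) = 0` for `x > 1`),
`Σ_{K=1}^{L-1} ∫_{(L-K-1)/K}^{(L-K)/K} ρ(x)/(L/K - x) dx → 1` as the integer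
`L → ∞`. -/
theorem dickman_sum_integral_tendsto_one (ρ : ℝ → ℝ)
    (hcont : ContinuousOn ρ (Set.Ici 0))
    (hone : ∀ x ∈ Set.Icc (0 : ℝ) 1, ρ x = 1)
    (hnonneg : ∀ x : ℝ, 0 ≤ x → 0 ≤ ρ x)
    (hderiv : ∀ x : ℝ, 1 < x → HasDerivAt ρ (-ρ (x - 1) / x) x) :
    Tendsto (fun L : ℕ =>
        ∑ K ∈ Finset.Icc 1 (L - 1),
          ∫ x in (((L : ℝ) - K - 1) / K)..(((L : ℝ) - K) / K),
            ρ x / ((L : ℝ) / K - x))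
      atTop (𝓝 1) := by
  have hanti := dickman_anti ρ hcont hone hnonneg hderiv
  have hle1 := dickman_le_one ρ hcont hone hnonneg hderiv
  have hintcont : ∀ a b : ℝ, 1 ≤ a → a ≤ b →
      ContinuousOn (fun y => ρ (y - 1) / y) (Set.Icc a b) :=
    fun a b ha hab => dickman_integrand_cont ρ hcont ha hab
  have hftc : ∀ a b : ℝ, 1 ≤ a → a ≤ b → ∫ y in a..b, ρ (y - 1) / y = ρ a - ρ b :=
    fun a b ha hab => dickman_ftc ρ hcont hderiv ha hab
  have hlog := dickman_log_bound ρ hcont hone hnonneg hderiv hanti hftc hintcont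
  have htend0 := dickman_tendsto_zero ρ hnonneg hlog
  have hperK : ∀ L K : ℕ, 1 ≤ K → K + 1 ≤ L →
      |(∫ x in (((L:ℝ) - K - 1)/K)..(((L:ℝ) - K)/K), ρ x / ((L:ℝ)/K - x)) -
          (ρ ((L:ℝ)/((K:ℝ)+1)) - ρ ((L:ℝ)/(K:ℝ)))| ≤
        ρ ((L:ℝ)/((K:ℝ)+1) - 1)/(K:ℝ) - ρ ((L:ℝ)/(K:ℝ) - 1)/((K:ℝ)+1) := by
    intro L K h1 h2
    exact dickman_perK ρ hcont hnonneg hanti hftc hintcont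
      (fun u M hu huM => dickman_I_bounds ρ hcont hnonneg hanti u M hu huM)
      (fun u M hu huM => dickman_t_bounds ρ hcont hnonneg hanti hftc hintcont u M hu huM)
      L K h1 h2
  rw [Metric.tendsto_atTop]
  intro ε hε
  have h6 : (0:ℝ) < ε/6 := by linarith
  have hev : ∀ᶠ t in atTop, ρ t < ε/6 := htend0.eventually (eventually_lt_nhds h6)
  obtain ⟨T, hT⟩ := Filter.eventually_atTop.mp hev
  set T' : ℝ := max T 0 with hT'def
  have hT'0 : 0 ≤ T' := le_max_right _ _
  have hT' : ∀ t : ℝ, T' ≤ t → ρ t < ε/6 := fun t ht =>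
    hT t (le_trans (le_max_left _ _) ht)
  obtain ⟨m, hmgt⟩ := exists_nat_gt (max 1 (4/ε))
  have hm1R : (1:ℝ) < (m:ℝ) := lt_of_le_of_lt (le_max_left _ _) hmgt
  have hm1 : 1 ≤ m := by exact_mod_cast hm1R.le
  have hm0 : (0:ℝ) < (m:ℝ) := by linarith
  have hm4 : 4/ε < (m:ℝ) := lt_of_le_of_lt (le_max_right _ _) hmgt
  have h2m : 2/(m:ℝ) < ε/2 := by
    rw [div_lt_iff₀ hm0]
    rw [div_lt_iff₀ hε] at hm4
    nlinarith
  obtain ⟨N, hN⟩ := exists_nat_ge ((T'+1)*((m:ℝ)+1) + ((m:ℝ)+2))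
  refine ⟨N, fun L hL => ?_⟩
  have hLN : (N:ℝ) ≤ (L:ℝ) := by exact_mod_cast hL
  have hm10 : (0:ℝ) < (m:ℝ)+1 := by linarith
  have hTm : 0 ≤ (T'+1)*((m:ℝ)+1) := by positivity
  have hmL : m + 2 ≤ L := by
    have : ((m:ℝ)+2) ≤ (L:ℝ) := by linarith
    exact_mod_cast this
  have hbound := dickman_main_bound ρ L hone hnonneg hanti hle1
    (fun K h1 h2 => hperK L K h1 h2) m hm1 hmL
  have hargT : T' ≤ (L:ℝ)/((m:ℝ)+1) - 1 := by
    rw [le_sub_iff_add_le, le_div_iff₀ hm10]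
    linarith
  have hρ := hT' _ hargT
  rw [Real.dist_eq]
  calc |(∑ K ∈ Finset.Icc 1 (L - 1), ∫ x in (((L:ℝ) - K - 1)/K)..(((L:ℝ) - K)/K),
        ρ x / ((L:ℝ)/K - x)) - 1| ≤ 3 * ρ ((L:ℝ)/((m:ℝ)+1) - 1) + 2/(m:ℝ) := hbound
    _ < 3 * (ε/6) + ε/2 := by linarith
    _ = ε := by ring
end
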